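/- arXiv:1001.3923 — 10 statements merged into one kernel-verified Lean document; each statement's English description precedes it below -/
import Mathlib

section
/- Let n ≥ 2, let G = ℝⁿ \ {0}, let x ∈ G and let 0 < r ≤ log(1+√3). Then the j-metric ball B_j(x,r) is close-to-convex. -/
open RealInnerProductSpace


/-- A half-line in a real vector space: `{z + t • y : t > 0}` or `{z + t • y : t ≥ 0}`
for some point `z` and nonzero direction `y`. -/
def IsHalfLine {E : Type*} [AddCommGroup E] [Module ℝ E] (S : Set E) : Prop :=
  ∃ z y : E, y ≠ 0 ∧
    (S = {x | ∃ t : ℝ, 0 < t ∧ x = z + t • y} ∨ S = {x | ∃ t : ℝ, 0 ≤ t ∧ x = z + t • y})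

/-- A set `G` is close-to-convex if its complement is the union of a family of
pairwise disjoint half-lines. -/
def CloseToConvex {E : Type*} [AddCommGroup E] [Module ℝ E] (G : Set E) : Prop :=
  ∃ 𝒞 : Set (Set E), (∀ S ∈ 𝒞, IsHalfLine S) ∧ 𝒞.Pairwise Disjoint ∧ ⋃₀ 𝒞 = Gᶜ

/-- The distance ratio metric (`j`-metric) of a domain `G`:
`j_G(x,y) = log (1 + |x-y| / min (d(x), d(y)))` where `d` is the distance to `∂G`. -/
noncomputable def jDist {E : Type*} [NormedAddCommGroup E] (G : Set E) (x y : E) : ℝ :=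
  Real.log (1 + dist x y / min (Metric.infDist x (frontier G)) (Metric.infDist y (frontier G)))

/-- The `j`-metric ball `B_j(x,r) = {y ∈ G : j_G(x,y) < r}`. -/
def jBall {E : Type*} [NormedAddCommGroup E] (G : Set E) (x : E) (r : ℝ) : Set E :=
  {y ∈ G | jDist G x y < r}


lemma key (a H lam t₁ t t₂ : ℝ) (ha : 0 < a) (hH : 0 ≤ H) (hlam : 0 < lam) (hlam3 : lam^2 ≤ 3)
    (h1 : H + (t₁-a)^2 < lam^2*a^2) (h2 : H + (t₁-a)^2 < lam^2*(H+t₁^2))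
    (h3 : H + (t₂-a)^2 < lam^2*a^2) (h4 : H + (t₂-a)^2 < lam^2*(H+t₂^2))
    (ht1 : t₁ ≤ t) (ht2 : t ≤ t₂) :
    H + (t-a)^2 < lam^2*a^2 ∧ H + (t-a)^2 < lam^2*(H+t^2) := by
  constructor
  · rcases le_total t a with h | h
    · nlinarith [mul_nonneg (sub_nonneg.2 ht1) (show (0:ℝ) ≤ 2*a - t - t₁ by linarith)]
    · nlinarith [mul_nonneg (sub_nonneg.2 ht2) (show (0:ℝ) ≤ t + t₂ - 2*a by linarith)]
  · rcases eq_or_lt_of_le ht1 with rfl | ht1'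
    · exact h2
    rcases le_or_gt (lam^2) 1 with hc | hc
    · -- concave case
      have s1 : (0:ℝ) ≤ t - t₁ := by linarith
      have s2 : (0:ℝ) ≤ t₂ - t := by linarith
      have s3 : (0:ℝ) < t₂ - t₁ := by linarith
      have p1 : 0 ≤ (t₂ - t) * (lam^2*(H+t₁^2) - H - (t₁-a)^2) :=
        mul_nonneg s2 (by linarith)
      have p2 : 0 < (t - t₁) * (lam^2*(H+t₂^2) - H - (t₂-a)^2) :=
        mul_pos (by linarith) (by linarith)
      have p3 : 0 ≤ (1-lam^2) * ((t-t₁)*((t₂-t)*(t₂-t₁))) :=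
        mul_nonneg (by linarith) (mul_nonneg s1 (mul_nonneg s2 s3.le))
      nlinarith [p1, p2, p3]
    · -- convex case, by contradiction
      by_contra hF
      push_neg at hF
      set μ := lam^2 - 1 with hμ
      have hl2 : lam^2 = 1 + μ := by rw [hμ]; ring
      have hμ0 : 0 < μ := by rw [hμ]; linarith
      have hμ2 : μ ≤ 2 := by rw [hμ]; linarith
      rw [hl2] at hF h2 h1
      have Ft : μ*H + μ*t^2 + 2*a*t - a^2 ≤ 0 := by nlinarith [hF]
      have Ft1 : 0 < μ*H + μ*t₁^2 + 2*a*t₁ - a^2 := by nlinarith [h2]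
      have e1 : μ*(t+t₁) + 2*a < 0 := by
        by_contra h
        push_neg at h
        have hp : 0 ≤ (t - t₁) * (μ*(t+t₁) + 2*a) :=
          mul_nonneg (sub_pos.2 ht1').le h
        have hidp : (t - t₁) * (μ*(t+t₁) + 2*a)
            = (μ*H + μ*t^2 + 2*a*t - a^2) - (μ*H + μ*t₁^2 + 2*a*t₁ - a^2) := by ring
        linarith [hp, hidp]
      have e2 : μ*t₁ + a < 0 := by
        have := mul_le_mul_of_nonneg_left ht1'.le hμ0.le
        linarith [e1, this]
      have h1' : (t₁-a)^2 < (1+μ)*a^2 - H := by linarith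
      have key1 : (μ*t₁ + a - (1+μ)*a)^2 < μ^2*((1+μ)*a^2 - H) := by
        have h := mul_lt_mul_of_pos_left h1' (mul_pos hμ0 hμ0)
        have hid : (μ*t₁ + a - (1+μ)*a)^2 = μ*μ*(t₁-a)^2 := by ring
        have hid2 : μ*μ*((1+μ)*a^2 - H) = μ^2*((1+μ)*a^2 - H) := by ring
        linarith [hid ▸ hid2 ▸ h]
      have key2 : (μ*t₁+a)^2 + ((1+μ)*a)^2 ≤ (μ*t₁ + a - (1+μ)*a)^2 := by
        have hh : 0 ≤ (1+μ)*a * (-(μ*t₁+a)) :=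
          mul_nonneg (mul_nonneg (show (0:ℝ) ≤ 1+μ by linarith) ha.le)
            (neg_nonneg.2 e2.le)
        have hid : (μ*t₁ + a - (1+μ)*a)^2 - (μ*t₁+a)^2 - ((1+μ)*a)^2
            = 2*((1+μ)*a * (-(μ*t₁+a))) := by ring
        linarith [hh, hid]
      have e3 : (1+μ)*a^2 - μ^2*H < (μ*t₁+a)^2 := by
        have h := mul_pos hμ0 Ft1
        have hid4 : μ*(μ*H + μ*t₁^2 + 2*a*t₁ - a^2)
            = (μ*t₁+a)^2 - ((1+μ)*a^2 - μ^2*H) := by ring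
        linarith [h, hid4]
      have hineq : 0 ≤ (2-μ) * ((1+μ)^2 * a^2) :=
        mul_nonneg (by linarith) (mul_nonneg (sq_nonneg _) (sq_nonneg _))
      have hid3 : (1+μ)*a^2 - μ^2*H + ((1+μ)*a)^2 - μ^2*((1+μ)*a^2 - H)
          = (2-μ)*((1+μ)^2*a^2) := by ring
      linarith [key1, key2, e3, hineq, hid3]

set_option maxHeartbeats 2000000 in
/-- Klén, Theorem 2.1 (first part): in the punctured space `G = ℝⁿ \ {0}`, `n ≥ 2`,
for `x ∈ G` and `0 < r ≤ log (1 + √3)` the `j`-metric ball `B_j(x,r)` is close-to-convex. -/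
theorem jBall_closeToConvex_of_puncturedSpace {n : ℕ} (hn : 2 ≤ n)
    (x : EuclideanSpace ℝ (Fin n)) (hx : x ≠ 0)
    (r : ℝ) (hr0 : 0 < r) (hr : r ≤ Real.log (1 + Real.sqrt 3)) :
    CloseToConvex (jBall ({0}ᶜ : Set (EuclideanSpace ℝ (Fin n))) x r) := by
  classical
  haveI : Nontrivial (EuclideanSpace ℝ (Fin n)) := by
    refine ⟨EuclideanSpace.single ⟨0, by omega⟩ (1:ℝ), 0, fun h => ?_⟩
    have := congrArg (fun v => v ⟨0, by omega⟩) h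
    simp [EuclideanSpace.single] at this
  have hfr : frontier ({0}ᶜ : Set (EuclideanSpace ℝ (Fin n))) = {0} := by
    rw [frontier_compl, frontier_eq_closure_inter_closure]
    simp [closure_singleton, closure_compl, interior_singleton]
  set a := ‖x‖ with ha_def
  have ha : 0 < a := norm_pos_iff.2 hx
  set lam := Real.exp r - 1 with hlam_def
  have hexp1 : 1 < Real.exp r := by
    nlinarith [Real.add_one_le_exp r, Real.exp_pos r]
  have hlam : 0 < lam := by simp [hlam_def]; linarith
  have hsqrt3 : Real.sqrt 3 ^ 2 = 3 := Real.sq_sqrt (by norm_num)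
  have hlam3 : lam ^ 2 ≤ 3 := by
    have h1 : Real.exp r ≤ 1 + Real.sqrt 3 := by
      have := Real.exp_le_exp.2 hr
      rwa [Real.exp_log (by positivity)] at this
    have h2 : lam ≤ Real.sqrt 3 := by simp [hlam_def]; linarith
    calc lam ^ 2 ≤ Real.sqrt 3 ^ 2 := by exact pow_le_pow_left₀ hlam.le h2 2
      _ = 3 := hsqrt3
  have hmem : ∀ y, y ∈ jBall ({0}ᶜ : Set (EuclideanSpace ℝ (Fin n))) x r ↔
      (‖y - x‖ < lam * a ∧ ‖y - x‖ < lam * ‖y‖) := by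
    intro y
    have hj : jDist ({0}ᶜ : Set (EuclideanSpace ℝ (Fin n))) x y
        = Real.log (1 + ‖y - x‖ / min a ‖y‖) := by
      rw [jDist, hfr]
      rw [Metric.infDist_singleton, Metric.infDist_singleton, dist_zero_right,
        dist_zero_right, dist_eq_norm, ← norm_sub_rev]
    constructor
    · rintro ⟨hyG, hylt⟩
      have hy0 : y ≠ 0 := by simpa using hyG
      have hm : 0 < min a ‖y‖ := lt_min ha (norm_pos_iff.2 hy0)
      rw [hj] at hylt
      have h0 : (0:ℝ) < 1 + ‖y - x‖ / min a ‖y‖ := by positivity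
      have h1 : 1 + ‖y - x‖ / min a ‖y‖ < Real.exp r := (Real.log_lt_iff_lt_exp h0).1 hylt
      have h2 : ‖y - x‖ / min a ‖y‖ < lam := by simp [hlam_def]; linarith
      have h3 : ‖y - x‖ < lam * min a ‖y‖ := by
        have := (div_lt_iff₀ hm).1 h2
        linarith [this]
      constructor
      · calc ‖y - x‖ < lam * min a ‖y‖ := h3
          _ ≤ lam * a := mul_le_mul_of_nonneg_left (min_le_left _ _) hlam.le
      · calc ‖y - x‖ < lam * min a ‖y‖ := h3
          _ ≤ lam * ‖y‖ := mul_le_mul_of_nonneg_left (min_le_right _ _) hlam.le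
    · rintro ⟨hA, hB⟩
      have hy0 : y ≠ 0 := by
        rintro rfl
        simp only [zero_sub, norm_neg, norm_zero, mul_zero] at hB
        exact absurd hB (by linarith [norm_pos_iff.2 hx])
      have hm : 0 < min a ‖y‖ := lt_min ha (norm_pos_iff.2 hy0)
      refine ⟨by simpa using hy0, ?_⟩
      rw [hj]
      have h3 : ‖y - x‖ < lam * min a ‖y‖ := by
        rcases le_total a ‖y‖ with h | h
        · rwa [min_eq_left h]
        · rwa [min_eq_right h]
      have h2 : ‖y - x‖ / min a ‖y‖ < lam := (div_lt_iff₀ hm).2 (by linarith)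
      have h4 : 1 + ‖y - x‖ / min a ‖y‖ < Real.exp r := by
        simp only [hlam_def] at h2; linarith
      calc Real.log (1 + ‖y - x‖ / min a ‖y‖) < Real.log (Real.exp r) :=
            Real.log_lt_log (by positivity) h4
        _ = r := Real.log_exp r
  set K := jBall ({0}ᶜ : Set (EuclideanSpace ℝ (Fin n))) x r with hK
  -- coordinates
  set e : EuclideanSpace ℝ (Fin n) := a⁻¹ • x with he_def
  have he : ‖e‖ = 1 := by
    rw [he_def, norm_smul, Real.norm_eq_abs, abs_of_pos (inv_pos.2 ha)]
    field_simp
    exact ha_def.symm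
  have hae : a • e = x := by rw [he_def, smul_smul, mul_inv_cancel₀ ha.ne', one_smul]
  have hee : ⟪e, e⟫ = 1 := by
    rw [real_inner_self_eq_norm_sq, he]; norm_num
  have he0 : e ≠ 0 := by intro h; rw [h] at he; simp at he
  have hinner : ∀ (w : EuclideanSpace ℝ (Fin n)), ⟪w, e⟫ = 0 →
      ∀ t : ℝ, ⟪w + t•e, e⟫ = t := by
    intro w hw t
    rw [inner_add_left, real_inner_smul_left, hw, hee]; ring
  have norm_aux : ∀ (w : EuclideanSpace ℝ (Fin n)), ⟪w, e⟫ = 0 →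
      ∀ s : ℝ, ‖w + s•e‖^2 = ‖w‖^2 + s^2 := by
    intro w hw s
    rw [norm_add_sq_real, real_inner_smul_right, hw, norm_smul, he]
    rw [Real.norm_eq_abs, mul_one, sq_abs]
    ring
  have hv1 : ∀ (w : EuclideanSpace ℝ (Fin n)) (c t : ℝ), (w + c•e) + t•e = w + (c+t)•e := by
    intro w c t; rw [add_smul]; abel
  have hv2 : ∀ (w : EuclideanSpace ℝ (Fin n)) (c t : ℝ), (w + c•e) + t•(-e) = w + (c-t)•e := by
    intro w c t; rw [sub_smul, smul_neg]; abel
  have hv3 : ∀ (w : EuclideanSpace ℝ (Fin n)) (t : ℝ), w + t•(-e) = w + (-t)•e := by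
    intro w t; rw [smul_neg, neg_smul]
  have hsq : ∀ (u : EuclideanSpace ℝ (Fin n)) (c : ℝ), 0 ≤ c → (‖u‖ < c ↔ ‖u‖^2 < c^2) := by
    intro u c hc
    constructor
    · intro h; exact pow_lt_pow_left₀ h (norm_nonneg u) two_ne_zero
    · intro h; exact lt_of_pow_lt_pow_left₀ 2 hc h
  have hmem2 : ∀ (w : EuclideanSpace ℝ (Fin n)), ⟪w, e⟫ = 0 → ∀ t : ℝ,
      (w + t•e ∈ K ↔ (‖w‖^2 + (t-a)^2 < lam^2*a^2 ∧
        ‖w‖^2 + (t-a)^2 < lam^2*(‖w‖^2+t^2))) := by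
    intro w hw t
    rw [hmem]
    have hvx : w + t•e - x = w + (t-a)•e := by rw [← hae, sub_smul]; abel
    have h1 : ‖w + t•e - x‖^2 = ‖w‖^2 + (t-a)^2 := by rw [hvx, norm_aux w hw]
    have h2 : ‖w + t•e‖^2 = ‖w‖^2 + t^2 := norm_aux w hw t
    constructor
    · rintro ⟨hA, hB⟩
      constructor
      · have := (hsq _ _ (by positivity)).1 hA
        rw [h1, mul_pow] at this; linarith
      · have := (hsq _ _ (by positivity)).1 hB
        rw [h1, mul_pow, h2] at this; linarith
    · rintro ⟨hA, hB⟩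
      constructor
      · refine (hsq _ _ (by positivity)).2 ?_
        rw [h1, mul_pow]; linarith
      · refine (hsq _ _ (by positivity)).2 ?_
        rw [h1, mul_pow, h2]; linarith
  -- the slice sets
  set A : EuclideanSpace ℝ (Fin n) → Set ℝ := fun w => {t | w + t•e ∈ K} with hA_def
  have hAconv : ∀ w, ⟪w,e⟫ = 0 → ∀ t₁ t t₂ : ℝ, t₁ ∈ A w → t₂ ∈ A w →
      t₁ ≤ t → t ≤ t₂ → t ∈ A w := by
    intro w hw t₁ t t₂ h1 h2 h3 h4
    have m1 := (hmem2 w hw t₁).1 h1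
    have m2 := (hmem2 w hw t₂).1 h2
    exact (hmem2 w hw t).2
      (key a (‖w‖^2) lam t₁ t t₂ ha (sq_nonneg _) hlam hlam3 m1.1 m1.2 m2.1 m2.2 h3 h4)
  have hAbddA : ∀ w, ⟪w,e⟫ = 0 → BddAbove (A w) := by
    intro w hw
    refine ⟨a + lam*a, fun t ht => ?_⟩
    have m := ((hmem2 w hw t).1 ht).1
    nlinarith [sq_nonneg ‖w‖, mul_pos hlam ha, sq_nonneg (t - a - lam*a)]
  have hAbddB : ∀ w, ⟪w,e⟫ = 0 → BddBelow (A w) := by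
    intro w hw
    refine ⟨a - lam*a, fun t ht => ?_⟩
    have m := ((hmem2 w hw t).1 ht).1
    nlinarith [sq_nonneg ‖w‖, mul_pos hlam ha, sq_nonneg (t - a + lam*a)]
  have hmid : ∀ w, ⟪w,e⟫ = 0 → (A w).Nonempty →
      ∀ s, sInf (A w) < s → s < sSup (A w) → s ∈ A w := by
    intro w hw hne s h1 h2
    obtain ⟨u1, hu1, hu1'⟩ := exists_lt_of_csInf_lt hne h1
    obtain ⟨u2, hu2, hu2'⟩ := exists_lt_of_lt_csSup hne h2
    exact hAconv w hw u1 s u2 hu1 hu2 hu1'.le hu2'.le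
  set Rset : EuclideanSpace ℝ (Fin n) → Set (EuclideanSpace ℝ (Fin n)) := fun w =>
    if (A w).Nonempty then
      (if sSup (A w) ∈ A w then {z | ∃ t : ℝ, 0 < t ∧ z = (w + (sSup (A w))•e) + t•e}
       else {z | ∃ t : ℝ, 0 ≤ t ∧ z = (w + (sSup (A w))•e) + t•e})
    else {z | ∃ t : ℝ, 0 ≤ t ∧ z = w + t•e} with hR_def
  set Lset : EuclideanSpace ℝ (Fin n) → Set (EuclideanSpace ℝ (Fin n)) := fun w =>
    if (A w).Nonempty then
      (if sInf (A w) ∈ A w then {z | ∃ t : ℝ, 0 < t ∧ z = (w + (sInf (A w))•e) + t•(-e)}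
       else {z | ∃ t : ℝ, 0 ≤ t ∧ z = (w + (sInf (A w))•e) + t•(-e)})
    else {z | ∃ t : ℝ, 0 < t ∧ z = w + t•(-e)} with hL_def
  -- shape lemmas
  have hLshape : ∀ w, ⟪w,e⟫ = 0 → ∀ z ∈ Lset w, ∃ s : ℝ, z = w + s•e ∧
      (∀ u ∈ A w, s < u) ∧ (¬(A w).Nonempty → s < 0) := by
    intro w hw z hz
    simp only [hL_def] at hz
    split_ifs at hz with h1 h2
    · obtain ⟨t, ht, rfl⟩ := hz
      refine ⟨sInf (A w) - t, by rw [hv2], fun u hu => ?_, fun h => absurd h1 h⟩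
      have := csInf_le (hAbddB w hw) hu
      linarith
    · obtain ⟨t, ht, rfl⟩ := hz
      refine ⟨sInf (A w) - t, by rw [hv2], fun u hu => ?_, fun h => absurd h1 h⟩
      have h3 := csInf_le (hAbddB w hw) hu
      rcases eq_or_lt_of_le h3 with hequ | hlt
      · exact absurd (hequ ▸ hu) h2
      · linarith
    · obtain ⟨t, ht, rfl⟩ := hz
      refine ⟨-t, by rw [hv3], fun u hu => absurd ⟨u, hu⟩ h1, fun _ => by linarith⟩
  have hRshape : ∀ w, ⟪w,e⟫ = 0 → ∀ z ∈ Rset w, ∃ s : ℝ, z = w + s•e ∧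
      (∀ u ∈ A w, u < s) ∧ (¬(A w).Nonempty → 0 ≤ s) := by
    intro w hw z hz
    simp only [hR_def] at hz
    split_ifs at hz with h1 h2
    · obtain ⟨t, ht, rfl⟩ := hz
      refine ⟨sSup (A w) + t, by rw [hv1], fun u hu => ?_, fun h => absurd h1 h⟩
      have := le_csSup (hAbddA w hw) hu
      linarith
    · obtain ⟨t, ht, rfl⟩ := hz
      refine ⟨sSup (A w) + t, by rw [hv1], fun u hu => ?_, fun h => absurd h1 h⟩
      have h3 := le_csSup (hAbddA w hw) hu
      rcases eq_or_lt_of_le h3 with hequ | hlt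
      · exact absurd (hequ ▸ hu) h2
      · linarith
    · obtain ⟨t, ht, rfl⟩ := hz
      exact ⟨t, rfl, fun u hu => absurd ⟨u, hu⟩ h1, fun _ => ht⟩
  have hfiber : ∀ w, ⟪w,e⟫ = 0 → ∀ s : ℝ, w = (w + s•e) - (⟪w + s•e, e⟫)•e := by
    intro w hw s
    rw [hinner w hw s]
    abel
  refine ⟨{S | ∃ w, ⟪w, e⟫ = 0 ∧ (S = Lset w ∨ S = Rset w)}, ?_, ?_, ?_⟩
  · -- half lines
    rintro S ⟨w, hw, rfl | rfl⟩
    · simp only [hL_def]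
      split_ifs with h1 h2
      · exact ⟨w + (sInf (A w))•e, -e, neg_ne_zero.2 he0, Or.inl rfl⟩
      · exact ⟨w + (sInf (A w))•e, -e, neg_ne_zero.2 he0, Or.inr rfl⟩
      · exact ⟨w, -e, neg_ne_zero.2 he0, Or.inl rfl⟩
    · simp only [hR_def]
      split_ifs with h1 h2
      · exact ⟨w + (sSup (A w))•e, e, he0, Or.inl rfl⟩
      · exact ⟨w + (sSup (A w))•e, e, he0, Or.inr rfl⟩
      · exact ⟨w, e, he0, Or.inr rfl⟩
  · -- pairwise disjoint
    rintro S₁ ⟨w₁, hw₁, hc₁⟩ S₂ ⟨w₂, hw₂, hc₂⟩ hne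
    rw [Set.disjoint_left]
    intro z hz₁ hz₂
    have hshape : ∀ w, ⟪w, e⟫ = 0 → ∀ S, S = Lset w ∨ S = Rset w → z ∈ S →
        ∃ s : ℝ, z = w + s•e := by
      rintro w hw S (rfl | rfl) hzS
      · obtain ⟨s, h, -⟩ := hLshape w hw z hzS; exact ⟨s, h⟩
      · obtain ⟨s, h, -⟩ := hRshape w hw z hzS; exact ⟨s, h⟩
    obtain ⟨s₁, hzs₁⟩ := hshape w₁ hw₁ S₁ hc₁ hz₁
    obtain ⟨s₂, hzs₂⟩ := hshape w₂ hw₂ S₂ hc₂ hz₂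
    have hweq : w₁ = w₂ := by
      have e1 := hfiber w₁ hw₁ s₁
      have e2 := hfiber w₂ hw₂ s₂
      rw [← hzs₁] at e1
      rw [← hzs₂] at e2
      rw [e1, e2]
    subst hweq
    have hseq : s₁ = s₂ := by
      have h1 : (⟪z, e⟫) = s₁ := by rw [hzs₁]; exact hinner w₁ hw₁ s₁
      have h2 : (⟪z, e⟫) = s₂ := by rw [hzs₂]; exact hinner w₁ hw₁ s₂
      rw [← h1, h2]
    subst hseq
    rcases hc₁ with rfl | rfl <;> rcases hc₂ with rfl | rfl
    · exact hne rfl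
    · -- z ∈ Lset w ∩ Rset w
      obtain ⟨s, hzs, hL, hLe⟩ := hLshape w₁ hw₁ z hz₁
      obtain ⟨s', hzs', hR, hRe⟩ := hRshape w₁ hw₁ z hz₂
      have hss : s = s' := by
        have h1 : (⟪z, e⟫) = s := by rw [hzs]; exact hinner w₁ hw₁ s
        have h2 : (⟪z, e⟫) = s' := by rw [hzs']; exact hinner w₁ hw₁ s'
        rw [← h1, h2]
      subst hss
      rcases em (A w₁).Nonempty with hne' | hne'
      · obtain ⟨u, hu⟩ := hne'
        exact absurd (hL u hu) (not_lt.2 (hR u hu).le)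
      · linarith [hLe hne', hRe hne']
    · -- z ∈ Rset w ∩ Lset w
      obtain ⟨s, hzs, hR, hRe⟩ := hRshape w₁ hw₁ z hz₁
      obtain ⟨s', hzs', hL, hLe⟩ := hLshape w₁ hw₁ z hz₂
      have hss : s = s' := by
        have h1 : (⟪z, e⟫) = s := by rw [hzs]; exact hinner w₁ hw₁ s
        have h2 : (⟪z, e⟫) = s' := by rw [hzs']; exact hinner w₁ hw₁ s'
        rw [← h1, h2]
      subst hss
      rcases em (A w₁).Nonempty with hne' | hne'
      · obtain ⟨u, hu⟩ := hne'
        exact absurd (hL u hu) (not_lt.2 (hR u hu).le)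
      · linarith [hLe hne', hRe hne']
    · exact hne rfl
  · -- union is the complement
    ext z
    simp only [Set.mem_sUnion, Set.mem_setOf_eq, Set.mem_compl_iff]
    constructor
    · rintro ⟨S, ⟨w, hw, rfl | rfl⟩, hzS⟩
      · obtain ⟨s, hzs, hcs, -⟩ := hLshape w hw z hzS
        intro hzK
        have hsA : s ∈ A w := by rw [hA_def]; exact Set.mem_setOf_eq ▸ (hzs ▸ hzK)
        exact lt_irrefl s (hcs s hsA)
      · obtain ⟨s, hzs, hcs, -⟩ := hRshape w hw z hzS
        intro hzK
        have hsA : s ∈ A w := by rw [hA_def]; exact Set.mem_setOf_eq ▸ (hzs ▸ hzK)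
        exact lt_irrefl s (hcs s hsA)
    · intro hz
      set s := (⟪z, e⟫) with hs_def
      set w := z - s•e with hw_def
      have hw : (⟪w, e⟫) = 0 := by
        rw [hw_def, inner_sub_left, real_inner_smul_left, hee, hs_def]; ring
      have hzw : z = w + s•e := by rw [hw_def]; abel
      have hsA : s ∉ A w := by
        intro h
        have h2 : w + s•e ∈ K := h
        rw [← hzw] at h2
        exact hz h2
      rcases em (A w).Nonempty with hne | hne
      · have hdisj : s ≤ sInf (A w) ∨ sSup (A w) ≤ s := by
          by_contra hcon
          push_neg at hcon
          exact hsA (hmid w hw hne s hcon.1 hcon.2)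
        rcases hdisj with hle | hge
        · refine ⟨Lset w, ⟨w, hw, Or.inl rfl⟩, ?_⟩
          simp only [hL_def, if_pos hne]
          by_cases hinA : sInf (A w) ∈ A w
          · rw [if_pos hinA]
            refine ⟨sInf (A w) - s, ?_, ?_⟩
            · have hne2 : s ≠ sInf (A w) := fun h => hsA (h ▸ hinA)
              have := lt_of_le_of_ne hle hne2
              linarith
            · rw [hv2, show sInf (A w) - (sInf (A w) - s) = s by ring]
              exact hzw
          · rw [if_neg hinA]
            refine ⟨sInf (A w) - s, by linarith, ?_⟩
            rw [hv2, show sInf (A w) - (sInf (A w) - s) = s by ring]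
            exact hzw
        · refine ⟨Rset w, ⟨w, hw, Or.inr rfl⟩, ?_⟩
          simp only [hR_def, if_pos hne]
          by_cases hinA : sSup (A w) ∈ A w
          · rw [if_pos hinA]
            refine ⟨s - sSup (A w), ?_, ?_⟩
            · have hne2 : s ≠ sSup (A w) := fun h => hsA (h ▸ hinA)
              have := lt_of_le_of_ne hge (Ne.symm hne2)
              linarith
            · rw [hv1, show sSup (A w) + (s - sSup (A w)) = s by ring]
              exact hzw
          · rw [if_neg hinA]
            refine ⟨s - sSup (A w), by linarith, ?_⟩
            rw [hv1, show sSup (A w) + (s - sSup (A w)) = s by ring]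
            exact hzw
      · rcases le_or_gt 0 s with hs0 | hs0
        · refine ⟨Rset w, ⟨w, hw, Or.inr rfl⟩, ?_⟩
          simp only [hR_def, if_neg hne]
          exact ⟨s, hs0, hzw⟩
        · refine ⟨Lset w, ⟨w, hw, Or.inl rfl⟩, ?_⟩
          simp only [hL_def, if_neg hne]
          refine ⟨-s, by linarith, ?_⟩
          rw [hv3, neg_neg]
          exact hzw
end

section
/- Let G = ℝ² \ {0}, let x ∈ G and let r > log(1+√3). Then the j-metric ball B_j(x,r) is not close-to-convex. -/
open Real Set Filter

private lemma sqle {A B : ℝ} (hB : 0 ≤ B) (h : A ^ 2 ≤ B ^ 2) : A ≤ B := by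
  by_contra hc
  push_neg at hc
  nlinarith

private lemma sqlt {A B : ℝ} (hB : 0 ≤ B) (h : A ^ 2 < B ^ 2) : A < B := by
  by_contra hc
  push_neg at hc
  nlinarith

private lemma normsq2 (w : EuclideanSpace ℝ (Fin 2)) : ‖w‖ ^ 2 = w 0 ^ 2 + w 1 ^ 2 := by
  rw [EuclideanSpace.norm_eq, Real.sq_sqrt (Finset.sum_nonneg fun i _ => sq_nonneg _)]
  simp [Fin.sum_univ_two, Real.norm_eq_abs, sq_abs]

private lemma distsq2 (w z : EuclideanSpace ℝ (Fin 2)) :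
    dist w z ^ 2 = (w 0 - z 0) ^ 2 + (w 1 - z 1) ^ 2 := by
  rw [dist_eq_norm, normsq2]
  simp [PiLp.sub_apply]

private lemma ray_forward {S : Set (EuclideanSpace ℝ (Fin 2))}
    {z y p : EuclideanSpace ℝ (Fin 2)}
    (hS : S = {w | ∃ t : ℝ, 0 < t ∧ w = z + t • y} ∨
          S = {w | ∃ t : ℝ, 0 ≤ t ∧ w = z + t • y})
    (hp : p ∈ S) : ∀ s : ℝ, 0 ≤ s → p + s • y ∈ S := by
  intro s hs
  rcases hS with h | h <;> rw [h] at hp ⊢ <;> obtain ⟨t, ht, rfl⟩ := hp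
  · exact ⟨t + s, by linarith, by rw [add_smul]; abel⟩
  · exact ⟨t + s, by linarith, by rw [add_smul]; abel⟩

private lemma exit_point (x p y : EuclideanSpace ℝ (Fin 2)) (hy : y ≠ 0) {M : ℝ} (hM : 0 < M)
    (hmem : ∀ s : ℝ, 0 ≤ s →
      M * ‖x‖ ≤ dist x (p + s • y) ∨ M * ‖p + s • y‖ ≤ dist x (p + s • y))
    (hp_in : dist x p < M * ‖x‖) :
    ∃ s : ℝ, 0 < s ∧ dist x (p + s • y) = M * ‖x‖ ∧ ‖p + s • y‖ ≤ ‖x‖ := by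
  have hycont : Continuous fun s : ℝ => p + s • y :=
    continuous_const.add (continuous_id.smul continuous_const)
  have hdcont : Continuous fun s : ℝ => dist x (p + s • y) := continuous_const.dist hycont
  have hyn : 0 < ‖y‖ := norm_pos_iff.mpr hy
  set S : Set ℝ := Set.Ici 0 ∩ {s : ℝ | M * ‖x‖ ≤ dist x (p + s • y)} with hSdef
  have hclosed : IsClosed S := isClosed_Ici.inter (isClosed_le continuous_const hdcont)
  have hne : S.Nonempty := by
    refine ⟨(M * ‖x‖ + dist x p + 1) / ‖y‖, ?_, ?_⟩
    · have h1 : 0 ≤ M * ‖x‖ := mul_nonneg hM.le (norm_nonneg x)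
      have h2 : (0:ℝ) ≤ dist x p := dist_nonneg
      exact Set.mem_Ici.mpr (div_nonneg (by linarith) hyn.le)
    · set s₀ := (M * ‖x‖ + dist x p + 1) / ‖y‖ with hs₀
      have hs₀n : 0 ≤ s₀ := by
        have h1 : 0 ≤ M * ‖x‖ := mul_nonneg hM.le (norm_nonneg x)
        have h2 : (0:ℝ) ≤ dist x p := dist_nonneg
        exact div_nonneg (by linarith) hyn.le
      have hd : dist p (p + s₀ • y) = s₀ * ‖y‖ := by
        rw [dist_eq_norm]
        simp [norm_smul, abs_of_nonneg hs₀n]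
      have htri : dist p (p + s₀ • y) ≤ dist p x + dist x (p + s₀ • y) := dist_triangle _ _ _
      have hval : s₀ * ‖y‖ = M * ‖x‖ + dist x p + 1 := div_mul_cancel₀ _ hyn.ne'
      have hcomm : dist p x = dist x p := dist_comm _ _
      show M * ‖x‖ ≤ dist x (p + s₀ • y)
      linarith [hd ▸ htri]
  have hbdd : BddBelow S := ⟨0, fun s hs => hs.1⟩
  set t := sInf S with htdef
  have htS : t ∈ S := hclosed.csInf_mem hne hbdd
  have ht0 : 0 < t := by
    rcases (Set.mem_Ici.mp htS.1).lt_or_eq with h | h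
    · exact h
    · exfalso
      have h2 := htS.2
      rw [← h] at h2
      simp only [Set.mem_setOf_eq, zero_smul, add_zero] at h2
      linarith
  have hlt : ∀ s, 0 ≤ s → s < t → dist x (p + s • y) < M * ‖x‖ := by
    intro s hs hst
    by_contra hc
    push_neg at hc
    exact absurd (csInf_le hbdd ⟨hs, hc⟩) (not_le.mpr hst)
  have hmemIoo : Set.Ioo (0:ℝ) t ∈ nhdsWithin t (Set.Iio t) :=
    Ioo_mem_nhdsLT_of_mem ⟨ht0, le_refl t⟩
  have htend1 : Tendsto (fun s => dist x (p + s • y)) (nhdsWithin t (Set.Iio t))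
      (nhds (dist x (p + t • y))) := (hdcont.tendsto t).mono_left nhdsWithin_le_nhds
  have hle1 : dist x (p + t • y) ≤ M * ‖x‖ :=
    le_of_tendsto htend1 (Filter.eventually_of_mem hmemIoo fun s hs => (hlt s hs.1.le hs.2).le)
  have heq : dist x (p + t • y) = M * ‖x‖ := le_antisymm hle1 htS.2
  have htend2 : Tendsto (fun s => M * ‖p + s • y‖ - dist x (p + s • y))
      (nhdsWithin t (Set.Iio t)) (nhds (M * ‖p + t • y‖ - dist x (p + t • y))) :=
    (((continuous_const.mul hycont.norm).sub hdcont).tendsto t).mono_left nhdsWithin_le_nhds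
  have hle2 : M * ‖p + t • y‖ - dist x (p + t • y) ≤ 0 := by
    refine le_of_tendsto htend2 (Filter.eventually_of_mem hmemIoo fun s hs => ?_)
    rcases hmem s hs.1.le with h | h
    · exact absurd (hlt s hs.1.le hs.2) (not_lt.mpr h)
    · linarith
  refine ⟨t, ht0, heq, ?_⟩
  have : M * ‖p + t • y‖ ≤ M * ‖x‖ := by linarith [heq ▸ hle2]
  exact le_of_mul_le_mul_left this hM

set_option maxHeartbeats 1600000

private lemma key_alg (x0 x1 p0 p1 y0 y1 s M ε : ℝ)
    (hM : 0 < M) (hM3 : 3 < M ^ 2) (hε : ε ^ 2 = 1)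
    (ha2 : 0 < x0 ^ 2 + x1 ^ 2) (hs : 0 < s)
    (hξp : p0 * x0 + p1 * x1 = -(x0 ^ 2 + x1 ^ 2) / (M ^ 2 - 1))
    (hηp : -p0 * x1 + p1 * x0 = ε * M * (x0 ^ 2 + x1 ^ 2) / (M ^ 2 - 1))
    (hdist2 : (x0 - (p0 + s * y0)) ^ 2 + (x1 - (p1 + s * y1)) ^ 2 = M ^ 2 * (x0 ^ 2 + x1 ^ 2))
    (hT : (p0 + s * y0) ^ 2 + (p1 + s * y1) ^ 2 ≤ x0 ^ 2 + x1 ^ 2) :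
    y0 * x0 + y1 * x1 < 0 ∧ ε * (-y0 * x1 + y1 * x0) < 0 := by
  have hD : 0 < M ^ 2 - 1 := by linarith
  have hDne : (M ^ 2 - 1) ≠ 0 := ne_of_gt hD
  have hξe : 2 * ((p0 + s * y0) * x0 + (p1 + s * y1) * x1) =
      ((p0 + s * y0) ^ 2 + (p1 + s * y1) ^ 2) + (x0 ^ 2 + x1 ^ 2)
        - M ^ 2 * (x0 ^ 2 + x1 ^ 2) := by linear_combination -hdist2
  have hξeD : 2 * ((p0 + s * y0) * x0 + (p1 + s * y1) * x1) * (M ^ 2 - 1) =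
      (((p0 + s * y0) ^ 2 + (p1 + s * y1) ^ 2) + (x0 ^ 2 + x1 ^ 2)
        - M ^ 2 * (x0 ^ 2 + x1 ^ 2)) * (M ^ 2 - 1) := by
    linear_combination (M ^ 2 - 1) * hξe
  have hMM : 0 < (x0 ^ 2 + x1 ^ 2) * (M ^ 2 * (M ^ 2 - 3)) :=
    mul_pos ha2 (mul_pos (pow_pos hM 2) (by linarith))
  have hξp' : (p0 * x0 + p1 * x1) * (M ^ 2 - 1) = -(x0 ^ 2 + x1 ^ 2) := by
    rw [hξp, div_mul_cancel₀ _ hDne]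
  have haux : 0 ≤ ((x0 ^ 2 + x1 ^ 2) - ((p0 + s * y0) ^ 2 + (p1 + s * y1) ^ 2)) * (M ^ 2 - 1) :=
    mul_nonneg (by linarith) hD.le
  have hkeyid : -2 * ((((p0 + s * y0) * x0 + (p1 + s * y1) * x1) - (p0 * x0 + p1 * x1))
        * (M ^ 2 - 1)) =
      (x0 ^ 2 + x1 ^ 2) * (M ^ 2 * (M ^ 2 - 3)) +
        ((x0 ^ 2 + x1 ^ 2) - ((p0 + s * y0) ^ 2 + (p1 + s * y1) ^ 2)) * (M ^ 2 - 1) := by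
    linear_combination -hξeD + 2 * hξp'
  have hprod : (((p0 + s * y0) * x0 + (p1 + s * y1) * x1) - (p0 * x0 + p1 * x1))
      * (M ^ 2 - 1) < 0 := by linarith
  have hξelt : (p0 + s * y0) * x0 + (p1 + s * y1) * x1 < p0 * x0 + p1 * x1 := by
    by_contra hc
    push_neg at hc
    have h := mul_nonneg (sub_nonneg.mpr hc) hD.le
    linarith [h, hprod]
  have hξy : y0 * x0 + y1 * x1 < 0 := by
    by_contra hc
    push_neg at hc
    have h := mul_nonneg hs.le hc
    linarith [h, hξelt]
  refine ⟨hξy, ?_⟩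
  have hξeval : (p0 + s * y0) * x0 + (p1 + s * y1) * x1 =
      (((p0 + s * y0) ^ 2 + (p1 + s * y1) ^ 2) + (x0 ^ 2 + x1 ^ 2)
        - M ^ 2 * (x0 ^ 2 + x1 ^ 2)) / 2 := by linarith
  have hξsq : ((p0 + s * y0) * x0 + (p1 + s * y1) * x1) ^ 2 =
      ((((p0 + s * y0) ^ 2 + (p1 + s * y1) ^ 2) + (x0 ^ 2 + x1 ^ 2)
        - M ^ 2 * (x0 ^ 2 + x1 ^ 2)) / 2) ^ 2 := by rw [hξeval]
  have haux2 : 0 ≤ ((x0 ^ 2 + x1 ^ 2) - ((p0 + s * y0) ^ 2 + (p1 + s * y1) ^ 2)) *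
      (((x0 ^ 2 + x1 ^ 2) - ((p0 + s * y0) ^ 2 + (p1 + s * y1) ^ 2))
        + 2 * (x0 ^ 2 + x1 ^ 2) * M ^ 2) := by
    have h1 : 0 < (x0 ^ 2 + x1 ^ 2) * M ^ 2 := mul_pos ha2 (pow_pos hM 2)
    exact mul_nonneg (by linarith) (by linarith)
  have hid2 : (x0 ^ 2 + x1 ^ 2) ^ 2 * M ^ 2 * (4 - M ^ 2) / 4
      - (-(p0 + s * y0) * x1 + (p1 + s * y1) * x0) ^ 2 =
      (((x0 ^ 2 + x1 ^ 2) - ((p0 + s * y0) ^ 2 + (p1 + s * y1) ^ 2)) *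
        (((x0 ^ 2 + x1 ^ 2) - ((p0 + s * y0) ^ 2 + (p1 + s * y1) ^ 2))
          + 2 * (x0 ^ 2 + x1 ^ 2) * M ^ 2)) / 4 := by
    linear_combination hξsq
  have hηe2 : (-(p0 + s * y0) * x1 + (p1 + s * y1) * x0) ^ 2 ≤
      (x0 ^ 2 + x1 ^ 2) ^ 2 * M ^ 2 * (4 - M ^ 2) / 4 := by linarith
  have hn : 0 < M * (x0 ^ 2 + x1 ^ 2) / (M ^ 2 - 1) := div_pos (mul_pos hM ha2) hD
  have hKn : (x0 ^ 2 + x1 ^ 2) ^ 2 * M ^ 2 * (4 - M ^ 2) / 4 <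
      (M * (x0 ^ 2 + x1 ^ 2) / (M ^ 2 - 1)) ^ 2 := by
    rw [div_pow, lt_div_iff₀ (by positivity)]
    linarith [mul_pos (mul_pos (pow_pos hM 4) (mul_pos ha2 ha2))
      (pow_pos (show (0:ℝ) < M ^ 2 - 3 by linarith) 2)]
  have hu2 : (ε * (-(p0 + s * y0) * x1 + (p1 + s * y1) * x0)) ^ 2 =
      (-(p0 + s * y0) * x1 + (p1 + s * y1) * x0) ^ 2 := by
    rw [mul_pow, hε, one_mul]
  have hηlt : ε * (-(p0 + s * y0) * x1 + (p1 + s * y1) * x0) <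
      M * (x0 ^ 2 + x1 ^ 2) / (M ^ 2 - 1) := by
    by_contra hc
    push_neg at hc
    have hsum : 0 ≤ ε * (-(p0 + s * y0) * x1 + (p1 + s * y1) * x0)
        + M * (x0 ^ 2 + x1 ^ 2) / (M ^ 2 - 1) := by linarith
    linarith [mul_nonneg (sub_nonneg.mpr hc) hsum, hu2, hηe2, hKn]
  have hεηp : ε * (-p0 * x1 + p1 * x0) = M * (x0 ^ 2 + x1 ^ 2) / (M ^ 2 - 1) := by
    rw [hηp]
    linear_combination (M * (x0 ^ 2 + x1 ^ 2) / (M ^ 2 - 1)) * hε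
  have hsεη : s * (ε * (-y0 * x1 + y1 * x0)) < 0 := by linarith [hηlt, hεηp]
  by_contra hc
  push_neg at hc
  linarith [mul_nonneg hs.le hc, hsεη]

private lemma cross_alg (x0 x1 p10 p11 p20 p21 y10 y11 y20 y21 n : ℝ)
    (ha2 : 0 < x0 ^ 2 + x1 ^ 2) (hn : 0 < n)
    (hξeq : p10 * x0 + p11 * x1 = p20 * x0 + p21 * x1)
    (hη1 : -p10 * x1 + p11 * x0 = n) (hη2 : -p20 * x1 + p21 * x0 = -n)
    (hA : y10 * x0 + y11 * x1 < 0) (hB : -y10 * x1 + y11 * x0 < 0)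
    (hA' : y20 * x0 + y21 * x1 < 0) (hB' : 0 < -y20 * x1 + y21 * x0) :
    ∃ s σ : ℝ, 0 < s ∧ 0 < σ ∧ p10 + s * y10 = p20 + σ * y20 ∧
      p11 + s * y11 = p21 + σ * y21 := by
  set W := (y20 * x0 + y21 * x1) * (-y10 * x1 + y11 * x0)
    - (y10 * x0 + y11 * x1) * (-y20 * x1 + y21 * x0) with hWdef
  have hW : 0 < W := by
    have h1 : 0 < (y20 * x0 + y21 * x1) * (-y10 * x1 + y11 * x0) := mul_pos_of_neg_of_neg hA' hB
    have h2 : (y10 * x0 + y11 * x1) * (-y20 * x1 + y21 * x0) < 0 := mul_neg_of_neg_of_pos hA hB'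
    rw [hWdef]; linarith
  obtain ⟨c, hcW⟩ : ∃ c : ℝ, c * W = 2 * n := ⟨2 * n / W, div_mul_cancel₀ _ (ne_of_gt hW)⟩
  have hcpos : 0 < c := by
    by_contra hcc
    push_neg at hcc
    linarith [mul_nonpos_of_nonpos_of_nonneg hcc hW.le]
  refine ⟨-(c * (y20 * x0 + y21 * x1)), -(c * (y10 * x0 + y11 * x1)), ?_, ?_, ?_, ?_⟩
  · linarith [mul_pos hcpos (neg_pos.mpr hA')]
  · linarith [mul_pos hcpos (neg_pos.mpr hA)]
  all_goals {
    have hX : (p10 + -(c * (y20 * x0 + y21 * x1)) * y10 - (p20 + -(c * (y10 * x0 + y11 * x1)) * y20)) * x0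
        + (p11 + -(c * (y20 * x0 + y21 * x1)) * y11 - (p21 + -(c * (y10 * x0 + y11 * x1)) * y21)) * x1 = 0 := by
      linear_combination hξeq
    have hY : -(p10 + -(c * (y20 * x0 + y21 * x1)) * y10 - (p20 + -(c * (y10 * x0 + y11 * x1)) * y20)) * x1
        + (p11 + -(c * (y20 * x0 + y21 * x1)) * y11 - (p21 + -(c * (y10 * x0 + y11 * x1)) * y21)) * x0 = 0 := by
      linear_combination hη1 - hη2 + c * hWdef - hcW
    first
    | · have h0 : (p10 + -(c * (y20 * x0 + y21 * x1)) * y10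
            - (p20 + -(c * (y10 * x0 + y11 * x1)) * y20)) * (x0 ^ 2 + x1 ^ 2) = 0 := by
          linear_combination x0 * hX - x1 * hY
        have hz := (mul_eq_zero.mp h0).resolve_right (ne_of_gt ha2)
        linarith
    | · have h1 : (p11 + -(c * (y20 * x0 + y21 * x1)) * y11
            - (p21 + -(c * (y10 * x0 + y11 * x1)) * y21)) * (x0 ^ 2 + x1 ^ 2) = 0 := by
          linear_combination x1 * hX + x0 * hY
        have hz := (mul_eq_zero.mp h1).resolve_right (ne_of_gt ha2)
        linarith
  }

private lemma key_s3 (x p y : EuclideanSpace ℝ (Fin 2)) (hy : y ≠ 0) (M ε : ℝ)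
    (hM : 0 < M) (hM3 : 3 < M ^ 2) (hε : ε ^ 2 = 1) (hx : x ≠ 0)
    (hmem : ∀ s : ℝ, 0 ≤ s →
      M * ‖x‖ ≤ dist x (p + s • y) ∨ M * ‖p + s • y‖ ≤ dist x (p + s • y))
    (hξp : p 0 * x 0 + p 1 * x 1 = -(x 0 ^ 2 + x 1 ^ 2) / (M ^ 2 - 1))
    (hηp : -(p 0) * x 1 + p 1 * x 0 = ε * M * (x 0 ^ 2 + x 1 ^ 2) / (M ^ 2 - 1)) :
    y 0 * x 0 + y 1 * x 1 < 0 ∧ ε * (-(y 0) * x 1 + y 1 * x 0) < 0 := by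
  have hD : 0 < M ^ 2 - 1 := by linarith
  have ha2 : 0 < x 0 ^ 2 + x 1 ^ 2 := by
    have h1 := normsq2 x
    have h2 := pow_pos (norm_pos_iff.mpr hx) 2
    linarith
  have hDne : (M ^ 2 - 1) ≠ 0 := ne_of_gt hD
  have hξpD : (p 0 * x 0 + p 1 * x 1) * (M ^ 2 - 1) = -(x 0 ^ 2 + x 1 ^ 2) := by
    rw [hξp, div_mul_cancel₀ _ hDne]
  have hηpD : (-(p 0) * x 1 + p 1 * x 0) * (M ^ 2 - 1) = ε * M * (x 0 ^ 2 + x 1 ^ 2) := by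
    rw [hηp, div_mul_cancel₀ _ hDne]
  have hξpsqD : (p 0 * x 0 + p 1 * x 1) ^ 2 * (M ^ 2 - 1) ^ 2 = (x 0 ^ 2 + x 1 ^ 2) ^ 2 := by
    linear_combination ((p 0 * x 0 + p 1 * x 1) * (M ^ 2 - 1) - (x 0 ^ 2 + x 1 ^ 2)) * hξpD
  have hηpsqD : (-(p 0) * x 1 + p 1 * x 0) ^ 2 * (M ^ 2 - 1) ^ 2
      = M ^ 2 * (x 0 ^ 2 + x 1 ^ 2) ^ 2 := by
    linear_combination ((-(p 0) * x 1 + p 1 * x 0) * (M ^ 2 - 1)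
      + ε * M * (x 0 ^ 2 + x 1 ^ 2)) * hηpD + (M * (x 0 ^ 2 + x 1 ^ 2)) ^ 2 * hε
  have htpD : (p 0 ^ 2 + p 1 ^ 2) * (x 0 ^ 2 + x 1 ^ 2) * (M ^ 2 - 1) ^ 2
      = (x 0 ^ 2 + x 1 ^ 2) ^ 2 + M ^ 2 * (x 0 ^ 2 + x 1 ^ 2) ^ 2 := by
    linear_combination hξpsqD + hηpsqD
  have hdp2 : dist x p ^ 2
      = (x 0 ^ 2 + x 1 ^ 2) - 2 * (p 0 * x 0 + p 1 * x 1) + (p 0 ^ 2 + p 1 ^ 2) := by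
    rw [distsq2]; ring
  have hgoal2 : dist x p ^ 2 * (x 0 ^ 2 + x 1 ^ 2) * (M ^ 2 - 1) ^ 2
      = (x 0 ^ 2 + x 1 ^ 2) ^ 2 * (M ^ 2 * (M ^ 2 + 1)) := by
    linear_combination (x 0 ^ 2 + x 1 ^ 2) * (M ^ 2 - 1) ^ 2 * hdp2 + htpD
      - 2 * (x 0 ^ 2 + x 1 ^ 2) * (M ^ 2 - 1) * hξpD
  have hp_in : dist x p < M * ‖x‖ := by
    apply sqlt (mul_nonneg hM.le (norm_nonneg x))
    rw [mul_pow, normsq2]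
    by_contra hc
    push_neg at hc
    have h1 : 0 < (x 0 ^ 2 + x 1 ^ 2) * (M ^ 2 - 1) ^ 2 := mul_pos ha2 (pow_pos hD 2)
    have h2 := mul_le_mul_of_nonneg_right hc h1.le
    have h3 : 0 < (x 0 ^ 2 + x 1 ^ 2) ^ 2 * (M ^ 4 * (M ^ 2 - 3)) :=
      mul_pos (pow_pos ha2 2) (mul_pos (pow_pos hM 4) (by linarith))
    linarith [hgoal2, h2, h3]
  obtain ⟨s, hs, heq, hle⟩ := exit_point x p y hy hM hmem hp_in
  have hdist2 : (x 0 - (p 0 + s * y 0)) ^ 2 + (x 1 - (p 1 + s * y 1)) ^ 2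
      = M ^ 2 * (x 0 ^ 2 + x 1 ^ 2) := by
    have h : dist x (p + s • y) ^ 2 = (M * ‖x‖) ^ 2 := by rw [heq]
    rw [distsq2, mul_pow, normsq2] at h
    exact h
  have hT : (p 0 + s * y 0) ^ 2 + (p 1 + s * y 1) ^ 2 ≤ x 0 ^ 2 + x 1 ^ 2 := by
    have h := pow_le_pow_left₀ (norm_nonneg _) hle 2
    rw [normsq2, normsq2] at h
    exact h
  exact key_alg (x 0) (x 1) (p 0) (p 1) (y 0) (y 1) s M ε hM hM3 hε ha2 hs hξp hηp hdist2 hT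

private lemma notMem_jBall_iff (x : EuclideanSpace ℝ (Fin 2)) (hx : x ≠ 0) {r : ℝ}
    (hr : 0 < r) (M : ℝ) (hMdef : M = Real.exp r - 1) (w : EuclideanSpace ℝ (Fin 2)) :
    w ∉ jBall ({0}ᶜ : Set (EuclideanSpace ℝ (Fin 2))) x r ↔
      M * ‖x‖ ≤ dist x w ∨ M * ‖w‖ ≤ dist x w := by
  have hfr : frontier ({0}ᶜ : Set (EuclideanSpace ℝ (Fin 2))) = {0} := by
    rw [frontier_compl, isClosed_singleton.frontier_eq, interior_singleton, Set.diff_empty]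
  have hMpos : 0 < M := by
    have h1 : Real.exp 0 < Real.exp r := Real.exp_lt_exp.mpr hr
    rw [Real.exp_zero] at h1
    rw [hMdef]; linarith
  by_cases hw : w = 0
  · subst hw
    refine iff_of_true (fun h => ?_) (Or.inr (by simpa using dist_nonneg))
    exact h.1 rfl
  · have hw' : 0 < ‖w‖ := norm_pos_iff.mpr hw
    have hx' : 0 < ‖x‖ := norm_pos_iff.mpr hx
    have hmin : 0 < min ‖x‖ ‖w‖ := lt_min hx' hw'
    have hq0 : 0 ≤ dist x w / min ‖x‖ ‖w‖ := div_nonneg dist_nonneg hmin.le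
    have h1q : (0:ℝ) < 1 + dist x w / min ‖x‖ ‖w‖ := by linarith
    have hjd : jDist ({0}ᶜ : Set (EuclideanSpace ℝ (Fin 2))) x w
        = Real.log (1 + dist x w / min ‖x‖ ‖w‖) := by
      rw [jDist, hfr, Metric.infDist_singleton, Metric.infDist_singleton,
        dist_zero_right, dist_zero_right]
    have hwG : w ∈ ({0}ᶜ : Set (EuclideanSpace ℝ (Fin 2))) := hw
    constructor
    · intro h
      have hge : r ≤ Real.log (1 + dist x w / min ‖x‖ ‖w‖) := by
        by_contra hc
        push_neg at hc
        exact h ⟨hwG, by rw [hjd]; exact hc⟩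
      rw [Real.le_log_iff_exp_le h1q] at hge
      have h2 : M * min ‖x‖ ‖w‖ ≤ dist x w := by
        rw [hMdef]
        have h3 : Real.exp r - 1 ≤ dist x w / min ‖x‖ ‖w‖ := by linarith
        calc (Real.exp r - 1) * min ‖x‖ ‖w‖
            ≤ (dist x w / min ‖x‖ ‖w‖) * min ‖x‖ ‖w‖ :=
              mul_le_mul_of_nonneg_right h3 hmin.le
          _ = dist x w := div_mul_cancel₀ _ (ne_of_gt hmin)
      rcases min_cases ‖x‖ ‖w‖ with ⟨hmeq, _⟩ | ⟨hmeq, _⟩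
      · left; rwa [hmeq] at h2
      · right; rwa [hmeq] at h2
    · intro h hmem
      obtain ⟨-, hlt⟩ := hmem
      rw [hjd, Real.log_lt_iff_lt_exp h1q] at hlt
      have hlt2 : dist x w < M * min ‖x‖ ‖w‖ := by
        have h3 : dist x w / min ‖x‖ ‖w‖ < M := by rw [hMdef]; linarith
        calc dist x w = (dist x w / min ‖x‖ ‖w‖) * min ‖x‖ ‖w‖ :=
              (div_mul_cancel₀ _ (ne_of_gt hmin)).symm
          _ < M * min ‖x‖ ‖w‖ := mul_lt_mul_of_pos_right h3 hmin
      have hx2 : dist x w < M * ‖x‖ :=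
        lt_of_lt_of_le hlt2 (mul_le_mul_of_nonneg_left (min_le_left _ _) hMpos.le)
      have hw2 : dist x w < M * ‖w‖ :=
        lt_of_lt_of_le hlt2 (mul_le_mul_of_nonneg_left (min_le_right _ _) hMpos.le)
      rcases h with h | h <;> linarith

set_option maxHeartbeats 1600000 in
/-- Klén, Theorem 2.1 (sharpness): in the punctured plane `G = ℝ² \ {0}`, for `x ∈ G`
and `r > log (1 + √3)` the `j`-metric disk `B_j(x,r)` is not close-to-convex. -/
theorem jBall_not_closeToConvex_of_puncturedPlane
    (x : EuclideanSpace ℝ (Fin 2)) (hx : x ≠ 0)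
    (r : ℝ) (hr : Real.log (1 + Real.sqrt 3) < r) :
    ¬ CloseToConvex (jBall ({0}ᶜ : Set (EuclideanSpace ℝ (Fin 2))) x r) := by
  rintro ⟨𝒞, hHL, hdisj, hcov⟩
  have hs3pos : (0:ℝ) < Real.sqrt 3 := Real.sqrt_pos.mpr (by norm_num)
  have hrpos : 0 < r := lt_trans (Real.log_pos (by linarith)) hr
  obtain ⟨M, hMdef⟩ : ∃ M : ℝ, M = Real.exp r - 1 := ⟨_, rfl⟩
  have hMgt : Real.sqrt 3 < M := by
    have h1 : Real.exp (Real.log (1 + Real.sqrt 3)) < Real.exp r := Real.exp_lt_exp.mpr hr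
    rw [Real.exp_log (by linarith)] at h1
    rw [hMdef]; linarith
  have hM : 0 < M := lt_trans hs3pos hMgt
  have hM3 : 3 < M ^ 2 := by
    have h := Real.sq_sqrt (by norm_num : (0:ℝ) ≤ 3)
    nlinarith [hs3pos, hMgt]
  have hD : 0 < M ^ 2 - 1 := by linarith
  have hDne : (M ^ 2 - 1) ≠ 0 := ne_of_gt hD
  have ha2 : 0 < x 0 ^ 2 + x 1 ^ 2 := by
    have h1 := normsq2 x
    have h2 := pow_pos (norm_pos_iff.mpr hx) 2
    linarith
  obtain ⟨p₁, hp₁0, hp₁1⟩ : ∃ p : EuclideanSpace ℝ (Fin 2),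
      p 0 = (-(x 0) - M * x 1) / (M ^ 2 - 1) ∧ p 1 = (-(x 1) + M * x 0) / (M ^ 2 - 1) :=
    ⟨(WithLp.equiv 2 (Fin 2 → ℝ)).symm
      ![(-(x 0) - M * x 1) / (M ^ 2 - 1), (-(x 1) + M * x 0) / (M ^ 2 - 1)], rfl, rfl⟩
  obtain ⟨p₂, hp₂0, hp₂1⟩ : ∃ p : EuclideanSpace ℝ (Fin 2),
      p 0 = (-(x 0) + M * x 1) / (M ^ 2 - 1) ∧ p 1 = (-(x 1) - M * x 0) / (M ^ 2 - 1) :=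
    ⟨(WithLp.equiv 2 (Fin 2 → ℝ)).symm
      ![(-(x 0) + M * x 1) / (M ^ 2 - 1), (-(x 1) - M * x 0) / (M ^ 2 - 1)], rfl, rfl⟩
  have hξp₁ : p₁ 0 * x 0 + p₁ 1 * x 1 = -(x 0 ^ 2 + x 1 ^ 2) / (M ^ 2 - 1) := by
    rw [hp₁0, hp₁1]; field_simp; ring
  have hηp₁ : -(p₁ 0) * x 1 + p₁ 1 * x 0 = 1 * M * (x 0 ^ 2 + x 1 ^ 2) / (M ^ 2 - 1) := by
    rw [hp₁0, hp₁1]; field_simp; ring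
  have hξp₂ : p₂ 0 * x 0 + p₂ 1 * x 1 = -(x 0 ^ 2 + x 1 ^ 2) / (M ^ 2 - 1) := by
    rw [hp₂0, hp₂1]; field_simp; ring
  have hηp₂ : -(p₂ 0) * x 1 + p₂ 1 * x 0 = (-1) * M * (x 0 ^ 2 + x 1 ^ 2) / (M ^ 2 - 1) := by
    rw [hp₂0, hp₂1]; field_simp; ring
  have hp₁H : M * ‖p₁‖ ≤ dist x p₁ := by
    refine sqle dist_nonneg (le_of_eq ?_)
    rw [mul_pow, normsq2, distsq2, hp₁0, hp₁1]
    field_simp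
    ring
  have hp₂H : M * ‖p₂‖ ≤ dist x p₂ := by
    refine sqle dist_nonneg (le_of_eq ?_)
    rw [mul_pow, normsq2, distsq2, hp₂0, hp₂1]
    field_simp
    ring
  have hp₁U : p₁ ∈ ⋃₀ 𝒞 := by
    rw [hcov]
    exact (notMem_jBall_iff x hx hrpos M hMdef p₁).mpr (Or.inr hp₁H)
  have hp₂U : p₂ ∈ ⋃₀ 𝒞 := by
    rw [hcov]
    exact (notMem_jBall_iff x hx hrpos M hMdef p₂).mpr (Or.inr hp₂H)
  obtain ⟨R1, hR1mem, hp₁R1⟩ := hp₁U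
  obtain ⟨R2, hR2mem, hp₂R2⟩ := hp₂U
  obtain ⟨z₁, y₁, hy₁, hst1⟩ := hHL R1 hR1mem
  obtain ⟨z₂, y₂, hy₂, hst2⟩ := hHL R2 hR2mem
  have hfwd1 : ∀ s : ℝ, 0 ≤ s → M * ‖x‖ ≤ dist x (p₁ + s • y₁) ∨
      M * ‖p₁ + s • y₁‖ ≤ dist x (p₁ + s • y₁) := by
    intro s hs
    have hU : p₁ + s • y₁ ∈ ⋃₀ 𝒞 := ⟨R1, hR1mem, ray_forward hst1 hp₁R1 s hs⟩
    rw [hcov] at hU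
    exact (notMem_jBall_iff x hx hrpos M hMdef _).mp hU
  have hfwd2 : ∀ s : ℝ, 0 ≤ s → M * ‖x‖ ≤ dist x (p₂ + s • y₂) ∨
      M * ‖p₂ + s • y₂‖ ≤ dist x (p₂ + s • y₂) := by
    intro s hs
    have hU : p₂ + s • y₂ ∈ ⋃₀ 𝒞 := ⟨R2, hR2mem, ray_forward hst2 hp₂R2 s hs⟩
    rw [hcov] at hU
    exact (notMem_jBall_iff x hx hrpos M hMdef _).mp hU
  have hk1 := key_s3 x p₁ y₁ hy₁ M 1 hM hM3 (one_pow 2) hx hfwd1 hξp₁ hηp₁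
  have hA : y₁ 0 * x 0 + y₁ 1 * x 1 < 0 := hk1.1
  have hB : -(y₁ 0) * x 1 + y₁ 1 * x 0 < 0 := by linarith [hk1.2]
  have hk2 := key_s3 x p₂ y₂ hy₂ M (-1) hM hM3 (by norm_num) hx hfwd2 hξp₂ hηp₂
  have hA' : y₂ 0 * x 0 + y₂ 1 * x 1 < 0 := hk2.1
  have hB' : 0 < -(y₂ 0) * x 1 + y₂ 1 * x 0 := by linarith [hk2.2]
  have hne : R1 ≠ R2 := by
    intro hEQ
    have hp₂R1 : p₂ ∈ R1 := by rw [hEQ]; exact hp₂R2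
    have hfwd2' : ∀ s : ℝ, 0 ≤ s → M * ‖x‖ ≤ dist x (p₂ + s • y₁) ∨
        M * ‖p₂ + s • y₁‖ ≤ dist x (p₂ + s • y₁) := by
      intro s hs
      have hU : p₂ + s • y₁ ∈ ⋃₀ 𝒞 := ⟨R1, hR1mem, ray_forward hst1 hp₂R1 s hs⟩
      rw [hcov] at hU
      exact (notMem_jBall_iff x hx hrpos M hMdef _).mp hU
    have hk3 := key_s3 x p₂ y₁ hy₁ M (-1) hM hM3 (by norm_num) hx hfwd2' hξp₂ hηp₂
    linarith [hk3.2, hB]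
  have hn : 0 < M * (x 0 ^ 2 + x 1 ^ 2) / (M ^ 2 - 1) := div_pos (mul_pos hM ha2) hD
  have hξeq : p₁ 0 * x 0 + p₁ 1 * x 1 = p₂ 0 * x 0 + p₂ 1 * x 1 := by
    rw [hξp₁, hξp₂]
  have hη1 : -(p₁ 0) * x 1 + p₁ 1 * x 0 = M * (x 0 ^ 2 + x 1 ^ 2) / (M ^ 2 - 1) := by
    rw [hηp₁]; ring
  have hη2 : -(p₂ 0) * x 1 + p₂ 1 * x 0 = -(M * (x 0 ^ 2 + x 1 ^ 2) / (M ^ 2 - 1)) := by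
    rw [hηp₂]; ring
  obtain ⟨s, σ, hs, hσ, hc0, hc1⟩ := cross_alg (x 0) (x 1) (p₁ 0) (p₁ 1) (p₂ 0) (p₂ 1)
    (y₁ 0) (y₁ 1) (y₂ 0) (y₂ 1) (M * (x 0 ^ 2 + x 1 ^ 2) / (M ^ 2 - 1))
    ha2 hn hξeq hη1 hη2 hA hB hA' hB'
  have hvec : p₁ + s • y₁ = p₂ + σ • y₂ := by
    ext i
    fin_cases i
    · exact hc0
    · exact hc1
  have hq1 : p₁ + s • y₁ ∈ R1 := ray_forward hst1 hp₁R1 s hs.le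
  have hq2 : p₁ + s • y₁ ∈ R2 := by
    rw [hvec]
    exact ray_forward hst2 hp₂R2 σ hσ.le
  exact Set.disjoint_left.mp (hdisj hR1mem hR2mem hne) hq1 hq2
end

section
/- Let n ≥ 2, let G = ℝⁿ \ {0}, let e₁ be the first standard basis vector of ℝⁿ, and let r > log 2. Then the j-metric ball satisfies B_j(e₁,r) = Bⁿ(e₁, eʳ−1) \ closure(Bⁿ(c, s)), where Bⁿ(a,ρ) denotes the open Euclidean ball of center a and radius ρ, c = e₁/(eʳ(2−eʳ)) and s = (eʳ−1)/(eʳ(eʳ−2)). -/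
set_option maxHeartbeats 1000000


private lemma sq_lt_iff_of_nonneg {a b : ℝ} (ha : 0 ≤ a) (hb : 0 ≤ b) :
    a < b ↔ a ^ 2 < b ^ 2 := by
  constructor <;> intro h <;> nlinarith

/-- Klén, proof of Theorem 2.1: in `G = ℝⁿ \ {0}` with `r > log 2`, the `j`-metric ball
centered at `e₁` is `B_j(e₁,r) = Bⁿ(e₁, eʳ-1) \ closure Bⁿ(c,s)` with
`c = e₁/(eʳ(2-eʳ))` and `s = (eʳ-1)/(eʳ(eʳ-2))`. -/
theorem jBall_eq_ball_diff_closure_ball {n : ℕ} (hn : 2 ≤ n) (r : ℝ) (hr : Real.log 2 < r)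
    (e₁ c : EuclideanSpace ℝ (Fin n)) (s : ℝ)
    (he₁ : e₁ = EuclideanSpace.single (⟨0, by omega⟩ : Fin n) 1)
    (hc : c = (Real.exp r * (2 - Real.exp r))⁻¹ • e₁)
    (hs : s = (Real.exp r - 1) / (Real.exp r * (Real.exp r - 2))) :
    jBall ({0}ᶜ : Set (EuclideanSpace ℝ (Fin n))) e₁ r
      = Metric.ball e₁ (Real.exp r - 1) \ closure (Metric.ball c s) := by
  have hE : (2:ℝ) < Real.exp r := by
    calc (2:ℝ) = Real.exp (Real.log 2) := (Real.exp_log (by norm_num)).symm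
    _ < Real.exp r := Real.exp_lt_exp.2 hr
  set E := Real.exp r with hEdef
  set K : ℝ := E - 1 with hKdef
  have hK1 : 1 < K := by simp only [hKdef]; linarith
  have hK0 : 0 < K := by linarith
  set D : ℝ := E * (E - 2) with hDdef
  have hD0 : 0 < D := mul_pos (by linarith) (by linarith)
  have hDK : D = K ^ 2 - 1 := by simp only [hDdef, hKdef]; ring
  have hs' : s = K / D := hs
  have hspos : 0 < s := by rw [hs']; positivity
  have he1norm : ‖e₁‖ = 1 := by rw [he₁, EuclideanSpace.norm_single]; norm_num
  have he1nz : e₁ ≠ 0 := by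
    intro h; rw [h, norm_zero] at he1norm; norm_num at he1norm
  haveI : Nontrivial (EuclideanSpace ℝ (Fin n)) := ⟨e₁, 0, he1nz⟩
  haveI : ∀ x : EuclideanSpace ℝ (Fin n), (nhdsWithin x {x}ᶜ).NeBot :=
    fun x => Module.punctured_nhds_neBot ℝ _ x
  -- frontier of the punctured space is {0}
  have hfr : frontier ({0}ᶜ : Set (EuclideanSpace ℝ (Fin n))) = {0} := by
    rw [frontier_compl, isClosed_singleton.frontier_eq, interior_singleton,
      Set.diff_empty]
  -- c rewritten
  have hc' : c = (-D⁻¹) • e₁ := by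
    rw [hc]
    congr 1
    rw [hDdef, show Real.exp r * (2 - Real.exp r) = -(Real.exp r * (Real.exp r - 2)) from by ring]
    exact neg_inv.symm
  have hcnorm : ‖c‖ = D⁻¹ := by
    rw [hc', norm_smul, he1norm, mul_one, Real.norm_eq_abs, abs_neg,
      abs_of_pos (by positivity)]
  have hclosure : closure (Metric.ball c s) = Metric.closedBall c s :=
    closure_ball c (ne_of_gt hspos)
  -- the key algebraic equivalence
  have key : ∀ y : EuclideanSpace ℝ (Fin n), dist e₁ y < K * ‖y‖ ↔ s < dist y c := by
    intro y
    have hq : dist e₁ y = ‖y - e₁‖ := by rw [dist_comm, dist_eq_norm]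
    have hq2 : dist y c = ‖y - c‖ := dist_eq_norm y c
    rw [hq, hq2,
      sq_lt_iff_of_nonneg (norm_nonneg _) (by positivity),
      sq_lt_iff_of_nonneg (le_of_lt hspos) (norm_nonneg _)]
    rw [norm_sub_sq_real y e₁, norm_sub_sq_real y c, he1norm]
    have hinner : (inner ℝ y c : ℝ) = (-D⁻¹) * (inner ℝ y e₁ : ℝ) := by
      rw [hc', real_inner_smul_right]
    rw [hinner, hcnorm, hs']
    set T : ℝ := inner ℝ y e₁ with hT
    rw [mul_pow, div_pow]
    have hDne : D ≠ 0 := ne_of_gt hD0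
    have hexpand : (‖y‖ ^ 2 - 2 * (-D⁻¹ * T) + (D⁻¹) ^ 2)
        = (D ^ 2 * ‖y‖ ^ 2 + 2 * D * T + 1) / D ^ 2 := by
      field_simp
      ring
    rw [hexpand, lt_div_iff₀ (by positivity)]
    have hKD : K ^ 2 / D ^ 2 * D ^ 2 = K ^ 2 := by field_simp
    rw [hKD]
    constructor
    · intro h
      have h1 : 0 < D * ‖y‖ ^ 2 + 2 * T - 1 := by nlinarith
      have h2 : 0 < D * (D * ‖y‖ ^ 2 + 2 * T - 1) := mul_pos hD0 h1
      nlinarith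
    · intro h
      have h2 : 0 < D * (D * ‖y‖ ^ 2 + 2 * T - 1) := by nlinarith
      have h1 : 0 < D * ‖y‖ ^ 2 + 2 * T - 1 := by
        by_contra hcon
        push_neg at hcon
        nlinarith
      nlinarith
  -- main extensionality
  ext y
  simp only [jBall, jDist, hfr, Metric.infDist_singleton, Set.mem_setOf_eq,
    Set.mem_compl_iff, Set.mem_singleton_iff, Set.mem_diff, hclosure,
    Metric.mem_ball, Metric.mem_closedBall, not_le]
  have hde : dist e₁ 0 = 1 := by rw [dist_zero_right, he1norm]
  rw [hde]
  by_cases hy : y = 0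
  · subst hy
    constructor
    · rintro ⟨h, -⟩; exact absurd rfl h
    · rintro ⟨-, h⟩
      rw [dist_comm, dist_zero_right, hcnorm, hs', div_lt_iff₀ hD0] at h
      have : D⁻¹ * D = 1 := inv_mul_cancel₀ (ne_of_gt hD0)
      linarith
  · have hyn : 0 < ‖y‖ := norm_pos_iff.2 hy
    have hm : 0 < min 1 ‖y‖ := lt_min one_pos hyn
    have hdy : dist y 0 = ‖y‖ := dist_zero_right y
    rw [hdy]
    have hlog : Real.log (1 + dist e₁ y / min 1 ‖y‖) < r ↔
        dist e₁ y < K * min 1 ‖y‖ := by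
      rw [Real.log_lt_iff_lt_exp (by positivity), ← hEdef]
      constructor
      · intro h
        have := (div_lt_iff₀ hm).1 (by linarith : dist e₁ y / min 1 ‖y‖ < E - 1)
        simpa [hKdef] using this
      · intro h
        have : dist e₁ y / min 1 ‖y‖ < E - 1 := (div_lt_iff₀ hm).2 (by
          simpa [hKdef] using h)
        linarith
    rw [hlog]
    have hmin : K * min 1 ‖y‖ = min (K * 1) (K * ‖y‖) :=
      (mul_min_of_nonneg _ _ (le_of_lt hK0))
    rw [hmin, lt_min_iff, mul_one, key y]
    constructor
    · rintro ⟨-, h1, h2⟩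
      exact ⟨by rwa [dist_comm] at h1, h2⟩
    · rintro ⟨h1, h2⟩
      refine ⟨hy, by rwa [dist_comm], h2⟩
end

section
/- Let r₀ > log(1+√2). Then the equality ((e^{r₀}−1)/(e^{r₀}(e^{r₀}−2)))² + (1 − 1/(e^{r₀}(2−e^{r₀})))² = (e^{r₀}−1)² holds if and only if r₀ = log(1+√3). -/
/-- Klén, proof of Theorem 2.1: for `r₀ > log (1 + √2)`, the equality
`((e^r₀-1)/(e^r₀(e^r₀-2)))² + (1 - 1/(e^r₀(2-e^r₀)))² = (e^r₀-1)²` holds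
if and only if `r₀ = log (1 + √3)`. -/
theorem pythagoras_condition_iff (r₀ : ℝ) (h : Real.log (1 + Real.sqrt 2) < r₀) :
    ((Real.exp r₀ - 1) / (Real.exp r₀ * (Real.exp r₀ - 2))) ^ 2
        + (1 - 1 / (Real.exp r₀ * (2 - Real.exp r₀))) ^ 2 = (Real.exp r₀ - 1) ^ 2
      ↔ r₀ = Real.log (1 + Real.sqrt 3) := by
  have h2 : (1:ℝ) < Real.sqrt 2 := by
    have := Real.sq_sqrt (by norm_num : (2:ℝ) ≥ 0)
    nlinarith [Real.sqrt_nonneg 2]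
  set t := Real.exp r₀ with htdef
  have ht : 1 + Real.sqrt 2 < t := by
    calc 1 + Real.sqrt 2 = Real.exp (Real.log (1 + Real.sqrt 2)) :=
          (Real.exp_log (by positivity)).symm
    _ < t := Real.exp_lt_exp.mpr h
  have ht2 : 2 < t := by linarith
  have h0 : t ≠ 0 := by linarith
  have hd : t - 2 ≠ 0 := by linarith
  have hd2 : 2 - t ≠ 0 := by linarith
  have ht1 : (0:ℝ) < t - 1 := by linarith
  have hs3 : Real.sqrt 3 ^ 2 = 3 := Real.sq_sqrt (by norm_num)
  constructor
  · intro heq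
    field_simp at heq
    have hpoly : (t * (t - 2)) ^ 2 * (t - 1) ^ 4 * (t ^ 2 - 2 * t - 2) = 0 := by
      linear_combination (-t ^ 2) * heq
    have key : t ^ 2 - 2 * t - 2 = 0 := by
      rcases mul_eq_zero.mp hpoly with h' | h'
      · exfalso
        rcases mul_eq_zero.mp h' with h'' | h''
        · exact pow_ne_zero 2 (mul_ne_zero h0 hd) h''
        · exact pow_ne_zero 4 (ne_of_gt ht1) h''
      · exact h'
    have h4 : (t - 1) ^ 2 = 3 := by nlinarith
    have hsq : Real.sqrt 3 = t - 1 := by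
      rw [show (3:ℝ) = (t - 1) ^ 2 from h4.symm, Real.sqrt_sq (by linarith)]
    have hT : (1 : ℝ) + Real.sqrt 3 = t := by linarith
    rw [hT]
    exact (Real.log_exp r₀).symm
  · intro hr
    have hexp : t = 1 + Real.sqrt 3 := by
      rw [htdef, hr]; exact Real.exp_log (by positivity)
    rw [hexp]
    have e0 : (1:ℝ) + Real.sqrt 3 - 1 = Real.sqrt 3 := by ring
    have e1 : ((1:ℝ) + Real.sqrt 3) * (1 + Real.sqrt 3 - 2) = 2 := by
      linear_combination hs3
    have e2 : ((1:ℝ) + Real.sqrt 3) * (2 - (1 + Real.sqrt 3)) = -2 := by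
      linear_combination -hs3
    rw [e0, e1, e2]
    linear_combination (-3/4 : ℝ) * hs3
end

section
/- Let n ≥ 2, let G = ℝⁿ \ {0}, let x ∈ G and let r > log 3. Then the j-metric ball B_j(x,r) is not close-to-convex. (Indeed, writing B_j(x,r) = Bⁿ(x, d(x)(eʳ−1)) \ closure(Bⁿ(c,s)) as for the punctured space, one has closure(Bⁿ(c,s)) ⊂ Bⁿ(x, d(x)(eʳ−1)), so the complement of B_j(x,r) has a bounded component.) -/
/-- Klén, Remark 2.2: in the punctured space `G = ℝⁿ \ {0}`, `n ≥ 2`, for `x ∈ G` and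
`r > log 3` the `j`-metric ball `B_j(x,r)` is not close-to-convex. -/
theorem jBall_not_closeToConvex_of_puncturedSpace_of_log_three_lt {n : ℕ} (hn : 2 ≤ n)
    (x : EuclideanSpace ℝ (Fin n)) (hx : x ≠ 0)
    (r : ℝ) (hr : Real.log 3 < r) :
    ¬ CloseToConvex (jBall ({0}ᶜ : Set (EuclideanSpace ℝ (Fin n))) x r) := by
  let E := EuclideanSpace ℝ (Fin n)
  haveI : Nonempty (Fin n) := ⟨⟨0, by omega⟩⟩
  haveI : Nontrivial E := inferInstance
  have hxn : (0:ℝ) < ‖x‖ := norm_pos_iff.mpr hx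
  -- frontier of {0}ᶜ is {0}
  have hfr : frontier ({0}ᶜ : Set E) = {0} := by
    rw [frontier_compl]
    rw [IsClosed.frontier_eq isClosed_singleton, interior_singleton, Set.diff_empty]
  rintro ⟨𝒞, hHL, hdisj, hcov⟩
  -- 0 is in the complement of the jBall
  have h0 : (0:E) ∈ (jBall ({0}ᶜ : Set E) x r)ᶜ := by
    intro h
    exact h.1 rfl
  rw [← hcov] at h0
  obtain ⟨S, hS𝒞, hS0⟩ := h0
  obtain ⟨z, y, hy, hform⟩ := hHL S hS𝒞
  have hyn : (0:ℝ) < ‖y‖ := norm_pos_iff.mpr hy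
  set s₀ : ℝ := ‖x‖ / ‖y‖ with hs₀def
  have hs₀ : 0 < s₀ := div_pos hxn hyn
  -- extract t₀ with 0 = z + t₀ • y
  obtain ⟨t₀, ht₀pos, ht₀⟩ : ∃ t₀ : ℝ, 0 ≤ t₀ ∧ (0:E) = z + t₀ • y := by
    rcases hform with h | h
    · rw [h] at hS0; obtain ⟨t, ht, he⟩ := hS0; exact ⟨t, le_of_lt ht, he⟩
    · rw [h] at hS0; exact hS0
  set w : E := z + (t₀ + s₀) • y with hwdef
  have hw : w = s₀ • y := by
    have hz : z = -(t₀ • y) := by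
      have := ht₀
      rw [eq_comm, add_eq_zero_iff_eq_neg] at this
      exact this
    rw [hwdef, hz, add_smul]
    abel
  have hwnorm : ‖w‖ = ‖x‖ := by
    rw [hw, norm_smul, Real.norm_eq_abs, abs_of_pos hs₀, hs₀def,
      div_mul_cancel₀ _ (ne_of_gt hyn)]
  have hwne : w ≠ 0 := by
    intro h
    rw [h, norm_zero] at hwnorm
    exact absurd hwnorm.symm (ne_of_gt hxn)
  -- w ∈ S
  have hwS : w ∈ S := by
    rcases hform with h | h
    · rw [h]; exact ⟨t₀ + s₀, by linarith, rfl⟩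
    · rw [h]; exact ⟨t₀ + s₀, by linarith, rfl⟩
  have hwC : w ∈ (jBall ({0}ᶜ : Set E) x r)ᶜ := by
    rw [← hcov]; exact ⟨S, hS𝒞, hwS⟩
  -- but w ∈ jBall
  apply hwC
  refine ⟨hwne, ?_⟩
  have hdistinf : ∀ v : E, Metric.infDist v (frontier ({0}ᶜ : Set E)) = ‖v‖ := by
    intro v
    rw [hfr, Metric.infDist_singleton, dist_zero_right]
  unfold jDist
  rw [hdistinf, hdistinf, hwnorm, min_self]
  have hdle : dist x w ≤ 2 * ‖x‖ := by
    calc dist x w ≤ ‖x‖ + ‖w‖ := by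
          rw [dist_eq_norm]; exact norm_sub_le _ _
      _ = 2 * ‖x‖ := by rw [hwnorm]; ring
  have h3 : 1 + dist x w / ‖x‖ ≤ 3 := by
    have h2 : dist x w / ‖x‖ ≤ 2 := (div_le_iff₀ hxn).mpr (by linarith)
    linarith
  calc Real.log (1 + dist x w / ‖x‖) ≤ Real.log 3 := by
        apply Real.log_le_log (by positivity) h3
    _ < r := hr
end

section
/- The function f(z) = cos√(z²−1) + √(z²−1)·sin√(z²−1) has exactly one zero on the open interval (2,π); i.e., there exists a unique λ ∈ (2,π) with f(λ) = 0. -/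
open Real

noncomputable def gfun : ℝ → ℝ := fun u => Real.cos u + u * Real.sin u

lemma gfun_hasDeriv (u : ℝ) : HasDerivAt gfun (u * Real.cos u) u := by
  have h1 : HasDerivAt Real.cos (-Real.sin u) u := Real.hasDerivAt_cos u
  have h2 : HasDerivAt (fun u : ℝ => u * Real.sin u)
      (1 * Real.sin u + u * Real.cos u) u :=
    (hasDerivAt_id u).mul (Real.hasDerivAt_sin u)
  have := h1.add h2
  show HasDerivAt (Real.cos + fun u : ℝ => u * Real.sin u) (u * Real.cos u) u
  exact this.congr_deriv (by ring)

lemma gfun_cont : Continuous gfun := by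
  unfold gfun; continuity

lemma sqrt3_bounds : (1.732 : ℝ) < Real.sqrt 3 ∧ Real.sqrt 3 < 1.7321 := by
  constructor
  · rw [show (1.732:ℝ) = Real.sqrt (1.732^2) by rw [Real.sqrt_sq]; norm_num]
    exact Real.sqrt_lt_sqrt (by norm_num) (by norm_num)
  · rw [Real.sqrt_lt' (by norm_num)]; norm_num

lemma pi_div_two_lt_sqrt3 : Real.pi / 2 < Real.sqrt 3 := by
  have h := Real.pi_lt_d6
  calc Real.pi / 2 < 1.732 := by linarith
  _ < Real.sqrt 3 := sqrt3_bounds.1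

-- b := √(π²-1)
lemma b_lt_pi : Real.sqrt (Real.pi ^ 2 - 1) < Real.pi := by
  rw [Real.sqrt_lt' Real.pi_pos]; linarith

lemma b_gt : (2.978 : ℝ) < Real.sqrt (Real.pi ^ 2 - 1) := by
  rw [Real.lt_sqrt (by norm_num)]
  nlinarith [Real.pi_gt_d6]

lemma gfun_strictAnti : StrictAntiOn gfun
    (Set.Icc (Real.sqrt 3) (Real.sqrt (Real.pi ^ 2 - 1))) := by
  apply strictAntiOn_of_deriv_neg (convex_Icc _ _) gfun_cont.continuousOn
  intro x hx
  rw [interior_Icc] at hx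
  rw [(gfun_hasDeriv x).deriv]
  have hx1 : Real.pi / 2 < x := lt_trans pi_div_two_lt_sqrt3 hx.1
  have hx2 : x < Real.pi + Real.pi / 2 := by
    have := lt_trans hx.2 b_lt_pi
    linarith [Real.pi_pos]
  have hcos : Real.cos x < 0 := Real.cos_neg_of_pi_div_two_lt_of_lt hx1 hx2
  have hxpos : 0 < x := lt_trans (by positivity) hx1
  exact mul_neg_of_pos_of_neg hxpos hcos

lemma sq_mem (z : ℝ) (hz : z ∈ Set.Icc (2:ℝ) Real.pi) :
    Real.sqrt (z ^ 2 - 1) ∈ Set.Icc (Real.sqrt 3) (Real.sqrt (Real.pi ^ 2 - 1)) := by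
  obtain ⟨h1, h2⟩ := hz
  constructor
  · apply Real.sqrt_le_sqrt; nlinarith
  · apply Real.sqrt_le_sqrt; nlinarith

lemma sq_strictMono : ∀ z1 ∈ Set.Icc (2:ℝ) Real.pi, ∀ z2 ∈ Set.Icc (2:ℝ) Real.pi,
    z1 < z2 → Real.sqrt (z1 ^ 2 - 1) < Real.sqrt (z2 ^ 2 - 1) := by
  intro z1 h1 z2 h2 hlt
  apply Real.sqrt_lt_sqrt
  · nlinarith [h1.1]
  · nlinarith [h1.1]

lemma F_strictAnti : StrictAntiOn (fun z => gfun (Real.sqrt (z ^ 2 - 1)))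
    (Set.Icc (2:ℝ) Real.pi) := by
  intro z1 h1 z2 h2 hlt
  exact gfun_strictAnti (sq_mem z1 h1) (sq_mem z2 h2) (sq_strictMono z1 h1 z2 h2 hlt)

lemma F2_pos : 0 < gfun (Real.sqrt (2 ^ 2 - 1)) := by
  have h : (2:ℝ) ^ 2 - 1 = 3 := by norm_num
  rw [h]
  set t : ℝ := Real.sqrt 3 - Real.pi / 2 with ht
  clear_value t
  have ht0 : 0 ≤ t := by rw [ht]; linarith [pi_div_two_lt_sqrt3]
  have htub : t < 0.162 := by
    have := sqrt3_bounds.2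
    have := Real.pi_gt_d6
    rw [ht]; linarith
  have hs3 : Real.sqrt 3 = t + Real.pi / 2 := by rw [ht]; ring
  have hcos : Real.cos (Real.sqrt 3) = -Real.sin t := by
    rw [hs3, Real.cos_add_pi_div_two]
  have hsin : Real.sin (Real.sqrt 3) = Real.cos t := by
    rw [hs3, Real.sin_add_pi_div_two]
  have hsin_le : Real.sin t ≤ t := Real.sin_le ht0
  have hcos_ge : 1 - t ^ 2 / 2 ≤ Real.cos t := Real.one_sub_sq_div_two_le_cos
  have hlb : (1.732:ℝ) < Real.sqrt 3 := sqrt3_bounds.1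
  unfold gfun
  rw [hcos, hsin]
  have ht2 : t ^ 2 < 0.027 := by nlinarith
  have hct : (0:ℝ) < 1 - t ^ 2 / 2 := by nlinarith
  have hprod : 1.732 * (1 - t ^ 2 / 2) ≤ Real.sqrt 3 * Real.cos t := by nlinarith
  nlinarith

lemma Fpi_neg : gfun (Real.sqrt (Real.pi ^ 2 - 1)) < 0 := by
  set u : ℝ := Real.sqrt (Real.pi ^ 2 - 1) with hu
  set s : ℝ := Real.pi - u with hs
  clear_value s
  clear_value u
  have hs0 : 0 < s := by have := b_lt_pi; rw [hs, hu]; linarith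
  have hsub : s < 0.164 := by
    have := b_gt
    have := Real.pi_lt_d6
    rw [hs, hu]; linarith
  have huv : u = Real.pi - s := by rw [hs]; ring
  have hcos : Real.cos u = -Real.cos s := by
    rw [huv, Real.cos_pi_sub]
  have hsin : Real.sin u = Real.sin s := by
    rw [huv, Real.sin_pi_sub]
  have hsin_le : Real.sin s ≤ s := Real.sin_le hs0.le
  have hcos_ge : 1 - s ^ 2 / 2 ≤ Real.cos s := Real.one_sub_sq_div_two_le_cos
  have hupos : 0 < u := by rw [hu]; exact lt_trans (by norm_num) b_gt
  have hule : u < Real.pi := by rw [hu]; exact b_lt_pi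
  have hsinpos : 0 ≤ Real.sin s := Real.sin_nonneg_of_nonneg_of_le_pi hs0.le
    (by linarith [Real.pi_gt_d6])
  unfold gfun
  rw [hcos, hsin]
  have h1 : u * Real.sin s ≤ Real.pi * s := by
    calc u * Real.sin s ≤ Real.pi * Real.sin s := by
          apply mul_le_mul_of_nonneg_right hule.le hsinpos
    _ ≤ Real.pi * s := by
          apply mul_le_mul_of_nonneg_left hsin_le Real.pi_pos.le
  nlinarith [Real.pi_lt_d6]

/-- Klén, Proposition 3.1: the function `f(z) = cos √(z²-1) + √(z²-1) sin √(z²-1)` has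
exactly one zero on `(2, π)`. -/
theorem existsUnique_zero_lambda :
    ∃! z : ℝ, z ∈ Set.Ioo 2 Real.pi ∧
      Real.cos (Real.sqrt (z ^ 2 - 1))
        + Real.sqrt (z ^ 2 - 1) * Real.sin (Real.sqrt (z ^ 2 - 1)) = 0 := by
  have hpi2 : (2:ℝ) < Real.pi := by linarith [Real.pi_gt_d6]
  have hFcont : ContinuousOn (fun z : ℝ => gfun (Real.sqrt (z ^ 2 - 1)))
      (Set.Icc 2 Real.pi) := by
    apply Continuous.continuousOn
    apply gfun_cont.comp
    continuity
  have hmem : (0:ℝ) ∈ Set.Ioo (gfun (Real.sqrt (Real.pi ^ 2 - 1)))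
      (gfun (Real.sqrt ((2:ℝ) ^ 2 - 1))) := ⟨Fpi_neg, F2_pos⟩
  obtain ⟨z, hz, hFz⟩ := intermediate_value_Ioo' hpi2.le hFcont hmem
  have hFz' : gfun (Real.sqrt (z ^ 2 - 1)) = 0 := hFz
  refine ⟨z, ⟨hz, ?_⟩, ?_⟩
  · simpa [gfun] using hFz'
  · rintro y ⟨hy, hFy⟩
    have hFy' : gfun (Real.sqrt (y ^ 2 - 1)) = 0 := by
      unfold gfun; linarith
    by_contra hne
    have hyI : y ∈ Set.Icc (2:ℝ) Real.pi := ⟨hy.1.le, hy.2.le⟩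
    have hzI : z ∈ Set.Icc (2:ℝ) Real.pi := ⟨hz.1.le, hz.2.le⟩
    rcases lt_or_gt_of_ne hne with h | h
    · have h2 : gfun (Real.sqrt (z ^ 2 - 1)) < gfun (Real.sqrt (y ^ 2 - 1)) :=
        F_strictAnti hyI hzI h
      rw [hFy', hFz'] at h2; exact lt_irrefl _ h2
    · have h2 : gfun (Real.sqrt (y ^ 2 - 1)) < gfun (Real.sqrt (z ^ 2 - 1)) :=
        F_strictAnti hzI hyI h
      rw [hFy', hFz'] at h2; exact lt_irrefl _ h2
end

section
/- For every r with log(1+√2) < r ≤ log(1+√3) one has ((eʳ−1)²·(e^{2r}−2eʳ+2))/(e^{2r}(eʳ−2)²) ≥ 3 ≥ (eʳ−1)²; moreover eʳ−1+1/(1−eʳ) ≤ √2 for all such r. -/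
/-- Klén, proof of Theorem 2.4: for `log (1+√2) < r ≤ log (1+√3)` one has
`((eʳ-1)²(e^{2r}-2eʳ+2))/(e^{2r}(eʳ-2)²) ≥ 3 ≥ (eʳ-1)²` and `eʳ-1+1/(1-eʳ) ≤ √2`. -/
theorem jball_general_domain_inequalities (r : ℝ)
    (h₁ : Real.log (1 + Real.sqrt 2) < r) (h₂ : r ≤ Real.log (1 + Real.sqrt 3)) :
    (3 ≤ ((Real.exp r - 1) ^ 2 * (Real.exp (2 * r) - 2 * Real.exp r + 2))
          / (Real.exp (2 * r) * (Real.exp r - 2) ^ 2)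
        ∧ (Real.exp r - 1) ^ 2 ≤ 3)
      ∧ Real.exp r - 1 + 1 / (1 - Real.exp r) ≤ Real.sqrt 2 := by
  have s2 : Real.sqrt 2 ^ 2 = 2 := Real.sq_sqrt (by norm_num)
  have s3 : Real.sqrt 3 ^ 2 = 3 := Real.sq_sqrt (by norm_num)
  have s2pos : (1:ℝ) ≤ Real.sqrt 2 := by nlinarith [Real.sqrt_nonneg 2]
  have s3pos : (1:ℝ) ≤ Real.sqrt 3 := by nlinarith [Real.sqrt_nonneg 3]
  have hx1 : 1 + Real.sqrt 2 < Real.exp r := by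
    calc 1 + Real.sqrt 2 = Real.exp (Real.log (1 + Real.sqrt 2)) :=
          (Real.exp_log (by positivity)).symm
      _ < Real.exp r := Real.exp_lt_exp.mpr h₁
  have hx2 : Real.exp r ≤ 1 + Real.sqrt 3 := by
    calc Real.exp r ≤ Real.exp (Real.log (1 + Real.sqrt 3)) := Real.exp_le_exp.mpr h₂
      _ = 1 + Real.sqrt 3 := Real.exp_log (by positivity)
  set x := Real.exp r with hx
  have h2r : Real.exp (2 * r) = x ^ 2 := by
    rw [two_mul, Real.exp_add]; ring
  have hx2gt : (2:ℝ) < x := by nlinarith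
  refine ⟨⟨?_, ?_⟩, ?_⟩
  · rw [h2r, le_div_iff₀ (by nlinarith)]
    have ht2 : 2 < (x - 1) ^ 2 := by nlinarith
    have ht3 : (x - 1) ^ 2 ≤ 3 := by nlinarith
    nlinarith [mul_nonneg (by linarith : (0:ℝ) ≤ 3 - (x - 1) ^ 2)
      (by linarith : (0:ℝ) ≤ (x - 1) ^ 2 - 2)]
  · nlinarith
  · have ht : Real.sqrt 2 < x - 1 := by linarith
    have hne : (1 - x) ≠ 0 := by nlinarith
    have hu : (1 / (1 - x)) * (1 - x) = 1 := one_div_mul_cancel hne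
    nlinarith [ht, hu, s2, hx2, sq_nonneg (x - 1 - Real.sqrt 2)]
end

section
/- Let G = ℝ² \ {0}, let x ∈ G and let 0 < r ≤ λ. Then the quasihyperbolic disk B_k(x,r) is close-to-convex. -/
/-- The quasihyperbolic metric of the punctured space `ℝⁿ \ {0}` (Martin–Osgood formula):
`k(x,y) = √(α² + log²(|x|/|y|))` where `α ∈ [0,π]` is the angle between `[x,0]` and `[0,y]`. -/
noncomputable def qhDist {E : Type*} [NormedAddCommGroup E] [InnerProductSpace ℝ E]
    (x y : E) : ℝ :=
  Real.sqrt ((InnerProductGeometry.angle x y) ^ 2 + (Real.log (‖x‖ / ‖y‖)) ^ 2)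

/-- The quasihyperbolic ball `B_k(x,r) = {y ∈ ℝⁿ \ {0} : k(x,y) < r}` of the punctured space. -/
def kBall {E : Type*} [NormedAddCommGroup E] [InnerProductSpace ℝ E] (x : E) (r : ℝ) : Set E :=
  {y | y ≠ 0 ∧ qhDist x y < r}


set_option maxHeartbeats 1000000

open Real Set

/-- Tangent-line inequality: `θ + λ cos θ ≥ 0` on `[π/2, π]`. -/
lemma qh_W_nonneg (lam : ℝ) (hlam : lam ∈ Set.Ioo 2 Real.pi)
    (hlam0 : Real.cos (Real.sqrt (lam ^ 2 - 1))
      + Real.sqrt (lam ^ 2 - 1) * Real.sin (Real.sqrt (lam ^ 2 - 1)) = 0) :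
    ∀ θ ∈ Icc (π/2) π, 0 ≤ θ + lam * Real.cos θ := by
  obtain ⟨hlam2, hlampi⟩ := hlam
  have hlampos : (0:ℝ) < lam := by linarith
  set a := Real.sqrt (lam ^ 2 - 1) with ha
  have ha2 : a ^ 2 = lam ^ 2 - 1 := Real.sq_sqrt (by nlinarith)
  have hapos : (0:ℝ) < a := Real.sqrt_pos.2 (by nlinarith)
  have hapi2 : π/2 < a := by
    have : (π/2)^2 < a^2 := by
      have hpi : π < 3.15 := Real.pi_lt_d2
      have hpi0 : 0 < π := Real.pi_pos
      nlinarith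
    nlinarith [Real.pi_pos]
  have hapi : a < π := by
    have : a^2 < π^2 := by nlinarith
    nlinarith [Real.pi_pos]
  have hsina : Real.sin a = 1 / lam := by
    have hs2 : Real.sin a ^ 2 * lam ^ 2 = 1 := by
      have hpy := Real.sin_sq_add_cos_sq a
      have hca : Real.cos a = -(a * Real.sin a) := by linarith
      have hca2 : Real.cos a ^ 2 = a^2 * Real.sin a ^ 2 := by rw [hca]; ring
      nlinarith [hpy, hca2, ha2]
    have hspos : 0 < Real.sin a := Real.sin_pos_of_pos_of_lt_pi hapos hapi
    have : (Real.sin a * lam)^2 = 1 := by ring_nf; nlinarith [hs2]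
    have h1 : Real.sin a * lam = 1 := by
      nlinarith [this, mul_pos hspos hlampos]
    field_simp
    linarith
  have hcosa : Real.cos a = -(a / lam) := by
    have := hlam0
    rw [hsina] at this
    field_simp at this ⊢
    linarith
  -- key: cos θ ≥ cos a - sin a * (θ - a) for θ ∈ [π/2, π]
  intro θ hθ
  obtain ⟨hθ1, hθ2⟩ := hθ
  have key : Real.cos a - Real.sin a * (θ - a) ≤ Real.cos θ := by
    rcases lt_trichotomy θ a with hlt | heq | hgt
    · -- θ < a : MVT on [θ, a]
      obtain ⟨ξ, hξ, hslope⟩ := exists_hasDerivAt_eq_slope Real.cos (fun t => -Real.sin t) hlt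
        Real.continuousOn_cos (fun t _ => Real.hasDerivAt_cos t)
      have hsle : Real.sin a ≤ Real.sin ξ := by
        have h1 : Real.sin ξ = Real.cos (ξ - π/2) := by
          rw [Real.cos_sub_pi_div_two]
        have h2 : Real.sin a = Real.cos (a - π/2) := by
          rw [Real.cos_sub_pi_div_two]
        rw [h1, h2]
        apply (Real.strictAntiOn_cos ⟨by linarith [hξ.1], by linarith [hξ.2, hapi]⟩
          ⟨by linarith, by linarith⟩ (by linarith [hξ.2])).le
      have hba : a - θ > 0 := by linarith
      have : Real.cos a - Real.cos θ = -Real.sin ξ * (a - θ) := by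
        field_simp at hslope
        linarith [hslope]
      nlinarith [hsle, hba]
    · simp [heq]
    · -- a < θ : MVT on [a, θ]
      obtain ⟨ξ, hξ, hslope⟩ := exists_hasDerivAt_eq_slope Real.cos (fun t => -Real.sin t) hgt
        Real.continuousOn_cos (fun t _ => Real.hasDerivAt_cos t)
      have hsle : Real.sin ξ ≤ Real.sin a := by
        have h1 : Real.sin ξ = Real.cos (ξ - π/2) := by rw [Real.cos_sub_pi_div_two]
        have h2 : Real.sin a = Real.cos (a - π/2) := by rw [Real.cos_sub_pi_div_two]
        rw [h1, h2]
        apply (Real.strictAntiOn_cos ⟨by linarith, by linarith⟩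
          ⟨by linarith [hξ.1], by linarith [hξ.2, hθ2]⟩ (by linarith [hξ.1])).le
      have hba : θ - a > 0 := by linarith
      have : Real.cos θ - Real.cos a = -Real.sin ξ * (θ - a) := by
        field_simp at hslope
        linarith [hslope]
      nlinarith [hsle, hba]
  have : θ + lam * (Real.cos a - Real.sin a * (θ - a)) = 0 := by
    rw [hsina, hcosa]; field_simp; ring
  nlinarith [key, hlampos]

noncomputable def qhR (h p : ℝ) : ℝ := Real.sqrt (p^2 + h^2)
noncomputable def qhU (h p : ℝ) : ℝ := Real.log (qhR h p)
noncomputable def qhT (h p : ℝ) : ℝ := Real.arccos (p / qhR h p)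
noncomputable def qhF (h p : ℝ) : ℝ := qhT h p ^ 2 + qhU h p ^ 2
noncomputable def qhP (h p : ℝ) : ℝ := qhU h p * p - qhT h p * h

variable {h p : ℝ}

lemma qhR_pos (hh : 0 < h) (p : ℝ) : 0 < qhR h p :=
  Real.sqrt_pos.2 (by positivity)

lemma qhR_sq (hh : 0 < h) (p : ℝ) : qhR h p ^ 2 = p^2 + h^2 :=
  Real.sq_sqrt (by positivity)

lemma abs_lt_qhR (hh : 0 < h) (p : ℝ) : |p| < qhR h p := by
  have h1 : Real.sqrt (p^2) < Real.sqrt (p^2 + h^2) :=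
    Real.sqrt_lt_sqrt (by positivity) (by nlinarith)
  rwa [Real.sqrt_sq_eq_abs] at h1

lemma abs_le_qhR' (p : ℝ) : |p| ≤ qhR h p := by
  have h1 : Real.sqrt (p^2) ≤ Real.sqrt (p^2 + h^2) :=
    Real.sqrt_le_sqrt (by nlinarith [sq_nonneg h])
  rwa [Real.sqrt_sq_eq_abs] at h1

lemma qhR_ratio (hh : 0 < h) (p : ℝ) : -1 < p / qhR h p ∧ p / qhR h p < 1 := by
  have hr := qhR_pos hh p
  have := abs_lt_qhR hh p
  rw [abs_lt] at this
  constructor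
  · rw [lt_div_iff₀ hr]; linarith [this.1]
  · rw [div_lt_one hr]; linarith [this.2]

lemma qhT_mem (hh : 0 < h) (p : ℝ) : qhT h p ∈ Set.Ioo 0 π := by
  have hr := qhR_ratio hh p
  refine ⟨Real.arccos_pos.2 hr.2, lt_of_le_of_ne (Real.arccos_le_pi _) fun heq => ?_⟩
  have := Real.arccos_eq_pi.1 heq
  linarith [hr.1]

lemma cos_qhT (hh : 0 < h) (p : ℝ) : Real.cos (qhT h p) = p / qhR h p :=
  Real.cos_arccos (le_of_lt (qhR_ratio hh p).1) (le_of_lt (qhR_ratio hh p).2)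

lemma one_sub_ratio (hh : 0 < h) (p : ℝ) :
    1 - (p / qhR h p)^2 = h^2 / qhR h p ^2 := by
  have hr := qhR_pos hh p
  rw [div_pow, qhR_sq hh]
  field_simp
  ring

lemma sqrt_one_sub_ratio (hh : 0 < h) (p : ℝ) :
    Real.sqrt (1 - (p / qhR h p)^2) = h / qhR h p := by
  rw [one_sub_ratio hh, Real.sqrt_div (by positivity), Real.sqrt_sq (le_of_lt hh),
    Real.sqrt_sq (le_of_lt (qhR_pos hh p))]

lemma sin_qhT (hh : 0 < h) (p : ℝ) : Real.sin (qhT h p) = h / qhR h p := by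
  rw [qhT, Real.sin_arccos, sqrt_one_sub_ratio hh]

lemma hasDerivAt_qhR (hh : 0 < h) (p : ℝ) : HasDerivAt (qhR h) (p / qhR h p) p := by
  have h1 : HasDerivAt (fun p : ℝ => p^2 + h^2) (2*p) p := by
    simpa using ((hasDerivAt_pow 2 p).add_const (h^2))
  have h2 := h1.sqrt (by positivity)
  refine h2.congr_deriv ?_
  rw [qhR]; ring

lemma hasDerivAt_qhU (hh : 0 < h) (p : ℝ) : HasDerivAt (qhU h) (p / qhR h p ^ 2) p := by
  have := (hasDerivAt_qhR hh p).log (ne_of_gt (qhR_pos hh p))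
  refine this.congr_deriv ?_
  rw [div_div, sq]

lemma hasDerivAt_qhT (hh : 0 < h) (p : ℝ) :
    HasDerivAt (qhT h) (-(h / qhR h p ^ 2)) p := by
  have hr := qhR_pos hh p
  have hrat := qhR_ratio hh p
  have hinner : HasDerivAt (fun p => p / qhR h p) (h^2 / qhR h p ^ 3) p := by
    have hd := (hasDerivAt_id p).div (hasDerivAt_qhR hh p) (ne_of_gt hr)
    refine hd.congr_deriv ?_
    have : (1 * qhR h p - id p * (p / qhR h p)) / qhR h p ^ 2
        = (qhR h p ^2 - p^2) / qhR h p ^3 := by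
      field_simp; simp only [id_eq]; ring
    rw [this, qhR_sq hh]
    ring_nf
  have harc := (Real.hasDerivAt_arccos (ne_of_gt hrat.1) (ne_of_lt hrat.2)).comp p hinner
  have : qhT h = Real.arccos ∘ fun p => p / qhR h p := rfl
  rw [this]
  refine harc.congr_deriv ?_
  rw [sqrt_one_sub_ratio hh]
  field_simp

lemma hasDerivAt_qhF (hh : 0 < h) (p : ℝ) :
    HasDerivAt (qhF h) (2 * qhP h p / qhR h p ^ 2) p := by
  have h1 := ((hasDerivAt_qhT hh p).pow 2).add ((hasDerivAt_qhU hh p).pow 2)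
  have : qhF h = fun p => qhT h p ^ 2 + qhU h p ^ 2 := rfl
  rw [this]
  refine h1.congr_deriv ?_
  rw [qhP]; field_simp; ring

lemma hasDerivAt_qhP (hh : 0 < h) (p : ℝ) :
    HasDerivAt (qhP h) (1 + qhU h p) p := by
  have h1 := ((hasDerivAt_qhU hh p).mul (hasDerivAt_id p)).sub
    ((hasDerivAt_qhT hh p).mul_const h)
  have : qhP h = fun p => qhU h p * p - qhT h p * h := rfl
  rw [this]
  refine h1.congr_deriv ?_
  have hr := qhR_pos hh p
  have hr2 : qhR h p ^ 2 = p^2+h^2 := qhR_sq hh p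
  have hrne : qhR h p ≠ 0 := ne_of_gt hr
  simp only [id_eq, mul_one]
  field_simp
  nlinarith [hr2]

lemma continuous_qhF (hh : 0 < h) : Continuous (qhF h) :=
  continuous_iff_continuousAt.2 fun p => (hasDerivAt_qhF hh p).continuousAt

section Crit

variable {lam r h : ℝ}

/-- Every critical point of `qhF h` with value `< lam²` lies in `p > 0` and has `qhU > 0`. -/
lemma qh_crit_pos (hlam : lam ∈ Set.Ioo 2 Real.pi)
    (hW : ∀ θ ∈ Icc (π/2) π, 0 ≤ θ + lam * Real.cos θ)
    (hh : 0 < h) {c : ℝ} (hcrit : qhP h c = 0) (hF : qhF h c < lam^2) :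
    0 < c ∧ 0 < qhU h c := by
  have hr := qhR_pos hh c
  have hT := qhT_mem hh c
  have hlt : 0 < lam := by linarith [hlam.1]
  -- c > 0
  have hcpos : 0 < c := by
    by_contra hc
    push_neg at hc
    rcases eq_or_lt_of_le hc with hc0 | hcneg
    · -- c = 0
      subst hc0
      rw [qhP] at hcrit
      nlinarith [hcrit, mul_pos hT.1 hh]
    · -- c < 0
      have hu : qhU h c * c = qhT h c * h := by rw [qhP] at hcrit; linarith
      have hupos : qhT h c * h > 0 := mul_pos hT.1 hh
      have huneg : qhU h c < 0 := by
        rcases lt_trichotomy (qhU h c) 0 with h'|h'|h'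
        · exact h'
        · exfalso
          rw [h'] at hu
          simp at hu
          rcases hu with h'' | h''
          · linarith [hT.1]
          · linarith
        · nlinarith
      -- relation u * cosθ = θ * sinθ
      have hcos : Real.cos (qhT h c) = c / qhR h c := cos_qhT hh c
      have hsin : Real.sin (qhT h c) = h / qhR h c := sin_qhT hh c
      have hrel : qhU h c * Real.cos (qhT h c) = qhT h c * Real.sin (qhT h c) := by
        rw [hcos, hsin]
        field_simp
        nlinarith [hu]
      -- θ ∈ [π/2, π]
      have hcosneg : Real.cos (qhT h c) < 0 := by
        rw [hcos]; exact div_neg_of_neg_of_pos hcneg hr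
      have hth2 : π/2 ≤ qhT h c := by
        by_contra hlt2
        push_neg at hlt2
        have := Real.cos_pos_of_mem_Ioo (Set.mem_Ioo.2 ⟨by linarith [hT.1, Real.pi_pos], hlt2⟩)
        linarith
      have hWth := hW (qhT h c) ⟨hth2, le_of_lt hT.2⟩
      -- lam² cos² ≤ θ²
      have hsq : lam^2 * Real.cos (qhT h c)^2 ≤ qhT h c ^2 := by
        have h1 : lam * (-Real.cos (qhT h c)) ≤ qhT h c := by linarith
        have h2 : 0 ≤ lam * (-Real.cos (qhT h c)) := by nlinarith
        nlinarith
      -- qhF * cos² = θ²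
      have hFcos : qhF h c * Real.cos (qhT h c)^2 = qhT h c ^2 := by
        rw [qhF]
        have hsq2 : (qhU h c * Real.cos (qhT h c))^2 = (qhT h c * Real.sin (qhT h c))^2 := by
          rw [hrel]
        have hpy := Real.sin_sq_add_cos_sq (qhT h c)
        nlinarith [hsq2, hpy]
      have hcos2 : 0 < Real.cos (qhT h c)^2 :=
        pow_two_pos_of_ne_zero (ne_of_lt hcosneg)
      nlinarith
  refine ⟨hcpos, ?_⟩
  have hu : qhU h c * c = qhT h c * h := by rw [qhP] at hcrit; linarith
  nlinarith [mul_pos hT.1 hh]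

/-- Horizontal convexity of the sublevel set, `h > 0` case. -/
lemma qh_horizconv (hlam : lam ∈ Set.Ioo 2 Real.pi)
    (hW : ∀ θ ∈ Icc (π/2) π, 0 ≤ θ + lam * Real.cos θ)
    (hh : 0 < h) (hr0 : 0 < r) (hrlam : r ≤ lam)
    {p1 p2 p3 : ℝ} (h1 : qhF h p1 < r^2) (h3 : qhF h p3 < r^2)
    (h12 : p1 ≤ p2) (h23 : p2 ≤ p3) : qhF h p2 < r^2 := by
  by_contra hbad
  push_neg at hbad
  have h1p2 : p1 < p2 := lt_of_le_of_ne h12 (by rintro rfl; linarith)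
  have h2p3 : p2 < p3 := lt_of_le_of_ne h23 (by rintro rfl; linarith)
  set K := Real.exp r with hK
  have hK1 : 1 < K := by rw [hK, ← Real.exp_zero]; exact Real.exp_lt_exp.2 hr0
  -- sublevel points have |p| < K
  have hbound : ∀ p, qhF h p < r^2 → |p| < K := by
    intro p hp
    have hT2 : 0 ≤ qhT h p ^2 := sq_nonneg _
    have hu2 : qhU h p ^2 < r^2 := by rw [qhF] at hp; linarith
    have habs : |qhU h p| < r := by
      have := Real.sqrt_lt_sqrt (sq_nonneg _) hu2
      rwa [Real.sqrt_sq_eq_abs, Real.sqrt_sq (le_of_lt hr0)] at this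
    have hlog : Real.log (qhR h p) < r := by
      rw [qhU] at habs; exact lt_of_abs_lt habs
    have := (Real.log_lt_iff_lt_exp (qhR_pos hh p)).1 hlog
    calc |p| < qhR h p := abs_lt_qhR hh p
    _ < K := this
  -- outside |p| ≥ K, qhF ≥ r^2
  have houtside : ∀ p, K ≤ |p| → r^2 ≤ qhF h p := by
    intro p hp
    have h2 : K ≤ qhR h p := le_trans hp (le_of_lt (abs_lt_qhR hh p))
    have h3' : r ≤ Real.log (qhR h p) := by
      rw [hK] at h2
      rw [← Real.log_exp r]
      exact Real.log_le_log (Real.exp_pos r) h2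
    have : r^2 ≤ qhU h p ^2 := by
      rw [qhU]
      nlinarith
    rw [qhF]; nlinarith [sq_nonneg (qhT h p)]
  -- min on [p2, K]
  have hcont := continuous_qhF hh
  have hp3K : p3 < K := by have := hbound p3 h3; exact lt_of_le_of_lt (le_abs_self _) this
  have hp1K : -K < p1 := (abs_lt.1 (hbound p1 h1)).1
  obtain ⟨c2, hc2mem, hc2min⟩ := (isCompact_Icc (a := p2) (b := K)).exists_isMinOn
    ⟨p2, le_refl _, by linarith⟩ hcont.continuousOn
  have hc2F : qhF h c2 < r^2 := lt_of_le_of_lt (hc2min ⟨le_of_lt h2p3, by linarith⟩) h3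
  have hc2in : c2 ∈ Ioo p2 K := by
    rcases eq_or_lt_of_le hc2mem.1 with he | hl
    · exfalso; rw [he] at hbad; linarith
    rcases eq_or_lt_of_le hc2mem.2 with he | hl2
    · exfalso
      rw [he] at hc2F
      have habsK : K ≤ |K| := le_abs_self K
      linarith [houtside K habsK]
    exact ⟨hl, hl2⟩
  have hc2crit : qhP h c2 = 0 := by
    have hloc : IsLocalMin (qhF h) c2 := hc2min.isLocalMin (Icc_mem_nhds hc2in.1 hc2in.2)
    have hd := hloc.deriv_eq_zero
    rw [(hasDerivAt_qhF hh c2).deriv] at hd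
    have := qhR_pos hh c2
    field_simp at hd
    linarith
  -- min on [-K, p2]
  obtain ⟨c1, hc1mem, hc1min⟩ := (isCompact_Icc (a := -K) (b := p2)).exists_isMinOn
    ⟨p2, by linarith, le_refl _⟩ hcont.continuousOn
  have hc1F : qhF h c1 < r^2 := lt_of_le_of_lt (hc1min ⟨by linarith, le_of_lt h1p2⟩) h1
  have hc1in : c1 ∈ Ioo (-K) p2 := by
    rcases eq_or_lt_of_le hc1mem.2 with he | hl
    · exfalso; rw [he] at hc1F; linarith
    rcases eq_or_lt_of_le hc1mem.1 with he | hl2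
    · exfalso
      rw [← he] at hc1F
      have := houtside (-K) (by rw [abs_neg, abs_of_pos (by linarith)])
      linarith
    exact ⟨hl2, hl⟩
  have hc1crit : qhP h c1 = 0 := by
    have hloc : IsLocalMin (qhF h) c1 := hc1min.isLocalMin (Icc_mem_nhds hc1in.1 hc1in.2)
    have hd := hloc.deriv_eq_zero
    rw [(hasDerivAt_qhF hh c1).deriv] at hd
    have := qhR_pos hh c1
    field_simp at hd
    linarith
  -- both criticals with value < lam²
  have hrlam2 : r^2 ≤ lam^2 := by nlinarith
  obtain ⟨hc1pos, hc1u⟩ := qh_crit_pos hlam hW hh hc1crit (lt_of_lt_of_le hc1F hrlam2)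
  obtain ⟨hc2pos, hc2u⟩ := qh_crit_pos hlam hW hh hc2crit (lt_of_lt_of_le hc2F hrlam2)
  have hc1c2 : c1 < c2 := lt_trans hc1in.2 hc2in.1
  -- qhP strictly monotone on [c1, c2]: deriv = 1 + qhU > 0 there since qhU incr on p>0
  have humono : ∀ p ∈ Ioo c1 c2, 0 < 1 + qhU h p := by
    intro p hp
    have hup : qhU h c1 ≤ qhU h p := by
      rw [qhU, qhU]
      apply Real.log_le_log (qhR_pos hh c1)
      apply Real.sqrt_le_sqrt
      nlinarith [hp.1, hc1pos]
    linarith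
  have hPmono : StrictMonoOn (qhP h) (Icc c1 c2) := by
    apply strictMonoOn_of_deriv_pos (convex_Icc _ _)
    · exact Continuous.continuousOn
        (continuous_iff_continuousAt.2 fun p => (hasDerivAt_qhP hh p).continuousAt)
    · intro p hp
      rw [interior_Icc] at hp
      rw [(hasDerivAt_qhP hh p).deriv]
      exact humono p hp
  have := hPmono ⟨le_refl _, le_of_lt hc1c2⟩ ⟨le_of_lt hc1c2, le_refl _⟩ hc1c2
  rw [hc1crit, hc2crit] at this
  exact lt_irrefl 0 this

end Crit

noncomputable def qhNF (p q : ℝ) : ℝ :=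
  Real.arccos (p / Real.sqrt (p^2+q^2)) ^2 + Real.log (Real.sqrt (p^2+q^2)) ^2

lemma qhNF_eq_qhF {q : ℝ} (hq : q ≠ 0) (p : ℝ) : qhNF p q = qhF |q| p := by
  rw [qhNF, qhF, qhT, qhU, qhR]
  rw [show p^2 + |q|^2 = p^2 + q^2 by rw [sq_abs]]

lemma qhNF_bound {p q r : ℝ} (hr0 : 0 < r) (hpq : ¬(p = 0 ∧ q = 0))
    (hlt : qhNF p q < r^2) : |p| < Real.exp r := by
  have ht : 0 < Real.sqrt (p^2+q^2) := by
    rcases not_and_or.1 hpq with h | h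
    · apply Real.sqrt_pos.2; positivity
    · apply Real.sqrt_pos.2; positivity
  have hu2 : Real.log (Real.sqrt (p^2+q^2)) ^2 < r^2 := by
    rw [qhNF] at hlt; nlinarith [sq_nonneg (Real.arccos (p / Real.sqrt (p^2+q^2)))]
  have habs : |Real.log (Real.sqrt (p^2+q^2))| < r := by
    have := Real.sqrt_lt_sqrt (sq_nonneg _) hu2
    rwa [Real.sqrt_sq_eq_abs, Real.sqrt_sq (le_of_lt hr0)] at this
  have hlog : Real.log (Real.sqrt (p^2+q^2)) < r := lt_of_abs_lt habs
  have h2 := (Real.log_lt_iff_lt_exp ht).1 hlog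
  calc |p| = Real.sqrt (p^2) := (Real.sqrt_sq_eq_abs p).symm
  _ ≤ Real.sqrt (p^2+q^2) := Real.sqrt_le_sqrt (by nlinarith [sq_nonneg q])
  _ < Real.exp r := h2

/-- Main coordinate-level convexity: on each horizontal line, the sublevel set is convex. -/
lemma qh_conv_coords {lam r : ℝ} (hlam : lam ∈ Set.Ioo 2 Real.pi)
    (hW : ∀ θ ∈ Icc (π/2) π, 0 ≤ θ + lam * Real.cos θ)
    (hr0 : 0 < r) (hrlam : r ≤ lam) {q p1 p2 p3 : ℝ}
    (h12 : p1 ≤ p2) (h23 : p2 ≤ p3)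
    (h1 : ¬(p1 = 0 ∧ q = 0) ∧ qhNF p1 q < r^2)
    (h3 : ¬(p3 = 0 ∧ q = 0) ∧ qhNF p3 q < r^2) :
    ¬(p2 = 0 ∧ q = 0) ∧ qhNF p2 q < r^2 := by
  rcases eq_or_ne q 0 with rfl | hq
  · -- q = 0 case
    have hrpi : r < π := lt_of_le_of_lt hrlam hlam.2
    have hNF0 : ∀ p : ℝ, p ≠ 0 → qhNF p 0 = Real.arccos (p/|p|) ^2 + Real.log |p| ^2 := by
      intro p hp
      rw [qhNF]
      rw [show p^2 + 0^2 = p^2 by ring, Real.sqrt_sq_eq_abs]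
    have hpos : ∀ p : ℝ, p ≠ 0 → qhNF p 0 < r^2 → 0 < p := by
      intro p hp hlt
      by_contra hneg
      push_neg at hneg
      have hplt : p < 0 := lt_of_le_of_ne hneg hp
      rw [hNF0 p hp] at hlt
      rw [show p/|p| = -1 by rw [abs_of_neg hplt]; field_simp] at hlt
      rw [Real.arccos_neg_one] at hlt
      nlinarith [sq_nonneg (Real.log |p|), Real.pi_pos]
    have hp1 : p1 ≠ 0 := fun h => h1.1 ⟨h, rfl⟩
    have hp3 : p3 ≠ 0 := fun h => h3.1 ⟨h, rfl⟩
    have hp1pos := hpos p1 hp1 h1.2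
    have hp3pos := hpos p3 hp3 h3.2
    have hp2pos : 0 < p2 := lt_of_lt_of_le hp1pos h12
    have hval : ∀ p : ℝ, 0 < p → qhNF p 0 = Real.log p ^2 := by
      intro p hp
      rw [hNF0 p (ne_of_gt hp), abs_of_pos hp]
      rw [show p/p = 1 by field_simp, Real.arccos_one]
      ring
    rw [hval p1 hp1pos] at h1
    rw [hval p3 hp3pos] at h3
    rw [hval p2 hp2pos]
    have hb1 : |Real.log p1| < r := by
      have := Real.sqrt_lt_sqrt (sq_nonneg _) h1.2
      rwa [Real.sqrt_sq_eq_abs, Real.sqrt_sq (le_of_lt hr0)] at this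
    have hb3 : |Real.log p3| < r := by
      have := Real.sqrt_lt_sqrt (sq_nonneg _) h3.2
      rwa [Real.sqrt_sq_eq_abs, Real.sqrt_sq (le_of_lt hr0)] at this
    have hl12 : Real.log p1 ≤ Real.log p2 := Real.log_le_log hp1pos h12
    have hl23 : Real.log p2 ≤ Real.log p3 := Real.log_le_log hp2pos h23
    have := abs_lt.1 hb1
    have := abs_lt.1 hb3
    exact ⟨fun h => hp1 (by linarith [h.1]), sq_lt_sq' (by linarith) (by linarith)⟩
  · -- q ≠ 0
    have hh : 0 < |q| := abs_pos.2 hq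
    rw [qhNF_eq_qhF hq] at h1 h3 ⊢
    refine ⟨fun h => hq h.2, ?_⟩
    exact qh_horizconv hlam hW hh hr0 hrlam h1.2 h3.2 h12 h23

lemma qhNF_zero_iff {r : ℝ} (hr0 : 0 < r) (hrpi : r < π) (p : ℝ) :
    (¬(p = 0 ∧ (0:ℝ) = 0) ∧ qhNF p 0 < r^2) ↔ p ∈ Ioo (Real.exp (-r)) (Real.exp r) := by
  have hNF0 : ∀ t : ℝ, 0 < t → qhNF t 0 = Real.log t ^2 := by
    intro t ht
    rw [qhNF, show t^2 + 0^2 = t^2 by ring, Real.sqrt_sq (le_of_lt ht),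
      show t/t = 1 by field_simp, Real.arccos_one]
    ring
  constructor
  · rintro ⟨hne, hlt⟩
    have hp : p ≠ 0 := fun h => hne ⟨h, rfl⟩
    have hppos : 0 < p := by
      by_contra hneg
      push_neg at hneg
      have hplt : p < 0 := lt_of_le_of_ne hneg hp
      rw [qhNF, show p^2 + 0^2 = p^2 by ring, Real.sqrt_sq_eq_abs,
        show p/|p| = -1 by rw [abs_of_neg hplt]; field_simp, Real.arccos_neg_one] at hlt
      nlinarith [sq_nonneg (Real.log |p|), Real.pi_pos]
    rw [hNF0 p hppos] at hlt
    have habs : |Real.log p| < r := by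
      have := Real.sqrt_lt_sqrt (sq_nonneg _) hlt
      rwa [Real.sqrt_sq_eq_abs, Real.sqrt_sq (le_of_lt hr0)] at this
    have h1 := abs_lt.1 habs
    constructor
    · rw [show p = Real.exp (Real.log p) from (Real.exp_log hppos).symm]
      exact Real.exp_lt_exp.2 h1.1
    · exact (Real.log_lt_iff_lt_exp hppos).1 h1.2
  · rintro ⟨hlo, hhi⟩
    have hppos : 0 < p := lt_trans (Real.exp_pos _) hlo
    refine ⟨fun h => (ne_of_gt hppos) h.1, ?_⟩
    rw [hNF0 p hppos]
    have h1 : Real.log p < r := (Real.log_lt_iff_lt_exp hppos).2 hhi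
    have h2 : -r < Real.log p := by
      rw [show (-r) = Real.log (Real.exp (-r)) from (Real.log_exp _).symm]
      exact Real.log_lt_log (Real.exp_pos _) hlo
    exact sq_lt_sq' (by linarith) h1

open scoped RealInnerProductSpace

/-- Klén, Theorem 3.2 (first part): in the punctured plane `G = ℝ² \ {0}`, for `x ∈ G` and
`0 < r ≤ λ`, where `λ ∈ (2,π)` solves `cos √(z²-1) + √(z²-1) sin √(z²-1) = 0`,
the quasihyperbolic disk `B_k(x,r)` is close-to-convex. -/
theorem kBall_closeToConvex_of_puncturedPlane
    (lam : ℝ) (hlam : lam ∈ Set.Ioo 2 Real.pi)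
    (hlam0 : Real.cos (Real.sqrt (lam ^ 2 - 1))
      + Real.sqrt (lam ^ 2 - 1) * Real.sin (Real.sqrt (lam ^ 2 - 1)) = 0)
    (x : EuclideanSpace ℝ (Fin 2)) (hx : x ≠ 0)
    (r : ℝ) (hr0 : 0 < r) (hr : r ≤ lam) :
    CloseToConvex (kBall x r) := by
  classical
  have hW := qh_W_nonneg lam hlam hlam0
  have hrpi : r < π := lt_of_le_of_lt hr hlam.2
  have hn : 0 < ‖x‖ := norm_pos_iff.2 hx
  set n := ‖x‖ with hndef
  have hnne : n ≠ 0 := ne_of_gt hn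
  set e : EuclideanSpace ℝ (Fin 2) := ‖x‖⁻¹ • x with he
  have h1 : ‖e‖ = 1 := norm_smul_inv_norm hx
  have h2 : (e 0)^2 + (e 1)^2 = 1 := by
    have h3 := (EuclideanSpace.norm_eq e).symm
    rw [Fin.sum_univ_two, h1] at h3
    have h4 := congrArg (·^2) h3
    simp at h4
    rcases h4 with h4 | h4
    · exact h4
    · exfalso; nlinarith [Real.sqrt_nonneg (e 0^2 + e 1^2)]
  have hene : e ≠ 0 := by
    intro h; rw [h] at h1; simp at h1
  set f : EuclideanSpace ℝ (Fin 2) := (WithLp.equiv 2 (Fin 2 → ℝ)).symm ![-(e 1), e 0]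
    with hf
  have hf0 : f 0 = -(e 1) := by rw [hf]; simp
  have hf1 : f 1 = e 0 := by rw [hf]; simp
  set Φ : ℝ → ℝ → EuclideanSpace ℝ (Fin 2) := fun p q => p • e + q • f with hΦ
  have hc0 : ∀ p q, Φ p q 0 = p * e 0 - q * e 1 := by
    intro p q
    simp only [hΦ, PiLp.add_apply, PiLp.smul_apply, hf0, smul_eq_mul]
    ring
  have hc1 : ∀ p q, Φ p q 1 = p * e 1 + q * e 0 := by
    intro p q
    simp only [hΦ, PiLp.add_apply, PiLp.smul_apply, hf1, smul_eq_mul]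
  have he0 : e 0 = n⁻¹ * x 0 := by rw [he]; rfl
  have he1 : e 1 = n⁻¹ * x 1 := by rw [he]; rfl
  have hx0 : x 0 = n * e 0 := by rw [he0]; field_simp
  have hx1 : x 1 = n * e 1 := by rw [he1]; field_simp
  set pc : EuclideanSpace ℝ (Fin 2) → ℝ := fun w => e 0 * w 0 + e 1 * w 1 with hpc
  set qc : EuclideanSpace ℝ (Fin 2) → ℝ := fun w => -(e 1) * w 0 + e 0 * w 1 with hqc
  have hpcΦ : ∀ p q, pc (Φ p q) = p := by
    intro p q; rw [hpc]; simp only [hc0, hc1]; linear_combination p * h2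
  have hqcΦ : ∀ p q, qc (Φ p q) = q := by
    intro p q; rw [hqc]; simp only [hc0, hc1]; linear_combination q * h2
  have hrecon : ∀ w, Φ (pc w) (qc w) = w := by
    intro w
    ext i
    fin_cases i
    · show Φ (pc w) (qc w) 0 = w 0
      rw [hc0, hpc, hqc]; simp only; linear_combination (w 0) * h2
    · show Φ (pc w) (qc w) 1 = w 1
      rw [hc1, hpc, hqc]; simp only; linear_combination (w 1) * h2
  have hΦ0iff : ∀ p q, Φ p q = 0 ↔ (p = 0 ∧ q = 0) := by
    intro p q
    constructor
    · intro h
      constructor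
      · have := hpcΦ p q; rw [h] at this; rw [← this, hpc]; simp
      · have := hqcΦ p q; rw [h] at this; rw [← this, hqc]; simp
    · rintro ⟨rfl, rfl⟩; rw [hΦ]; simp
  have hnormΦ : ∀ p q, ‖Φ p q‖ = Real.sqrt (p^2+q^2) := by
    intro p q
    rw [EuclideanSpace.norm_eq, Fin.sum_univ_two, hc0, hc1]
    congr 1
    rw [Real.norm_eq_abs, Real.norm_eq_abs, sq_abs, sq_abs]
    linear_combination (p^2+q^2) * h2
  have hinner : ∀ w : EuclideanSpace ℝ (Fin 2), (inner ℝ x w : ℝ) = x 0 * w 0 + x 1 * w 1 := by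
    intro w
    rw [PiLp.inner_apply, Fin.sum_univ_two]
    simp [RCLike.inner_apply, conj_trivial]
    ring
  have hsqrtscale : ∀ p q : ℝ, Real.sqrt ((p/n)^2+(q/n)^2) = Real.sqrt (p^2+q^2) / n := by
    intro p q
    rw [show (p/n)^2+(q/n)^2 = (p^2+q^2)/n^2 by field_simp,
      Real.sqrt_div (by positivity), Real.sqrt_sq (le_of_lt hn)]
  have hangle : ∀ p q : ℝ, InnerProductGeometry.angle x (Φ p q)
      = Real.arccos ((p/n) / Real.sqrt ((p/n)^2 + (q/n)^2)) := by
    intro p q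
    rw [InnerProductGeometry.angle, hnormΦ]
    have hi : (inner ℝ x (Φ p q) : ℝ) = n * p := by
      rw [hinner, hc0, hc1, hx0, hx1]; linear_combination (n*p) * h2
    rw [hi, hsqrtscale, ← hndef]
    congr 1
    rcases eq_or_lt_of_le (Real.sqrt_nonneg (p^2+q^2)) with hs0 | hs0
    · rw [← hs0]; simp
    · field_simp
  have hmem : ∀ p q : ℝ, Φ p q ∈ kBall x r
      ↔ (¬(p/n = 0 ∧ q/n = 0) ∧ qhNF (p/n) (q/n) < r^2) := by
    intro p q
    have hscaled0 : (¬(p/n = 0 ∧ q/n = 0)) ↔ ¬(p = 0 ∧ q = 0) := by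
      constructor
      · intro h hc; exact h ⟨by rw [hc.1]; simp, by rw [hc.2]; simp⟩
      · intro h hc
        exact h ⟨by field_simp at hc; simpa using hc.1, by field_simp at hc; simpa using hc.2⟩
    constructor
    · rintro ⟨hne, hdist⟩
      have hpq : ¬(p = 0 ∧ q = 0) := fun h => hne ((hΦ0iff p q).2 h)
      have hsp : 0 < Real.sqrt (p^2+q^2) := by
        rcases not_and_or.1 hpq with h | h
        · exact Real.sqrt_pos.2 (by positivity)
        · exact Real.sqrt_pos.2 (by positivity)
      refine ⟨hscaled0.2 hpq, ?_⟩
      rw [qhDist] at hdist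
      have hd2 := (Real.sqrt_lt' hr0).1 hdist
      rw [qhNF, ← hangle]
      have hlogeq : Real.log (Real.sqrt ((p/n)^2+(q/n)^2)) ^2
          = Real.log (‖x‖ / ‖Φ p q‖) ^2 := by
        rw [hsqrtscale, hnormΦ, ← hndef]
        rw [Real.log_div (ne_of_gt hsp) hnne, Real.log_div hnne (ne_of_gt hsp)]
        ring
      rw [hlogeq]
      exact hd2
    · rintro ⟨hne', hNF⟩
      have hpq : ¬(p = 0 ∧ q = 0) := hscaled0.1 hne'
      have hsp : 0 < Real.sqrt (p^2+q^2) := by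
        rcases not_and_or.1 hpq with h | h
        · exact Real.sqrt_pos.2 (by positivity)
        · exact Real.sqrt_pos.2 (by positivity)
      refine ⟨fun h => hpq ((hΦ0iff p q).1 h), ?_⟩
      rw [qhDist]
      rw [Real.sqrt_lt' hr0]
      rw [qhNF, ← hangle] at hNF
      have hlogeq : Real.log (Real.sqrt ((p/n)^2+(q/n)^2)) ^2
          = Real.log (‖x‖ / ‖Φ p q‖) ^2 := by
        rw [hsqrtscale, hnormΦ, ← hndef]
        rw [Real.log_div (ne_of_gt hsp) hnne, Real.log_div hnne (ne_of_gt hsp)]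
        ring
      rw [hlogeq] at hNF
      exact hNF
  -- the horizontal sections
  set S : ℝ → Set ℝ := fun q => {p | Φ p q ∈ kBall x r} with hS
  set K : ℝ := n * Real.exp r with hKdef
  have hKpos : 0 < K := by positivity
  have hSbdd : ∀ q, S q ⊆ Ioo (-K) K := by
    intro q p hp
    rw [hS, Set.mem_setOf_eq, hmem] at hp
    have := qhNF_bound hr0 hp.1 hp.2
    rw [abs_div, abs_of_pos hn] at this
    have habs : |p| < K := by
      rw [hKdef]
      calc |p| = n * (|p|/n) := by field_simp
      _ < n * Real.exp r := by
        apply mul_lt_mul_of_pos_left this hn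
    exact ⟨by linarith [abs_lt.1 habs |>.1], by linarith [abs_lt.1 habs |>.2]⟩
  have hSbddBelow : ∀ q, BddBelow (S q) := fun q => ⟨-K, fun y hy => le_of_lt (hSbdd q hy).1⟩
  have hSbddAbove : ∀ q, BddAbove (S q) := fun q => ⟨K, fun y hy => le_of_lt (hSbdd q hy).2⟩
  have hSopen : ∀ q, IsOpen (S q) := by
    intro q
    rcases eq_or_ne q 0 with rfl | hq
    · have : S 0 = Ioo (n * Real.exp (-r)) (n * Real.exp r) := by
        ext p
        rw [hS, Set.mem_setOf_eq, hmem]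
        rw [show (0:ℝ)/n = 0 by simp]
        rw [qhNF_zero_iff hr0 hrpi]
        rw [Set.mem_Ioo, Set.mem_Ioo, lt_div_iff₀ hn, div_lt_iff₀ hn]
        constructor
        · rintro ⟨ha, hb⟩; exact ⟨by nlinarith, by nlinarith⟩
        · rintro ⟨ha, hb⟩; exact ⟨by nlinarith, by nlinarith⟩
      rw [this]; exact isOpen_Ioo
    · have hq' : |q| / n > 0 := by positivity
      have : S q = (fun p => qhF (|q|/n) (p/n)) ⁻¹' (Iio (r^2)) := by
        ext p
        rw [hS, Set.mem_setOf_eq, hmem]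
        have hqn : q / n ≠ 0 := by positivity
        rw [qhNF_eq_qhF hqn]
        rw [show |q/n| = |q|/n by rw [abs_div, abs_of_pos hn]]
        simp only [Set.mem_preimage, Set.mem_Iio]
        constructor
        · exact fun h => h.2
        · exact fun h => ⟨fun hc => hqn hc.2, h⟩
      rw [this]
      exact IsOpen.preimage (by
        exact (continuous_qhF hq').comp (continuous_id.div_const n)) isOpen_Iio
  have hSconv : ∀ q p1 p2 p3, p1 ∈ S q → p3 ∈ S q → p1 ≤ p2 → p2 ≤ p3 → p2 ∈ S q := by
    intro q p1 p2 p3 h1 h3 h12 h23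
    rw [hS, Set.mem_setOf_eq, hmem] at h1 h3 ⊢
    exact qh_conv_coords hlam hW hr0 hr
      (by gcongr) (by gcongr) h1 h3
  -- endpoints facts
  have hopen_mem : ∀ q p, p ∈ S q → ∃ ε > 0, p - ε ∈ S q ∧ p + ε ∈ S q := by
    intro q p hp
    obtain ⟨ε, hε, hball⟩ := Metric.isOpen_iff.1 (hSopen q) p hp
    refine ⟨ε/2, by linarith, ?_, ?_⟩
    · apply hball
      rw [Metric.mem_ball, Real.dist_eq]
      rw [show p - ε/2 - p = -(ε/2) by ring, abs_neg, abs_of_pos (by linarith)]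
      linarith
    · apply hball
      rw [Metric.mem_ball, Real.dist_eq]
      rw [show p + ε/2 - p = ε/2 by ring, abs_of_pos (by linarith)]
      linarith
  have hInf_lt : ∀ q p, p ∈ S q → sInf (S q) < p := by
    intro q p hp
    obtain ⟨ε, hε, hm, _⟩ := hopen_mem q p hp
    have := csInf_le (hSbddBelow q) hm
    linarith
  have hlt_Sup : ∀ q p, p ∈ S q → p < sSup (S q) := by
    intro q p hp
    obtain ⟨ε, hε, _, hm⟩ := hopen_mem q p hp
    have := le_csSup (hSbddAbove q) hm
    linarith
  have hInfSup : ∀ q, (S q).Nonempty → sInf (S q) < sSup (S q) := by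
    rintro q ⟨p, hp⟩
    exact lt_trans (hInf_lt q p hp) (hlt_Sup q p hp)
  -- the half-line families
  set Lset : ℝ → Set (EuclideanSpace ℝ (Fin 2)) :=
    fun q => {w | ∃ p, p ≤ sInf (S q) ∧ w = Φ p q} with hLset
  set Rset : ℝ → Set (EuclideanSpace ℝ (Fin 2)) :=
    fun q => {w | ∃ p, sSup (S q) ≤ p ∧ w = Φ p q} with hRset
  set Oset : ℝ → Set (EuclideanSpace ℝ (Fin 2)) :=
    fun q => {w | ∃ p, 0 < p ∧ w = Φ p q} with hOset
  set 𝒞 : Set (Set (EuclideanSpace ℝ (Fin 2))) :=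
    {C | ∃ q, ((S q).Nonempty ∧ (C = Lset q ∨ C = Rset q))
      ∨ (¬(S q).Nonempty ∧ (C = Lset q ∨ C = Oset q))} with h𝒞
  have hene' : -e ≠ 0 := neg_ne_zero.2 hene
  have hLhalf : ∀ q, IsHalfLine (Lset q) := by
    intro q
    refine ⟨Φ (sInf (S q)) q, -e, hene', Or.inr ?_⟩
    ext w
    simp only [hLset, Set.mem_setOf_eq]
    constructor
    · rintro ⟨p, hp, rfl⟩
      exact ⟨sInf (S q) - p, by linarith, by rw [hΦ]; simp only; module⟩
    · rintro ⟨t, ht, rfl⟩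
      exact ⟨sInf (S q) - t, by linarith, by rw [hΦ]; simp only; module⟩
  have hRhalf : ∀ q, IsHalfLine (Rset q) := by
    intro q
    refine ⟨Φ (sSup (S q)) q, e, hene, Or.inr ?_⟩
    ext w
    simp only [hRset, Set.mem_setOf_eq]
    constructor
    · rintro ⟨p, hp, rfl⟩
      exact ⟨p - sSup (S q), by linarith, by rw [hΦ]; simp only; module⟩
    · rintro ⟨t, ht, rfl⟩
      exact ⟨sSup (S q) + t, by linarith, by rw [hΦ]; simp only; module⟩
  have hOhalf : ∀ q, IsHalfLine (Oset q) := by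
    intro q
    refine ⟨Φ 0 q, e, hene, Or.inl ?_⟩
    ext w
    simp only [hOset, Set.mem_setOf_eq]
    constructor
    · rintro ⟨p, hp, rfl⟩
      exact ⟨p, hp, by rw [hΦ]; simp only; module⟩
    · rintro ⟨t, ht, rfl⟩
      exact ⟨t, ht, by rw [hΦ]; simp only; module⟩
  -- complement inclusion
  have hSmem : ∀ p q, p ∈ S q ↔ Φ p q ∈ kBall x r := by
    intro p q; rw [hS]; rfl
  have hLsub : ∀ q, ∀ w ∈ Lset q, w ∉ kBall x r := by
    rintro q w ⟨p, hp, rfl⟩ hmem'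
    have hpS : p ∈ S q := (hSmem p q).2 hmem'
    linarith [hInf_lt q p hpS]
  have hRsub : ∀ q, ∀ w ∈ Rset q, w ∉ kBall x r := by
    rintro q w ⟨p, hp, rfl⟩ hmem'
    have hpS : p ∈ S q := (hSmem p q).2 hmem'
    linarith [hlt_Sup q p hpS]
  have hOsub : ∀ q, ¬(S q).Nonempty → ∀ w ∈ Oset q, w ∉ kBall x r := by
    rintro q hne w ⟨p, hp, rfl⟩ hmem'
    exact hne ⟨p, (hSmem p q).2 hmem'⟩
  have hqcmem : ∀ q C, (C = Lset q ∨ C = Rset q ∨ C = Oset q) → ∀ w ∈ C, qc w = q := by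
    intro q C hC w hw
    rcases hC with rfl | rfl | rfl <;> obtain ⟨p, _, rfl⟩ := hw <;> exact hqcΦ p q
  refine ⟨𝒞, ?_, ?_, ?_⟩
  · rintro C ⟨q, hq⟩
    rcases hq with ⟨_, hC | hC⟩ | ⟨_, hC | hC⟩ <;> subst hC
    · exact hLhalf q
    · exact hRhalf q
    · exact hLhalf q
    · exact hOhalf q
  · -- pairwise disjoint
    rintro C1 ⟨q1, hq1⟩ C2 ⟨q2, hq2⟩ hne12
    rcases eq_or_ne q1 q2 with rfl | hqq
    · have hLR : (S q1).Nonempty → Disjoint (Lset q1) (Rset q1) := by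
        intro hne
        rw [Set.disjoint_left]
        rintro w ⟨p, hp, rfl⟩ ⟨p', hp', heq⟩
        have hpp : p = p' := by
          have h1 := hpcΦ p q1
          have h2 := hpcΦ p' q1
          rw [heq] at h1
          rw [h1] at h2
          exact h2
        rw [hpp] at hp
        linarith [hInfSup q1 hne]
      have hLO : ¬(S q1).Nonempty → Disjoint (Lset q1) (Oset q1) := by
        intro hne
        rw [Set.disjoint_left]
        rintro w ⟨p, hp, rfl⟩ ⟨p', hp', heq⟩
        have hpp : p = p' := by
          have h1 := hpcΦ p q1
          have h2 := hpcΦ p' q1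
          rw [heq] at h1
          rw [h1] at h2
          exact h2
        rw [Set.not_nonempty_iff_eq_empty.1 hne, Real.sInf_empty] at hp
        rw [hpp] at hp
        linarith
      rcases hq1 with ⟨hne, h1 | h1⟩ | ⟨hne, h1 | h1⟩ <;>
        rcases hq2 with ⟨hne', h2 | h2⟩ | ⟨hne', h2 | h2⟩ <;>
          subst h1 <;> first
          | exact absurd rfl hne12
          | exact absurd hne hne'
          | exact absurd hne' hne
          | (subst h2; first
              | exact absurd rfl hne12
              | exact hLR hne
              | exact (hLR hne').symm
              | exact hLO hne
              | exact (hLO hne').symm)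
    · rw [Set.disjoint_left]
      intro w hw1 hw2
      have hor1 : C1 = Lset q1 ∨ C1 = Rset q1 ∨ C1 = Oset q1 := by tauto
      have hor2 : C2 = Lset q2 ∨ C2 = Rset q2 ∨ C2 = Oset q2 := by tauto
      have e1 := hqcmem q1 C1 hor1 w hw1
      have e2 := hqcmem q2 C2 hor2 w hw2
      rw [e1] at e2
      exact hqq e2
  · -- union is the complement
    apply Set.eq_of_subset_of_subset
    · rintro w ⟨C, ⟨q, hq⟩, hwC⟩
      rw [Set.mem_compl_iff]
      rcases hq with ⟨hne, h | h⟩ | ⟨hne, h | h⟩ <;> subst h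
      · exact hLsub q w hwC
      · exact hRsub q w hwC
      · exact hLsub q w hwC
      · exact hOsub q hne w hwC
    · intro w hw
      rw [Set.mem_compl_iff] at hw
      have hrec := hrecon w
      have hpnot : pc w ∉ S (qc w) := by
        intro hmem'
        exact hw (by rw [← hrec]; exact (hSmem _ _).1 hmem')
      by_cases hne : (S (qc w)).Nonempty
      · have halt : pc w ≤ sInf (S (qc w)) ∨ sSup (S (qc w)) ≤ pc w := by
          by_contra hcon
          push_neg at hcon
          obtain ⟨p1, hp1S, hp1lt⟩ := exists_lt_of_csInf_lt hne hcon.1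
          obtain ⟨p3, hp3S, hp3gt⟩ := exists_lt_of_lt_csSup hne hcon.2
          exact hpnot (hSconv (qc w) p1 (pc w) p3 hp1S hp3S (le_of_lt hp1lt) (le_of_lt hp3gt))
        rcases halt with h | h
        · exact ⟨Lset (qc w), ⟨qc w, Or.inl ⟨hne, Or.inl rfl⟩⟩, ⟨pc w, h, hrec.symm⟩⟩
        · exact ⟨Rset (qc w), ⟨qc w, Or.inl ⟨hne, Or.inr rfl⟩⟩, ⟨pc w, h, hrec.symm⟩⟩
      · rcases le_or_gt (pc w) 0 with h | h
        · refine ⟨Lset (qc w), ⟨qc w, Or.inr ⟨hne, Or.inl rfl⟩⟩, ⟨pc w, ?_, hrec.symm⟩⟩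
          rw [Set.not_nonempty_iff_eq_empty.1 hne, Real.sInf_empty]
          exact h
        · exact ⟨Oset (qc w), ⟨qc w, Or.inr ⟨hne, Or.inr rfl⟩⟩, ⟨pc w, h, hrec.symm⟩⟩
end

section
/- Let n ≥ 2, let G = ℝⁿ \ {0}, let x ∈ G and let 0 < r ≤ λ. Then the quasihyperbolic ball B_k(x,r) is close-to-convex. -/
open Real Set

namespace KlenCore

/-- The key pointwise lemma: `0 ≤ t + lam * cos t` on `[π/2, π]`. -/
lemma key_pt (lam : ℝ) (hlam : lam ∈ Set.Ioo 2 Real.pi)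
    (hlam0 : Real.cos (Real.sqrt (lam ^ 2 - 1))
      + Real.sqrt (lam ^ 2 - 1) * Real.sin (Real.sqrt (lam ^ 2 - 1)) = 0)
    {t : ℝ} (ht1 : π/2 ≤ t) (ht2 : t ≤ π) : 0 ≤ t + lam * Real.cos t := by
  obtain ⟨hlam2, hlampi⟩ := hlam
  have hlampos : (0:ℝ) < lam := by linarith
  set a := Real.sqrt (lam ^ 2 - 1) with ha
  have ha2 : a ^ 2 = lam ^ 2 - 1 := Real.sq_sqrt (by nlinarith)
  have hpig : (3.141592:ℝ) < π := by have := Real.pi_gt_d6; linarith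
  have hpil : π < 3.15 := Real.pi_lt_d2
  have hanneg : 0 ≤ a := Real.sqrt_nonneg _
  have hapos : 0 < a := by nlinarith
  have haltpi : a < π := by nlinarith
  have hagt : π/2 < a := by nlinarith
  have hsinpos : 0 < Real.sin a := Real.sin_pos_of_pos_of_lt_pi hapos haltpi
  have hpyth : Real.sin a ^ 2 + Real.cos a ^ 2 = 1 := Real.sin_sq_add_cos_sq a
  have hcos : Real.cos a = -a * Real.sin a := by linarith
  have hc2 : Real.cos a ^ 2 = a ^ 2 * Real.sin a ^ 2 := by rw [hcos]; ring
  have hsin : Real.sin a = 1 / lam := by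
    have hl2 : lam ^ 2 = a ^ 2 + 1 := by linarith
    have h1 : Real.sin a ^ 2 * lam ^ 2 = 1 := by
      rw [hl2]; linear_combination hpyth - hc2
    have h2 : 0 < Real.sin a * lam := by positivity
    have h3 : (Real.sin a * lam - 1) * (Real.sin a * lam + 1) = 0 := by
      linear_combination h1
    rcases mul_eq_zero.1 h3 with h4 | h4
    · field_simp; linarith
    · nlinarith
  have hcos' : Real.cos a = -(a / lam) := by
    rw [hcos, hsin]; field_simp
  -- K t := cos t - cos a + (t - a) * sin a  is ≥ 0 on [π/2, π]
  set K : ℝ → ℝ := fun s => Real.cos s - Real.cos a + (s - a) * Real.sin a with hK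
  have hKderiv : ∀ s : ℝ, HasDerivAt K (-Real.sin s + Real.sin a) s := by
    intro s
    have h1 : HasDerivAt (fun s : ℝ => Real.cos s - Real.cos a) (-Real.sin s) s :=
      (Real.hasDerivAt_cos s).sub_const _
    have h2 : HasDerivAt (fun s : ℝ => (s - a) * Real.sin a) (Real.sin a) s := by
      simpa using ((hasDerivAt_id s).sub_const a).mul_const (Real.sin a)
    exact h1.add h2
  have hsin_anti : ∀ s₁ s₂ : ℝ, π/2 ≤ s₁ → s₁ ≤ s₂ → s₂ ≤ π →
      Real.sin s₂ ≤ Real.sin s₁ := by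
    intro s₁ s₂ h1 h2 h3
    rw [← Real.cos_sub_pi_div_two s₁, ← Real.cos_sub_pi_div_two s₂]
    apply Real.cos_le_cos_of_nonneg_of_le_pi (by linarith) (by linarith) (by linarith)
  have hKa : K a = 0 := by simp [hK]
  have hKnonneg : 0 ≤ K t := by
    rcases le_total t a with hta | hta
    · -- K antitone on [π/2, a]
      have : AntitoneOn K (Set.Icc (π/2) a) := by
        apply antitoneOn_of_deriv_nonpos (convex_Icc _ _)
        · exact fun s _ => (hKderiv s).continuousAt.continuousWithinAt
        · intro s _
          exact (hKderiv s).differentiableAt.differentiableWithinAt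
        · intro s hs
          rw [interior_Icc] at hs
          rw [(hKderiv s).deriv]
          have := hsin_anti s a hs.1.le hs.2.le haltpi.le
          linarith
      have := this (Set.mem_Icc.2 ⟨ht1, hta⟩) (Set.mem_Icc.2 ⟨by linarith, le_refl a⟩) hta
      rw [hKa] at this; linarith
    · -- K monotone on [a, π]
      have : MonotoneOn K (Set.Icc a π) := by
        apply monotoneOn_of_deriv_nonneg (convex_Icc _ _)
        · exact fun s _ => (hKderiv s).continuousAt.continuousWithinAt
        · intro s _
          exact (hKderiv s).differentiableAt.differentiableWithinAt
        · intro s hs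
          rw [interior_Icc] at hs
          rw [(hKderiv s).deriv]
          have := hsin_anti a s hagt.le hs.1.le hs.2.le
          linarith
      have := this (Set.mem_Icc.2 ⟨le_refl a, haltpi.le⟩) (Set.mem_Icc.2 ⟨hta, ht2⟩) hta
      rw [hKa] at this; linarith
  -- t + lam * cos t = lam * K t
  have key : t + lam * Real.cos t = lam * K t := by
    simp only [hK]
    rw [hcos', hsin]
    field_simp
    ring
  rw [key]
  positivity

end KlenCore

namespace KlenCore

open Real Set

/-- The function `H(t) = -log (sin t) + √(r² - t²)` is antitone on `(0, r)`. -/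
lemma H_antitone (lam r : ℝ) (hlam : lam ∈ Set.Ioo 2 Real.pi)
    (hlam0 : Real.cos (Real.sqrt (lam ^ 2 - 1))
      + Real.sqrt (lam ^ 2 - 1) * Real.sin (Real.sqrt (lam ^ 2 - 1)) = 0)
    (hr0 : 0 < r) (hr : r ≤ lam) :
    AntitoneOn (fun t => -Real.log (Real.sin t) + Real.sqrt (r^2 - t^2)) (Set.Ioo 0 r) := by
  have hrpi : r < π := lt_of_le_of_lt hr hlam.2
  have hD : ∀ t ∈ Set.Ioo 0 r, HasDerivAt
      (fun t => -Real.log (Real.sin t) + Real.sqrt (r^2 - t^2))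
      (-(Real.cos t / Real.sin t) - t / Real.sqrt (r^2 - t^2)) t := by
    intro t ht
    have hsinpos : 0 < Real.sin t := Real.sin_pos_of_pos_of_lt_pi ht.1 (ht.2.trans hrpi)
    have hgpos : 0 < r^2 - t^2 := by nlinarith [ht.1, ht.2]
    have hsqrtpos : 0 < Real.sqrt (r^2 - t^2) := Real.sqrt_pos.2 hgpos
    have h1 : HasDerivAt (fun t => Real.log (Real.sin t)) ((Real.sin t)⁻¹ * Real.cos t) t :=
      (Real.hasDerivAt_log hsinpos.ne').comp t (Real.hasDerivAt_sin t)
    have h2 : HasDerivAt (fun s : ℝ => r^2 - s^2) (-(2*t)) t := by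
      simpa using (hasDerivAt_pow 2 t).const_sub (r^2)
    have h3 : HasDerivAt (fun s : ℝ => Real.sqrt (r^2 - s^2))
        (1 / (2 * Real.sqrt (r^2 - t^2)) * (-(2*t))) t :=
      (Real.hasDerivAt_sqrt hgpos.ne').comp t h2
    have h4 := h1.neg.add h3
    refine h4.congr_deriv ?_
    ring
  apply antitoneOn_of_deriv_nonpos (convex_Ioo _ _)
  · exact fun t ht => (hD t ht).differentiableAt.continuousAt.continuousWithinAt
  · rw [interior_Ioo]
    exact fun t ht => (hD t ht).differentiableAt.differentiableWithinAt
  · rw [interior_Ioo]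
    intro t ht
    rw [(hD t ht).deriv]
    have hsinpos : 0 < Real.sin t := Real.sin_pos_of_pos_of_lt_pi ht.1 (ht.2.trans hrpi)
    have hgpos : 0 < r^2 - t^2 := by nlinarith [ht.1, ht.2]
    have hsqrtpos : 0 < Real.sqrt (r^2 - t^2) := Real.sqrt_pos.2 hgpos
    rcases le_or_gt 0 (Real.cos t) with hcos | hcos
    · have c1 : 0 ≤ Real.cos t / Real.sin t := div_nonneg hcos hsinpos.le
      have c2 : 0 ≤ t / Real.sqrt (r^2 - t^2) := div_nonneg ht.1.le hsqrtpos.le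
      linarith
    · -- t > π/2 here
      have htpi2 : π/2 < t := by
        by_contra h
        push_neg at h
        exact absurd (Real.cos_nonneg_of_mem_Icc ⟨by linarith [ht.1], h⟩) (not_le.2 hcos)
      have hkey := key_pt lam hlam hlam0 htpi2.le (by linarith [ht.2] : t ≤ π)
      have h5 : lam * (-Real.cos t) ≤ t := by linarith
      have hlampos : (0:ℝ) < lam := by linarith [hlam.1]
      have h6 : (lam * (-Real.cos t))^2 ≤ t^2 :=
        pow_le_pow_left₀ (mul_nonneg hlampos.le (by linarith)) h5 2
      have hlam2t : (0:ℝ) ≤ lam^2 - t^2 := by nlinarith [ht.1, ht.2]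
      have hsq : Real.sqrt (lam^2 - t^2) ^ 2 = lam^2 - t^2 := Real.sq_sqrt hlam2t
      have hpyth := Real.sin_sq_add_cos_sq t
      have hsint : 0 ≤ Real.sin t := hsinpos.le
      have hB : (-Real.cos t) * Real.sqrt (lam^2 - t^2) ≤ t * Real.sin t := by
        apply le_of_pow_le_pow_left₀ two_ne_zero (mul_nonneg ht.1.le hsint)
        have expand : ((-Real.cos t) * Real.sqrt (lam^2 - t^2))^2
            = Real.cos t ^2 * (lam^2 - t^2) := by
          rw [mul_pow, hsq]; ring
        rw [expand]
        nlinarith [h6]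
      have hA : (-Real.cos t) * Real.sqrt (r^2 - t^2)
          ≤ (-Real.cos t) * Real.sqrt (lam^2 - t^2) := by
        apply mul_le_mul_of_nonneg_left _ (by linarith)
        exact Real.sqrt_le_sqrt (by nlinarith)
      have hnum : 0 ≤ Real.cos t * Real.sqrt (r^2 - t^2) + t * Real.sin t := by nlinarith
      have hfrac : 0 ≤ (Real.cos t * Real.sqrt (r^2 - t^2) + Real.sin t * t)
          / (Real.sin t * Real.sqrt (r^2 - t^2)) := by
        apply div_nonneg _ (by positivity)
        linarith
      have heq : Real.cos t / Real.sin t + t / Real.sqrt (r^2 - t^2)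
          = (Real.cos t * Real.sqrt (r^2 - t^2) + Real.sin t * t)
            / (Real.sin t * Real.sqrt (r^2 - t^2)) :=
        div_add_div _ _ hsinpos.ne' hsqrtpos.ne'
      have hfin : 0 ≤ Real.cos t / Real.sin t + t / Real.sqrt (r^2 - t^2) := by
        rw [heq]; exact hfrac
      linarith

end KlenCore

open Real Set InnerProductGeometry

namespace KlenGeom

variable {E : Type*} [NormedAddCommGroup E] [InnerProductSpace ℝ E]

noncomputable def xh (x : E) : E := ‖x‖⁻¹ • x
noncomputable def uc (x y : E) : ℝ := (inner ℝ (xh x) y : ℝ)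
noncomputable def wc (x y : E) : E := y - uc x y • xh x
noncomputable def dd (r t : ℝ) : ℝ := Real.sqrt (r ^ 2 - t ^ 2)

variable {x : E}

lemma norm_xh (hx : x ≠ 0) : ‖xh x‖ = 1 := by
  rw [xh, norm_smul, norm_inv, norm_norm, inv_mul_cancel₀ (norm_ne_zero_iff.2 hx)]

lemma inner_xh_self (hx : x ≠ 0) : (inner ℝ (xh x) (xh x) : ℝ) = 1 := by
  rw [real_inner_self_eq_norm_sq, norm_xh hx]; norm_num

lemma smul_xh (hx : x ≠ 0) : ‖x‖ • xh x = x := by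
  rw [xh, smul_smul, mul_inv_cancel₀ (norm_ne_zero_iff.2 hx), one_smul]

lemma inner_xh_wc (hx : x ≠ 0) (y : E) : (inner ℝ (xh x) (wc x y) : ℝ) = 0 := by
  rw [wc, inner_sub_right, real_inner_smul_right, inner_xh_self hx, uc]
  ring

lemma decomp (x y : E) : uc x y • xh x + wc x y = y := by
  rw [wc]; abel

lemma uc_comb (hx : x ≠ 0) (a : ℝ) (y : E) : uc x (a • xh x + wc x y) = a := by
  rw [uc, inner_add_right, real_inner_smul_right, inner_xh_self hx, inner_xh_wc hx]
  ring

lemma wc_comb (hx : x ≠ 0) (a : ℝ) (y : E) : wc x (a • xh x + wc x y) = wc x y := by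
  rw [wc, uc_comb hx]; abel

lemma norm_comb (hx : x ≠ 0) (a : ℝ) (y : E) :
    ‖a • xh x + wc x y‖ = Real.sqrt (a ^ 2 + ‖wc x y‖ ^ 2) := by
  have h2 : ‖a • xh x + wc x y‖ ^ 2 = a ^ 2 + ‖wc x y‖ ^ 2 := by
    rw [norm_add_sq_real, real_inner_smul_left, inner_xh_wc hx, norm_smul, norm_xh hx]
    simp [mul_pow, sq_abs]
  rw [← h2, Real.sqrt_sq (norm_nonneg _)]

lemma inner_x_comb (hx : x ≠ 0) (a : ℝ) (y : E) :
    (inner ℝ x (a • xh x + wc x y) : ℝ) = ‖x‖ * a := by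
  nth_rewrite 1 [← smul_xh hx]
  rw [real_inner_smul_left, inner_add_right, real_inner_smul_right, inner_xh_self hx,
    inner_xh_wc hx]
  ring

lemma angle_comb (hx : x ≠ 0) (a : ℝ) (y : E) :
    angle x (a • xh x + wc x y) = Real.arccos (a / Real.sqrt (a ^ 2 + ‖wc x y‖ ^ 2)) := by
  rw [angle, inner_x_comb hx, norm_comb hx,
    mul_div_mul_left _ _ (norm_ne_zero_iff.2 hx)]

lemma uc_smul (x : E) (c : ℝ) (y : E) : uc x (c • y) = c * uc x y := by
  rw [uc, uc, real_inner_smul_right]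

lemma wc_smul (x : E) (c : ℝ) (y : E) : wc x (c • y) = c • wc x y := by
  rw [wc, wc, uc_smul, smul_sub, mul_smul]

lemma uc_x (hx : x ≠ 0) : uc x x = ‖x‖ := by
  rw [uc, xh, real_inner_smul_left, real_inner_self_eq_norm_mul_norm]
  field_simp

lemma wc_x (hx : x ≠ 0) : wc x x = 0 := by
  rw [wc, uc_x hx, smul_xh hx, sub_self]

lemma wc_smul_x (hx : x ≠ 0) (t : ℝ) : wc x (t • x) = 0 := by
  rw [wc_smul, wc_x hx, smul_zero]

lemma axis_eq (hx : x ≠ 0) {y : E} (hw : wc x y = 0) : y = (uc x y / ‖x‖) • x := by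
  have h := decomp x y
  rw [hw, add_zero] at h
  calc y = uc x y • xh x := h.symm
    _ = (uc x y / ‖x‖) • x := by rw [xh, smul_smul, div_eq_mul_inv]

/-- monotonicity of `a ↦ a / √(a² + v²)` -/
lemma div_sqrt_mono {v a' a : ℝ} (hv : 0 < v) (h : a' ≤ a) :
    a' / Real.sqrt (a' ^ 2 + v ^ 2) ≤ a / Real.sqrt (a ^ 2 + v ^ 2) := by
  have hρ' : 0 < Real.sqrt (a' ^ 2 + v ^ 2) := Real.sqrt_pos.2 (by positivity)
  have hρ : 0 < Real.sqrt (a ^ 2 + v ^ 2) := Real.sqrt_pos.2 (by positivity)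
  have hsq' : Real.sqrt (a' ^ 2 + v ^ 2) ^ 2 = a' ^ 2 + v ^ 2 :=
    Real.sq_sqrt (by positivity)
  have hsq : Real.sqrt (a ^ 2 + v ^ 2) ^ 2 = a ^ 2 + v ^ 2 :=
    Real.sq_sqrt (by positivity)
  rw [div_le_div_iff₀ hρ' hρ]
  rcases le_or_gt a' 0 with ha' | ha'
  · rcases le_or_gt 0 a with ha | ha
    · calc a' * Real.sqrt (a ^ 2 + v ^ 2) ≤ 0 := mul_nonpos_of_nonpos_of_nonneg ha' hρ.le
        _ ≤ a * Real.sqrt (a' ^ 2 + v ^ 2) := mul_nonneg ha hρ'.le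
    · have key : (-a) * Real.sqrt (a' ^ 2 + v ^ 2) ≤ (-a') * Real.sqrt (a ^ 2 + v ^ 2) := by
        apply le_of_pow_le_pow_left₀ two_ne_zero
          (mul_nonneg (by linarith) hρ.le)
        rw [mul_pow, mul_pow, hsq, hsq']
        have hsq2 : a ^ 2 ≤ a' ^ 2 := by nlinarith
        nlinarith [mul_le_mul_of_nonneg_right hsq2 (sq_nonneg v)]
      linarith
  · have ha : 0 < a := lt_of_lt_of_le ha' h
    apply le_of_pow_le_pow_left₀ two_ne_zero (mul_nonneg ha.le hρ'.le)
    rw [mul_pow, mul_pow, hsq, hsq']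
    have hsq2 : a' ^ 2 ≤ a ^ 2 := by nlinarith
    nlinarith [mul_le_mul_of_nonneg_right hsq2 (sq_nonneg v)]

end KlenGeom

namespace KlenGeom

variable {E : Type*} [NormedAddCommGroup E] [InnerProductSpace ℝ E] {x : E} {r : ℝ}

/-- The "rest" region: complement of the ball minus the outer radial region. -/
def Rest (x : E) (r : ℝ) : Set E :=
  {p | r ≤ angle x p ∨ Real.log (‖p‖ / ‖x‖) ≤ -dd r (angle x p)}

/-- Slice of `Rest` along the horizontal line through `y`. -/
noncomputable def Ssl (x : E) (r : ℝ) (y : E) : Set ℝ :=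
  {a | a • xh x + wc x y ∈ Rest x r}

lemma slice_angle_pos {v a : ℝ} (hv : 0 < v) :
    0 < Real.arccos (a / Real.sqrt (a ^ 2 + v ^ 2)) := by
  have hρ : 0 < Real.sqrt (a ^ 2 + v ^ 2) := Real.sqrt_pos.2 (by positivity)
  apply Real.arccos_pos.2
  rw [div_lt_one hρ]
  calc a ≤ |a| := le_abs_self a
    _ = Real.sqrt (a ^ 2) := (Real.sqrt_sq_eq_abs a).symm
    _ < Real.sqrt (a ^ 2 + v ^ 2) := Real.sqrt_lt_sqrt (sq_nonneg a) (by nlinarith)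

lemma slice_angle_lt_pi {v a : ℝ} (hv : 0 < v) :
    Real.arccos (a / Real.sqrt (a ^ 2 + v ^ 2)) < π := by
  have hρ : 0 < Real.sqrt (a ^ 2 + v ^ 2) := Real.sqrt_pos.2 (by positivity)
  apply lt_of_le_of_ne (Real.arccos_le_pi _)
  intro hpi
  have h1 : a / Real.sqrt (a ^ 2 + v ^ 2) ≤ -1 := Real.arccos_eq_pi.1 hpi
  have h2 : -Real.sqrt (a ^ 2 + v ^ 2) < a := by
    have : -a ≤ |a| := neg_le_abs a
    have habs : |a| = Real.sqrt (a ^ 2) := (Real.sqrt_sq_eq_abs a).symm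
    have : Real.sqrt (a ^ 2) < Real.sqrt (a ^ 2 + v ^ 2) :=
      Real.sqrt_lt_sqrt (sq_nonneg a) (by nlinarith)
    linarith
  rw [div_le_iff₀ hρ] at h1
  linarith

lemma slice_sin {v a : ℝ} (hv : 0 < v) :
    Real.sin (Real.arccos (a / Real.sqrt (a ^ 2 + v ^ 2)))
      = v / Real.sqrt (a ^ 2 + v ^ 2) := by
  have hρpos : 0 < Real.sqrt (a ^ 2 + v ^ 2) := Real.sqrt_pos.2 (by positivity)
  have hsq : Real.sqrt (a ^ 2 + v ^ 2) ^ 2 = a ^ 2 + v ^ 2 := Real.sq_sqrt (by positivity)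
  rw [Real.sin_arccos]
  have h1 : 1 - (a / Real.sqrt (a ^ 2 + v ^ 2)) ^ 2 = (v / Real.sqrt (a ^ 2 + v ^ 2)) ^ 2 := by
    rw [div_pow, div_pow, hsq]
    field_simp
    ring
  rw [h1, Real.sqrt_sq (by positivity)]

lemma arccos_antitone {q q' : ℝ} (h : q ≤ q') : Real.arccos q' ≤ Real.arccos q := by
  rw [Real.arccos_eq_pi_div_two_sub_arcsin, Real.arccos_eq_pi_div_two_sub_arcsin]
  have := Real.monotone_arcsin h
  linarith

/-- Core step: the slice set is a lower set. -/
lemma Ssl_lower (hx : x ≠ 0) {y : E} (hw : wc x y ≠ 0) (hr0 : 0 < r) (hrpi : r < π)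
    (hH : AntitoneOn (fun t => -Real.log (Real.sin t) + Real.sqrt (r ^ 2 - t ^ 2))
      (Set.Ioo 0 r))
    {a' a : ℝ} (h : a' ≤ a) (ha : a ∈ Ssl x r y) : a' ∈ Ssl x r y := by
  have hm : (0:ℝ) < ‖x‖ := norm_pos_iff.2 hx
  set v : ℝ := ‖wc x y‖ with hvdef
  have hv : 0 < v := norm_pos_iff.2 hw
  by_cases hθ' : r ≤ angle x (a' • xh x + wc x y)
  · exact Or.inl hθ'
  push_neg at hθ'
  right
  rw [angle_comb hx] at hθ' ⊢
  rw [norm_comb hx]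
  set θ' : ℝ := Real.arccos (a' / Real.sqrt (a' ^ 2 + v ^ 2)) with hθ'def
  set θa : ℝ := Real.arccos (a / Real.sqrt (a ^ 2 + v ^ 2)) with hθadef
  have hmono : θa ≤ θ' := arccos_antitone (div_sqrt_mono hv h)
  have hθalt : θa < r := lt_of_le_of_lt hmono hθ'
  have hin : θa ∈ Set.Ioo 0 r := ⟨slice_angle_pos hv, hθalt⟩
  have hin' : θ' ∈ Set.Ioo 0 r := ⟨slice_angle_pos hv, hθ'⟩
  -- extract the log condition at a
  have ha2 : Real.log (‖a • xh x + wc x y‖ / ‖x‖) ≤ -dd r (angle x (a • xh x + wc x y)) := by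
    rcases ha with h1 | h2
    · exfalso
      rw [angle_comb hx] at h1
      exact absurd h1 (not_le.2 hθalt)
    · exact h2
  rw [angle_comb hx, norm_comb hx] at ha2
  -- convert to H-form
  have hρ : ∀ b : ℝ, (0:ℝ) < Real.sqrt (b ^ 2 + v ^ 2) := fun b =>
    Real.sqrt_pos.2 (by positivity)
  have hlogρ : ∀ b : ℝ, Real.log (Real.sqrt (b ^ 2 + v ^ 2))
      = Real.log v - Real.log (Real.sin (Real.arccos (b / Real.sqrt (b ^ 2 + v ^ 2)))) := by
    intro b
    rw [slice_sin hv, Real.log_div (ne_of_gt hv) (ne_of_gt (hρ b))]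
    ring
  have key : ∀ b : ℝ, Real.log (Real.sqrt (b ^ 2 + v ^ 2) / ‖x‖)
      = Real.log v - Real.log ‖x‖
        - Real.log (Real.sin (Real.arccos (b / Real.sqrt (b ^ 2 + v ^ 2)))) := by
    intro b
    rw [Real.log_div (ne_of_gt (hρ b)) (ne_of_gt hm), hlogρ b]
    ring
  rw [key] at ha2 ⊢
  have hHle := hH hin hin' hmono
  simp only at hHle
  rw [dd] at ha2 ⊢
  rw [← hθ'def, ← hθadef] at *
  linarith [hHle]

lemma Ssl_bddAbove (hx : x ≠ 0) {y : E} (hw : wc x y ≠ 0) (hr0 : 0 < r) (hrpi : r < π) :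
    BddAbove (Ssl x r y) := by
  have hm : (0:ℝ) < ‖x‖ := norm_pos_iff.2 hx
  set v : ℝ := ‖wc x y‖ with hvdef
  have hv : 0 < v := norm_pos_iff.2 hw
  have hsinr : 0 < Real.sin r := Real.sin_pos_of_pos_of_lt_pi hr0 hrpi
  refine ⟨max ‖x‖ (v / Real.sin r), ?_⟩
  intro a ha
  have hρpos : 0 < Real.sqrt (a ^ 2 + v ^ 2) := Real.sqrt_pos.2 (by positivity)
  have hsq : Real.sqrt (a ^ 2 + v ^ 2) ^ 2 = a ^ 2 + v ^ 2 := Real.sq_sqrt (by positivity)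
  have haρ : a ≤ Real.sqrt (a ^ 2 + v ^ 2) := by
    calc a ≤ |a| := le_abs_self a
      _ = Real.sqrt (a ^ 2) := (Real.sqrt_sq_eq_abs a).symm
      _ ≤ Real.sqrt (a ^ 2 + v ^ 2) := Real.sqrt_le_sqrt (by nlinarith)
  have hmaρ : -Real.sqrt (a ^ 2 + v ^ 2) ≤ a := by
    have : -a ≤ |a| := neg_le_abs a
    have h2 : |a| ≤ Real.sqrt (a ^ 2 + v ^ 2) := by
      rw [← Real.sqrt_sq_eq_abs]
      exact Real.sqrt_le_sqrt (by nlinarith)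
    linarith
  rcases ha with h1 | h2
  · -- angle condition: r ≤ θ ⇒ a/ρ ≤ cos r ⇒ a ≤ v / sin r
    rw [angle_comb hx] at h1
    set q : ℝ := a / Real.sqrt (a ^ 2 + v ^ 2) with hqdef
    have hq1 : q ≤ 1 := by rw [hqdef, div_le_one hρpos]; exact haρ
    have hqm1 : -1 ≤ q := by
      rw [hqdef, le_div_iff₀ hρpos]
      nlinarith
    have hcosθ : Real.cos (Real.arccos q) = q := Real.cos_arccos hqm1 hq1
    have hle : q ≤ Real.cos r := by
      have := Real.cos_le_cos_of_nonneg_of_le_pi hr0.le (Real.arccos_le_pi q) h1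
      rw [hcosθ] at this
      exact this
    have haa : a ≤ Real.sqrt (a ^ 2 + v ^ 2) * Real.cos r := by
      rw [hqdef, div_le_iff₀ hρpos] at hle
      linarith [hle]
    rcases le_or_gt a 0 with ha0 | ha0
    · exact le_max_of_le_left (by linarith)
    · have hcosrpos : 0 < Real.cos r := by
        by_contra hc
        push_neg at hc
        nlinarith
      apply le_max_of_le_right
      rw [le_div_iff₀ hsinr]
      have h3 : (a * Real.sin r) ^ 2 ≤ v ^ 2 := by
        have h4 : a ^ 2 ≤ (a ^ 2 + v ^ 2) * Real.cos r ^ 2 := by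
          have := pow_le_pow_left₀ ha0.le haa 2
          rw [mul_pow, hsq] at this
          linarith
        have hpyth := Real.sin_sq_add_cos_sq r
        have hcos1 : Real.cos r ^ 2 ≤ 1 := by nlinarith
        nlinarith
      have := le_of_pow_le_pow_left₀ two_ne_zero hv.le h3
      linarith
  · -- log condition: ρ ≤ ‖x‖
    rw [norm_comb hx] at h2
    have hdd0 : 0 ≤ dd r (angle x (a • xh x + wc x y)) := Real.sqrt_nonneg _
    have hlog : Real.log (Real.sqrt (a ^ 2 + v ^ 2) / ‖x‖) ≤ 0 := by linarith
    have hρm : Real.sqrt (a ^ 2 + v ^ 2) ≤ ‖x‖ := by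
      by_contra hcon
      push_neg at hcon
      have : 0 < Real.log (Real.sqrt (a ^ 2 + v ^ 2) / ‖x‖) :=
        Real.log_pos (by rw [lt_div_iff₀ hm] at *; linarith)
      linarith
    exact le_max_of_le_left (le_trans haρ hρm)

lemma Ssl_closed (hx : x ≠ 0) {y : E} (hw : wc x y ≠ 0) : IsClosed (Ssl x r y) := by
  have hm : (0:ℝ) < ‖x‖ := norm_pos_iff.2 hx
  set v : ℝ := ‖wc x y‖ with hvdef
  have hv : 0 < v := norm_pos_iff.2 hw
  have hρpos : ∀ a : ℝ, 0 < Real.sqrt (a ^ 2 + v ^ 2) := fun a =>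
    Real.sqrt_pos.2 (by positivity)
  have hset : Ssl x r y
      = {a : ℝ | r ≤ Real.arccos (a / Real.sqrt (a ^ 2 + v ^ 2))}
        ∪ {a : ℝ | Real.log (Real.sqrt (a ^ 2 + v ^ 2) / ‖x‖)
            + dd r (Real.arccos (a / Real.sqrt (a ^ 2 + v ^ 2))) ≤ 0} := by
    ext a
    simp only [Ssl, Rest, Set.mem_setOf_eq, Set.mem_union]
    rw [angle_comb hx, norm_comb hx]
    constructor
    · rintro (h | h)
      · exact Or.inl h
      · exact Or.inr (by linarith)
    · rintro (h | h)
      · exact Or.inl h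
      · exact Or.inr (by linarith)
  rw [hset]
  have hcρ : Continuous fun a : ℝ => Real.sqrt (a ^ 2 + v ^ 2) :=
    Real.continuous_sqrt.comp ((continuous_pow 2).add continuous_const)
  have hcq : Continuous fun a : ℝ => a / Real.sqrt (a ^ 2 + v ^ 2) :=
    continuous_id.div hcρ fun a => (hρpos a).ne'
  have hcθ : Continuous fun a : ℝ => Real.arccos (a / Real.sqrt (a ^ 2 + v ^ 2)) :=
    Real.continuous_arccos.comp hcq
  have hclog : Continuous fun a : ℝ => Real.log (Real.sqrt (a ^ 2 + v ^ 2) / ‖x‖) := by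
    apply Continuous.log (hcρ.div_const _)
    intro a
    positivity
  have hcdd : Continuous fun a : ℝ =>
      dd r (Real.arccos (a / Real.sqrt (a ^ 2 + v ^ 2))) := by
    simp only [dd]
    exact Real.continuous_sqrt.comp (continuous_const.sub (hcθ.pow 2))
  exact IsClosed.union (isClosed_le continuous_const hcθ)
    (isClosed_le (hclog.add hcdd) continuous_const)

lemma Ssl_eq_Iic (hx : x ≠ 0) {y : E} (hw : wc x y ≠ 0) (hr0 : 0 < r) (hrpi : r < π)
    (hH : AntitoneOn (fun t => -Real.log (Real.sin t) + Real.sqrt (r ^ 2 - t ^ 2))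
      (Set.Ioo 0 r))
    (hy : y ∈ Rest x r) : Ssl x r y = Set.Iic (sSup (Ssl x r y)) := by
  have hne : (Ssl x r y).Nonempty := by
    refine ⟨uc x y, ?_⟩
    simp only [Ssl, Set.mem_setOf_eq, decomp]
    exact hy
  have hbdd := Ssl_bddAbove hx hw hr0 hrpi
  ext a
  simp only [Set.mem_Iic]
  constructor
  · intro ha
    exact le_csSup hbdd ha
  · intro ha
    have hmem : sSup (Ssl x r y) ∈ Ssl x r y :=
      (Ssl_closed hx hw).csSup_mem hne hbdd
    exact Ssl_lower hx hw hr0 hrpi hH ha hmem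

/-- complement of the quasihyperbolic ball -/
def CompC (x : E) (r : ℝ) : Set E := {y | y = 0 ∨ r ≤ qhDist x y}

lemma compl_kBall (x : E) (r : ℝ) : (kBall x r)ᶜ = CompC x r := by
  ext y
  simp only [kBall, CompC, Set.mem_compl_iff, Set.mem_setOf_eq, not_and_or, not_not, not_lt]

lemma qh_eq (hx : x ≠ 0) {y : E} (hy : y ≠ 0) :
    qhDist x y = Real.sqrt ((angle x y) ^ 2 + (Real.log (‖y‖ / ‖x‖)) ^ 2) := by
  have h1 : Real.log (‖x‖ / ‖y‖) = -Real.log (‖y‖ / ‖x‖) := by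
    rw [Real.log_div (norm_ne_zero_iff.2 hx) (norm_ne_zero_iff.2 hy),
      Real.log_div (norm_ne_zero_iff.2 hy) (norm_ne_zero_iff.2 hx)]
    ring
  rw [qhDist, h1]
  ring_nf

lemma mem_CompC_of_sq (hx : x ≠ 0) {y : E} (hy : y ≠ 0) (hr0 : 0 ≤ r)
    (h : r ^ 2 ≤ (angle x y) ^ 2 + (Real.log (‖y‖ / ‖x‖)) ^ 2) : y ∈ CompC x r := by
  right
  rw [qh_eq hx hy]
  exact (Real.le_sqrt hr0 (by positivity)).2 h

lemma CompC_sq (hx : x ≠ 0) {y : E} (hy : y ≠ 0) (hr0 : 0 ≤ r) (hmem : y ∈ CompC x r) :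
    r ^ 2 ≤ (angle x y) ^ 2 + (Real.log (‖y‖ / ‖x‖)) ^ 2 := by
  rcases hmem with h | h
  · exact absurd h hy
  · rw [qh_eq hx hy] at h
    exact (Real.le_sqrt hr0 (by positivity)).1 h

lemma Rest_sub_CompC (hx : x ≠ 0) (hr0 : 0 ≤ r) {p : E} (hp : p ≠ 0)
    (hmem : p ∈ Rest x r) : p ∈ CompC x r := by
  apply mem_CompC_of_sq hx hp hr0
  rcases hmem with h | h
  · have hθ : 0 ≤ angle x p := angle_nonneg x p
    nlinarith [sq_nonneg (Real.log (‖p‖ / ‖x‖))]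
  · rcases le_or_gt r (angle x p) with hθ | hθ
    · have hθ0 : 0 ≤ angle x p := angle_nonneg x p
      nlinarith [sq_nonneg (Real.log (‖p‖ / ‖x‖))]
    · have hθ0 : 0 ≤ angle x p := angle_nonneg x p
      have hdd : 0 ≤ r ^ 2 - (angle x p) ^ 2 := by nlinarith
      have hsq : dd r (angle x p) ^ 2 = r ^ 2 - (angle x p) ^ 2 := Real.sq_sqrt hdd
      have hdd0 : 0 ≤ dd r (angle x p) := Real.sqrt_nonneg _
      nlinarith [h]

/-- The outer condition. -/
def OuterP (x : E) (r : ℝ) (y : E) : Prop :=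
  angle x y < r ∧ dd r (angle x y) ≤ Real.log (‖y‖ / ‖x‖)

lemma mem_Rest_of_CompC (hx : x ≠ 0) {y : E} (hy : y ≠ 0) (hr0 : 0 ≤ r)
    (hmem : y ∈ CompC x r) (hno : ¬ OuterP x r y) : y ∈ Rest x r := by
  by_cases hθ : r ≤ angle x y
  · exact Or.inl hθ
  push_neg at hθ
  right
  have hsq := CompC_sq hx hy hr0 hmem
  have hθ0 : 0 ≤ angle x y := angle_nonneg x y
  have hdd : 0 ≤ r ^ 2 - (angle x y) ^ 2 := by nlinarith
  have habs : dd r (angle x y) ≤ |Real.log (‖y‖ / ‖x‖)| := by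
    rw [← Real.sqrt_sq_eq_abs]
    exact Real.sqrt_le_sqrt (by nlinarith)
  have hslt : Real.log (‖y‖ / ‖x‖) < dd r (angle x y) := by
    by_contra hc
    push_neg at hc
    exact hno ⟨hθ, hc⟩
  rcases le_or_gt 0 (Real.log (‖y‖ / ‖x‖)) with hs | hs
  · rw [abs_of_nonneg hs] at habs
    linarith
  · rw [abs_of_neg hs] at habs
    linarith

/-- the inner/left axis half-line -/
def Am (x : E) (r : ℝ) : Set E := {p | ∃ t, t ≤ Real.exp (-r) ∧ p = t • x}

/-- the outer/right axis half-line -/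
def Ap (x : E) (r : ℝ) : Set E := {p | ∃ t, Real.exp r ≤ t ∧ p = t • x}

/-- the outward radial ray through `y` -/
noncomputable def Oray (x : E) (r : ℝ) (y : E) : Set E :=
  {p | ∃ t, ‖x‖ * Real.exp (dd r (angle x y)) ≤ t ∧ p = (t / ‖y‖) • y}

/-- the horizontal leftward ray through `y` -/
noncomputable def hray (x : E) (r : ℝ) (y : E) : Set E :=
  {p | ∃ a, a ≤ sSup (Ssl x r y) ∧ p = a • xh x + wc x y}

lemma wc_zero_of_zero (x : E) : wc x 0 = 0 := by
  simp [wc, uc]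

lemma ne_zero_of_wc (x : E) {y : E} (hw : wc x y ≠ 0) : y ≠ 0 := by
  intro h
  rw [h, wc_zero_of_zero] at hw
  exact hw rfl

lemma Am_subset (hx : x ≠ 0) (hr0 : 0 < r) (hrpi : r < π) : Am x r ⊆ CompC x r := by
  rintro p ⟨t, ht, rfl⟩
  rcases lt_trichotomy t 0 with htn | rfl | htp
  · have hp : t • x ≠ 0 := smul_ne_zero (ne_of_lt htn) hx
    apply mem_CompC_of_sq hx hp hr0.le
    have hang : angle x (t • x) = π := by
      rw [angle_smul_right_of_neg x x htn, angle_neg_right, angle_self hx, sub_zero]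
    rw [hang]
    nlinarith [sq_nonneg (Real.log (‖t • x‖ / ‖x‖)), Real.pi_pos]
  · exact Or.inl (by rw [zero_smul])
  · have hp : t • x ≠ 0 := smul_ne_zero (ne_of_gt htp) hx
    apply mem_CompC_of_sq hx hp hr0.le
    have hang : angle x (t • x) = 0 := by
      rw [angle_smul_right_of_pos x x htp, angle_self hx]
    have hnorm : ‖t • x‖ / ‖x‖ = t := by
      rw [norm_smul, Real.norm_eq_abs, abs_of_pos htp, mul_div_assoc,
        div_self (norm_ne_zero_iff.2 hx), mul_one]
    have hlog : Real.log t ≤ -r := by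
      calc Real.log t ≤ Real.log (Real.exp (-r)) := Real.log_le_log htp ht
        _ = -r := Real.log_exp _
    rw [hang, hnorm]
    nlinarith
  
lemma Ap_subset (hx : x ≠ 0) (hr0 : 0 < r) : Ap x r ⊆ CompC x r := by
  rintro p ⟨t, ht, rfl⟩
  have htp : 0 < t := lt_of_lt_of_le (Real.exp_pos r) ht
  have hp : t • x ≠ 0 := smul_ne_zero (ne_of_gt htp) hx
  apply mem_CompC_of_sq hx hp hr0.le
  have hang : angle x (t • x) = 0 := by
    rw [angle_smul_right_of_pos x x htp, angle_self hx]
  have hnorm : ‖t • x‖ / ‖x‖ = t := by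
    rw [norm_smul, Real.norm_eq_abs, abs_of_pos htp, mul_div_assoc,
      div_self (norm_ne_zero_iff.2 hx), mul_one]
  have hlog : r ≤ Real.log t := by
    calc r = Real.log (Real.exp r) := (Real.log_exp _).symm
      _ ≤ Real.log t := Real.log_le_log (Real.exp_pos r) ht
  rw [hang, hnorm]
  nlinarith

lemma Am_halfline (hx : x ≠ 0) (r : ℝ) : IsHalfLine (Am x r) := by
  refine ⟨Real.exp (-r) • x, -x, neg_ne_zero.2 hx, Or.inr ?_⟩
  ext p
  constructor
  · rintro ⟨t, ht, rfl⟩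
    exact ⟨Real.exp (-r) - t, by linarith, by module⟩
  · rintro ⟨s, hs, rfl⟩
    exact ⟨Real.exp (-r) - s, by linarith, by module⟩

lemma Ap_halfline (hx : x ≠ 0) (r : ℝ) : IsHalfLine (Ap x r) := by
  refine ⟨Real.exp r • x, x, hx, Or.inr ?_⟩
  ext p
  constructor
  · rintro ⟨t, ht, rfl⟩
    exact ⟨t - Real.exp r, by linarith, by module⟩
  · rintro ⟨s, hs, rfl⟩
    exact ⟨Real.exp r + s, by linarith, by module⟩

lemma Am_stable (hx : x ≠ 0) (r : ℝ) {p : E} (hp : p ∈ Am x r) :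
    wc x p = 0 ∧ uc x p ≤ ‖x‖ * Real.exp (-r) := by
  obtain ⟨t, ht, rfl⟩ := hp
  refine ⟨wc_smul_x hx t, ?_⟩
  rw [uc_smul, uc_x hx]
  have hm : (0:ℝ) < ‖x‖ := norm_pos_iff.2 hx
  calc t * ‖x‖ ≤ Real.exp (-r) * ‖x‖ := by nlinarith
    _ = ‖x‖ * Real.exp (-r) := by ring

lemma Ap_stable (hx : x ≠ 0) (hr0 : 0 < r) {p : E} (hp : p ∈ Ap x r) :
    wc x p = 0 ∧ ¬ (uc x p ≤ ‖x‖ * Real.exp (-r)) := by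
  obtain ⟨t, ht, rfl⟩ := hp
  refine ⟨wc_smul_x hx t, ?_⟩
  rw [uc_smul, uc_x hx]
  push_neg
  have hm : (0:ℝ) < ‖x‖ := norm_pos_iff.2 hx
  have hexp : Real.exp (-r) < Real.exp r := Real.exp_lt_exp.2 (by linarith)
  have h1 : Real.exp (-r) < t := lt_of_lt_of_le hexp ht
  calc ‖x‖ * Real.exp (-r) = Real.exp (-r) * ‖x‖ := by ring
    _ < t * ‖x‖ := by nlinarith

lemma axis_mem_Am (hx : x ≠ 0) {y : E} (hw : wc x y = 0)
    (hu : uc x y ≤ ‖x‖ * Real.exp (-r)) : y ∈ Am x r := by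
  have hm : (0:ℝ) < ‖x‖ := norm_pos_iff.2 hx
  exact ⟨uc x y / ‖x‖, by rw [div_le_iff₀ hm]; calc uc x y ≤ ‖x‖ * Real.exp (-r) := hu
    _ = Real.exp (-r) * ‖x‖ := by ring, axis_eq hx hw⟩

lemma axis_mem_Ap (hx : x ≠ 0) (hr0 : 0 < r) {y : E} (hy : y ∈ CompC x r)
    (hw : wc x y = 0) (hu : ¬ (uc x y ≤ ‖x‖ * Real.exp (-r))) : y ∈ Ap x r := by
  push_neg at hu
  have hm : (0:ℝ) < ‖x‖ := norm_pos_iff.2 hx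
  set t : ℝ := uc x y / ‖x‖ with htdef
  have hyt : y = t • x := axis_eq hx hw
  have hupos : 0 < uc x y := lt_trans (by positivity) hu
  have htpos : 0 < t := div_pos hupos hm
  have htgt : Real.exp (-r) < t := by
    rw [htdef, lt_div_iff₀ hm]
    calc Real.exp (-r) * ‖x‖ = ‖x‖ * Real.exp (-r) := by ring
      _ < uc x y := hu
  have hyne : y ≠ 0 := by
    rw [hyt]
    exact smul_ne_zero (ne_of_gt htpos) hx
  have hang : angle x y = 0 := by
    rw [hyt, angle_smul_right_of_pos x x htpos, angle_self hx]
  have hnorm : ‖y‖ / ‖x‖ = t := by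
    rw [hyt, norm_smul, Real.norm_eq_abs, abs_of_pos htpos, mul_div_assoc,
      div_self (norm_ne_zero_iff.2 hx), mul_one]
  have hsq := CompC_sq hx hyne hr0.le hy
  rw [hang, hnorm] at hsq
  have hltr : -r < Real.log t := by
    calc -r = Real.log (Real.exp (-r)) := (Real.log_exp _).symm
      _ < Real.log t := by
        apply Real.log_lt_log (Real.exp_pos _) htgt
  have hge : r ≤ Real.log t := by
    rcases le_or_gt r (Real.log t) with h | h
    · exact h
    · nlinarith
  refine ⟨t, ?_, hyt⟩
  calc Real.exp r ≤ Real.exp (Real.log t) := Real.exp_le_exp.2 hge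
    _ = t := Real.exp_log htpos

lemma Oray_mem (hx : x ≠ 0) {y : E} (hy : y ≠ 0) (hOut : OuterP x r y) :
    y ∈ Oray x r y := by
  have hm : (0:ℝ) < ‖x‖ := norm_pos_iff.2 hx
  have hρ : (0:ℝ) < ‖y‖ := norm_pos_iff.2 hy
  refine ⟨‖y‖, ?_, by rw [div_self (ne_of_gt hρ), one_smul]⟩
  have h1 : Real.exp (dd r (angle x y)) ≤ ‖y‖ / ‖x‖ := by
    calc Real.exp (dd r (angle x y)) ≤ Real.exp (Real.log (‖y‖ / ‖x‖)) :=
          Real.exp_le_exp.2 hOut.2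
      _ = ‖y‖ / ‖x‖ := Real.exp_log (by positivity)
  calc ‖x‖ * Real.exp (dd r (angle x y)) ≤ ‖x‖ * (‖y‖ / ‖x‖) := by nlinarith
    _ = ‖y‖ := by field_simp

lemma Oray_subset (hx : x ≠ 0) (hr0 : 0 < r) {y : E} (hy : y ≠ 0) (hOut : OuterP x r y) :
    Oray x r y ⊆ CompC x r := by
  rintro p ⟨t, ht, rfl⟩
  have hm : (0:ℝ) < ‖x‖ := norm_pos_iff.2 hx
  have hρ : (0:ℝ) < ‖y‖ := norm_pos_iff.2 hy
  have htpos : 0 < t := lt_of_lt_of_le (by positivity) ht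
  have hcpos : 0 < t / ‖y‖ := div_pos htpos hρ
  have hp : (t / ‖y‖) • y ≠ 0 := smul_ne_zero (ne_of_gt hcpos) hy
  apply mem_CompC_of_sq hx hp hr0.le
  have hang : angle x ((t / ‖y‖) • y) = angle x y := angle_smul_right_of_pos x y hcpos
  have hnorm : ‖(t / ‖y‖) • y‖ = t := by
    rw [norm_smul, Real.norm_eq_abs, abs_of_pos hcpos]
    field_simp
  have hlog : dd r (angle x y) ≤ Real.log (t / ‖x‖) := by
    calc dd r (angle x y) = Real.log (Real.exp (dd r (angle x y))) := (Real.log_exp _).symm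
      _ ≤ Real.log (t / ‖x‖) := by
          apply Real.log_le_log (Real.exp_pos _)
          rw [le_div_iff₀ hm]
          calc Real.exp (dd r (angle x y)) * ‖x‖ = ‖x‖ * Real.exp (dd r (angle x y)) := by
                ring
            _ ≤ t := ht
  have hθ0 : 0 ≤ angle x y := angle_nonneg x y
  have hθr : angle x y < r := hOut.1
  have hddsq : dd r (angle x y) ^ 2 = r ^ 2 - (angle x y) ^ 2 :=
    Real.sq_sqrt (by nlinarith)
  have hdd0 : 0 ≤ dd r (angle x y) := Real.sqrt_nonneg _
  rw [hang, hnorm]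
  nlinarith

lemma Oray_stable (hx : x ≠ 0) (hr0 : 0 < r) {y : E} (hw : wc x y ≠ 0) (hOut : OuterP x r y)
    {p : E} (hp : p ∈ Oray x r y) :
    wc x p ≠ 0 ∧ OuterP x r p ∧ Oray x r p = Oray x r y := by
  obtain ⟨t, ht, rfl⟩ := hp
  have hy : y ≠ 0 := ne_zero_of_wc x hw
  have hm : (0:ℝ) < ‖x‖ := norm_pos_iff.2 hx
  have hρ : (0:ℝ) < ‖y‖ := norm_pos_iff.2 hy
  have htpos : 0 < t := lt_of_lt_of_le (by positivity) ht
  have hcpos : 0 < t / ‖y‖ := div_pos htpos hρ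
  have hang : angle x ((t / ‖y‖) • y) = angle x y := angle_smul_right_of_pos x y hcpos
  have hnorm : ‖(t / ‖y‖) • y‖ = t := by
    rw [norm_smul, Real.norm_eq_abs, abs_of_pos hcpos]
    field_simp
  have hwp : wc x ((t / ‖y‖) • y) = (t / ‖y‖) • wc x y := wc_smul x _ y
  have hwp0 : wc x ((t / ‖y‖) • y) ≠ 0 := by
    rw [hwp]
    exact smul_ne_zero (ne_of_gt hcpos) hw
  have hlogt : dd r (angle x y) ≤ Real.log (t / ‖x‖) := by
    calc dd r (angle x y) = Real.log (Real.exp (dd r (angle x y))) := (Real.log_exp _).symm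
      _ ≤ Real.log (t / ‖x‖) := by
          apply Real.log_le_log (Real.exp_pos _)
          rw [le_div_iff₀ hm]
          calc Real.exp (dd r (angle x y)) * ‖x‖ = ‖x‖ * Real.exp (dd r (angle x y)) := by
                ring
            _ ≤ t := ht
  have hOutp : OuterP x r ((t / ‖y‖) • y) := by
    constructor
    · rw [hang]; exact hOut.1
    · rw [hang, hnorm]; exact hlogt
  refine ⟨hwp0, hOutp, ?_⟩
  ext q
  simp only [Oray, Set.mem_setOf_eq, hang, hnorm]
  constructor
  · rintro ⟨t', ht', rfl⟩
    exact ⟨t', ht', by rw [smul_smul]; congr 1; field_simp⟩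
  · rintro ⟨t', ht', rfl⟩
    exact ⟨t', ht', by rw [smul_smul]; congr 1; field_simp⟩

lemma Oray_halfline (hx : x ≠ 0) {y : E} (hy : y ≠ 0) : IsHalfLine (Oray x r y) := by
  have hρ : (0:ℝ) < ‖y‖ := norm_pos_iff.2 hy
  set c : ℝ := ‖x‖ * Real.exp (dd r (angle x y)) with hcdef
  refine ⟨(c / ‖y‖) • y, ‖y‖⁻¹ • y, smul_ne_zero (inv_ne_zero (ne_of_gt hρ)) hy, Or.inr ?_⟩
  ext p
  constructor
  · rintro ⟨t, ht, rfl⟩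
    refine ⟨t - c, by linarith, ?_⟩
    rw [smul_smul]
    rw [div_eq_mul_inv, div_eq_mul_inv, ← add_smul]
    congr 1
    ring
  · rintro ⟨s, hs, rfl⟩
    refine ⟨c + s, by linarith, ?_⟩
    rw [smul_smul]
    rw [div_eq_mul_inv, div_eq_mul_inv, ← add_smul]
    congr 1
    ring

lemma Rest_not_Outer (hx : x ≠ 0) (hr0 : 0 < r) {p : E} (hp : p ∈ Rest x r) :
    ¬ OuterP x r p := by
  rintro ⟨h1, h2⟩
  have hθ0 : 0 ≤ angle x p := angle_nonneg x p
  have hddpos : 0 < dd r (angle x p) := Real.sqrt_pos.2 (by nlinarith)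
  rcases hp with h3 | h3
  · exact absurd h1 (not_lt.2 h3)
  · linarith

lemma hray_mem (hx : x ≠ 0) {y : E} (hw : wc x y ≠ 0) (hr0 : 0 < r) (hrpi : r < π)
    (hy : y ∈ Rest x r) : y ∈ hray x r y := by
  refine ⟨uc x y, ?_, (decomp x y).symm⟩
  apply le_csSup (Ssl_bddAbove hx hw hr0 hrpi)
  simp only [Ssl, Set.mem_setOf_eq, decomp]
  exact hy

lemma hray_subset_Rest (hx : x ≠ 0) {y : E} (hw : wc x y ≠ 0) (hr0 : 0 < r) (hrpi : r < π)
    (hH : AntitoneOn (fun t => -Real.log (Real.sin t) + Real.sqrt (r ^ 2 - t ^ 2))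
      (Set.Ioo 0 r))
    (hy : y ∈ Rest x r) : hray x r y ⊆ Rest x r := by
  rintro p ⟨a, ha, rfl⟩
  have : a ∈ Ssl x r y := by
    rw [Ssl_eq_Iic hx hw hr0 hrpi hH hy]
    exact ha
  exact this

lemma hray_ne_zero (hx : x ≠ 0) {y : E} (hw : wc x y ≠ 0) {p : E} (hp : p ∈ hray x r y) :
    p ≠ 0 ∧ wc x p = wc x y := by
  obtain ⟨a, ha, rfl⟩ := hp
  have hwc := wc_comb hx a y
  refine ⟨?_, hwc⟩
  intro h0
  rw [h0, wc_zero_of_zero] at hwc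
  exact hw hwc.symm

lemma hray_subset (hx : x ≠ 0) {y : E} (hw : wc x y ≠ 0) (hr0 : 0 < r) (hrpi : r < π)
    (hH : AntitoneOn (fun t => -Real.log (Real.sin t) + Real.sqrt (r ^ 2 - t ^ 2))
      (Set.Ioo 0 r))
    (hy : y ∈ Rest x r) : hray x r y ⊆ CompC x r := by
  intro p hp
  exact Rest_sub_CompC hx hr0.le (hray_ne_zero hx hw hp).1
    (hray_subset_Rest hx hw hr0 hrpi hH hy hp)

lemma hray_stable (hx : x ≠ 0) {y : E} (hw : wc x y ≠ 0) (hr0 : 0 < r) (hrpi : r < π)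
    (hH : AntitoneOn (fun t => -Real.log (Real.sin t) + Real.sqrt (r ^ 2 - t ^ 2))
      (Set.Ioo 0 r))
    (hy : y ∈ Rest x r) {p : E} (hp : p ∈ hray x r y) :
    wc x p ≠ 0 ∧ ¬ OuterP x r p ∧ p ∈ Rest x r ∧ hray x r p = hray x r y := by
  have hpRest := hray_subset_Rest hx hw hr0 hrpi hH hy hp
  obtain ⟨hpne, hwc⟩ := hray_ne_zero hx hw hp
  have hwp : wc x p ≠ 0 := by rw [hwc]; exact hw
  refine ⟨hwp, Rest_not_Outer hx hr0 hpRest, hpRest, ?_⟩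
  have hSsl : Ssl x r p = Ssl x r y := by
    simp only [Ssl, hwc]
  ext q
  simp only [hray, Set.mem_setOf_eq, hSsl, hwc]

lemma hray_halfline (hx : x ≠ 0) (r : ℝ) (y : E) : IsHalfLine (hray x r y) := by
  have hxh : xh x ≠ 0 := by
    intro h
    have := norm_xh hx
    rw [h, norm_zero] at this
    norm_num at this
  refine ⟨sSup (Ssl x r y) • xh x + wc x y, -xh x, neg_ne_zero.2 hxh, Or.inr ?_⟩
  ext p
  constructor
  · rintro ⟨a, ha, rfl⟩
    exact ⟨sSup (Ssl x r y) - a, by linarith, by module⟩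
  · rintro ⟨s, hs, rfl⟩
    exact ⟨sSup (Ssl x r y) - s, by linarith, by module⟩

open Classical in
/-- assignment of a covering half-line to each point of the complement -/
noncomputable def Lmap (x : E) (r : ℝ) (y : E) : Set E :=
  if wc x y = 0 then
    if uc x y ≤ ‖x‖ * Real.exp (-r) then Am x r else Ap x r
  else
    if OuterP x r y then Oray x r y else hray x r y

lemma Lmap_spec (hx : x ≠ 0) (hr0 : 0 < r) (hrpi : r < π)
    (hH : AntitoneOn (fun t => -Real.log (Real.sin t) + Real.sqrt (r ^ 2 - t ^ 2))
      (Set.Ioo 0 r))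
    {y : E} (hy : y ∈ CompC x r) :
    y ∈ Lmap x r y ∧ Lmap x r y ⊆ CompC x r ∧ IsHalfLine (Lmap x r y)
      ∧ ∀ p ∈ Lmap x r y, Lmap x r p = Lmap x r y := by
  by_cases hw : wc x y = 0
  · by_cases hu : uc x y ≤ ‖x‖ * Real.exp (-r)
    · have hL : Lmap x r y = Am x r := by rw [Lmap, if_pos hw, if_pos hu]
      rw [hL]
      refine ⟨axis_mem_Am hx hw hu, Am_subset hx hr0 hrpi, Am_halfline hx r, ?_⟩
      intro p hp
      obtain ⟨hwp, hup⟩ := Am_stable hx r hp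
      rw [Lmap, if_pos hwp, if_pos hup]
    · have hL : Lmap x r y = Ap x r := by rw [Lmap, if_pos hw, if_neg hu]
      rw [hL]
      refine ⟨axis_mem_Ap hx hr0 hy hw hu, Ap_subset hx hr0, Ap_halfline hx r, ?_⟩
      intro p hp
      obtain ⟨hwp, hup⟩ := Ap_stable hx hr0 hp
      rw [Lmap, if_pos hwp, if_neg hup]
  · have hyne : y ≠ 0 := ne_zero_of_wc x hw
    by_cases hOut : OuterP x r y
    · have hL : Lmap x r y = Oray x r y := by rw [Lmap, if_neg hw, if_pos hOut]
      rw [hL]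
      refine ⟨Oray_mem hx hyne hOut, Oray_subset hx hr0 hyne hOut, Oray_halfline hx hyne, ?_⟩
      intro p hp
      obtain ⟨hwp, hOutp, heq⟩ := Oray_stable hx hr0 hw hOut hp
      rw [Lmap, if_neg hwp, if_pos hOutp, heq]
    · have hyRest : y ∈ Rest x r := mem_Rest_of_CompC hx hyne hr0.le hy hOut
      have hL : Lmap x r y = hray x r y := by rw [Lmap, if_neg hw, if_neg hOut]
      rw [hL]
      refine ⟨hray_mem hx hw hr0 hrpi hyRest,
        hray_subset hx hw hr0 hrpi hH hyRest, hray_halfline hx r y, ?_⟩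
      intro p hp
      obtain ⟨hwp, hOutp, hpRest, heq⟩ := hray_stable hx hw hr0 hrpi hH hyRest hp
      rw [Lmap, if_neg hwp, if_neg hOutp, heq]

/-- a foliation of the complement by half-lines gives close-to-convexity -/
lemma closeToConvex_of_foliation (G : Set E) (L : E → Set E)
    (h : ∀ y ∈ Gᶜ, y ∈ L y ∧ L y ⊆ Gᶜ ∧ IsHalfLine (L y) ∧ ∀ p ∈ L y, L p = L y) :
    CloseToConvex G := by
  refine ⟨L '' Gᶜ, ?_, ?_, ?_⟩
  · rintro S ⟨y, hy, rfl⟩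
    exact (h y hy).2.2.1
  · rintro S ⟨y, hy, rfl⟩ T ⟨y', hy', rfl⟩ hne
    rw [Set.disjoint_left]
    intro p hpS hpT
    have h1 : L p = L y := (h y hy).2.2.2 p hpS
    have h2 : L p = L y' := (h y' hy').2.2.2 p hpT
    exact hne (h1 ▸ h2)
  · apply Set.eq_of_subset_of_subset
    · rintro p ⟨S, ⟨y, hy, rfl⟩, hpS⟩
      exact (h y hy).2.1 hpS
    · intro y hy
      exact ⟨L y, ⟨y, hy, rfl⟩, (h y hy).1⟩

end KlenGeom



/-- Klén, Corollary 3.5: in the punctured space `G = ℝⁿ \\ {0}`, `n ≥ 2`, for `x ∈ G` and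
`0 < r ≤ λ`, where `λ ∈ (2,π)` solves `cos √(z²-1) + √(z²-1) sin √(z²-1) = 0`,
the quasihyperbolic ball `B_k(x,r)` is close-to-convex. -/
theorem kBall_closeToConvex_of_puncturedSpace {n : ℕ} (hn : 2 ≤ n)
    (lam : ℝ) (hlam : lam ∈ Set.Ioo 2 Real.pi)
    (hlam0 : Real.cos (Real.sqrt (lam ^ 2 - 1))
      + Real.sqrt (lam ^ 2 - 1) * Real.sin (Real.sqrt (lam ^ 2 - 1)) = 0)
    (x : EuclideanSpace ℝ (Fin n)) (hx : x ≠ 0)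
    (r : ℝ) (hr0 : 0 < r) (hr : r ≤ lam) :
    CloseToConvex (kBall x r) := by
  have hrpi : r < Real.pi := lt_of_le_of_lt hr hlam.2
  have hH : AntitoneOn (fun t => -Real.log (Real.sin t) + Real.sqrt (r ^ 2 - t ^ 2))
      (Set.Ioo 0 r) := KlenCore.H_antitone lam r hlam hlam0 hr0 hr
  apply KlenGeom.closeToConvex_of_foliation (kBall x r) (KlenGeom.Lmap x r)
  intro y hy
  rw [KlenGeom.compl_kBall] at *
  exact KlenGeom.Lmap_spec hx hr0 hrpi hH hy
end

section
/- Let n ≥ 2, let G = ℝⁿ \ {0}, let x ∈ G and let r > π. Then the quasihyperbolic ball B_k(x,r) is not close-to-convex; indeed ℝⁿ \ closure(B_k(x,r)) has a bounded component. -/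
lemma mem_kBall_of_norm_eq {E : Type*} [NormedAddCommGroup E] [InnerProductSpace ℝ E]
    {x : E} (hx : x ≠ 0) {r : ℝ} (hr : Real.pi < r) {y : E} (hy : ‖y‖ = ‖x‖) :
    y ∈ kBall x r := by
  have hx0 : 0 < ‖x‖ := norm_pos_iff.mpr hx
  have hy0 : y ≠ 0 := by
    intro h; rw [h, norm_zero] at hy; exact hx0.ne' hy.symm
  refine ⟨hy0, ?_⟩
  have hlog : Real.log (‖x‖ / ‖y‖) = 0 := by rw [hy, div_self hx0.ne', Real.log_one]
  rw [qhDist, hlog]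
  have : (0:ℝ)^2 = 0 := by norm_num
  rw [this, add_zero, Real.sqrt_sq (InnerProductGeometry.angle_nonneg x y)]
  exact lt_of_le_of_lt (InnerProductGeometry.angle_le_pi x y) hr


/-- Klén, Remark 3.6: in the punctured space `G = ℝⁿ \ {0}`, `n ≥ 2`, for `x ∈ G` and
`r > π` the quasihyperbolic ball `B_k(x,r)` is not close-to-convex; indeed the complement
of its closure has a bounded (connected) component. -/
theorem kBall_not_closeToConvex_of_pi_lt {n : ℕ} (hn : 2 ≤ n)
    (x : EuclideanSpace ℝ (Fin n)) (hx : x ≠ 0)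
    (r : ℝ) (hr : Real.pi < r) :
    ¬ CloseToConvex (kBall x r)
      ∧ ∃ z ∈ (closure (kBall x r))ᶜ,
          Bornology.IsBounded (connectedComponentIn (closure (kBall x r))ᶜ z) := by
  have hx0 : 0 < ‖x‖ := norm_pos_iff.mpr hx
  constructor
  · rintro ⟨𝒞, hHL, -, hU⟩
    have h0 : (0 : EuclideanSpace ℝ (Fin n)) ∈ ⋃₀ 𝒞 := by
      rw [hU]; intro h; exact h.1 rfl
    obtain ⟨S, hS𝒞, hS0⟩ := h0
    obtain ⟨z, y, hy, hcases⟩ := hHL S hS𝒞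
    have hy0 : 0 < ‖y‖ := norm_pos_iff.mpr hy
    -- extract t₀ with 0 = z + t₀ • y, and the membership predicate
    have key : ∀ (P : ℝ → Prop), S = {x | ∃ t : ℝ, P t ∧ x = z + t • y} →
        (∀ t₀, P t₀ → ∀ t₁, t₀ ≤ t₁ → P t₁) → False := by
      intro P hSP hmono
      rw [hSP] at hS0
      obtain ⟨t₀, hPt₀, ht₀⟩ := hS0
      -- f t = ‖z + t • y‖ is continuous, f t₀ = 0, f T ≥ ‖x‖ for large T
      set f : ℝ → ℝ := fun t => ‖z + t • y‖ with hf
      have hfc : Continuous f := by fun_prop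
      have hft₀ : f t₀ = 0 := by simp [hf, ← ht₀]
      set T : ℝ := max t₀ ((‖x‖ + ‖z‖) / ‖y‖) with hT
      have hfT : ‖x‖ ≤ f T := by
        have h1 : T * ‖y‖ - ‖z‖ ≤ f T := by
          have := norm_sub_norm_le (T • y) (-z)
          simp only [norm_neg, norm_smul, sub_neg_eq_add] at this
          calc T * ‖y‖ - ‖z‖ ≤ ‖T‖ * ‖y‖ - ‖z‖ := by
                have : T ≤ ‖T‖ := le_abs_self T
                nlinarith
            _ ≤ ‖T • y + z‖ := this
            _ = f T := by rw [hf]; simp only [add_comm]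
        have h2 : ‖x‖ + ‖z‖ ≤ T * ‖y‖ := by
          have : (‖x‖ + ‖z‖) / ‖y‖ ≤ T := le_max_right _ _
          calc ‖x‖ + ‖z‖ = ((‖x‖ + ‖z‖) / ‖y‖) * ‖y‖ := by field_simp
            _ ≤ T * ‖y‖ := by nlinarith
        linarith
      have ht₀T : t₀ ≤ T := le_max_left _ _
      have := intermediate_value_Icc ht₀T hfc.continuousOn
      have hmem : ‖x‖ ∈ Set.Icc (f t₀) (f T) := ⟨by rw [hft₀]; exact hx0.le, hfT⟩
      obtain ⟨t₁, ht₁, hft₁⟩ := this hmem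
      -- the point z + t₁ • y is in S but has norm ‖x‖, hence in kBall: contradiction
      have hp : z + t₁ • y ∈ kBall x r := mem_kBall_of_norm_eq hx hr hft₁
      have hpS : z + t₁ • y ∈ ⋃₀ 𝒞 := ⟨S, hS𝒞, by rw [hSP]; exact ⟨t₁, hmono t₀ hPt₀ t₁ ht₁.1, rfl⟩⟩
      rw [hU] at hpS
      exact hpS hp
    rcases hcases with h | h
    · exact key (fun t => 0 < t) h (fun t₀ h t₁ hle => lt_of_lt_of_le h hle)
    · exact key (fun t => 0 ≤ t) h (fun t₀ h t₁ hle => le_trans h hle)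
  · refine ⟨0, ?_, ?_⟩
    · -- 0 ∉ closure (kBall x r)
      have hsub : kBall x r ⊆ {y : EuclideanSpace ℝ (Fin n) | ‖x‖ * Real.exp (-r) ≤ ‖y‖} := by
        rintro y ⟨hy0, hyd⟩
        have hy0' : 0 < ‖y‖ := norm_pos_iff.mpr hy0
        have hlog : Real.log (‖x‖ / ‖y‖) < r := by
          have h1 : |Real.log (‖x‖ / ‖y‖)| ≤ qhDist x y := by
            rw [qhDist, ← Real.sqrt_sq_eq_abs]
            exact Real.sqrt_le_sqrt (by nlinarith [sq_nonneg (InnerProductGeometry.angle x y)])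
          calc Real.log (‖x‖ / ‖y‖) ≤ |Real.log (‖x‖ / ‖y‖)| := le_abs_self _
            _ ≤ qhDist x y := h1
            _ < r := hyd
        have hdiv : ‖x‖ / ‖y‖ < Real.exp r := by
          have := Real.exp_log (div_pos hx0 hy0')
          calc ‖x‖ / ‖y‖ = Real.exp (Real.log (‖x‖ / ‖y‖)) := this.symm
            _ < Real.exp r := Real.exp_lt_exp.mpr hlog
        have : ‖x‖ < Real.exp r * ‖y‖ := by
          rw [div_lt_iff₀ hy0'] at hdiv; linarith [hdiv]
        have hepos := Real.exp_pos r
        have : ‖x‖ * Real.exp (-r) ≤ ‖y‖ := by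
          rw [Real.exp_neg]
          rw [mul_inv_le_iff₀ hepos]
          nlinarith
        exact this
      intro hcl
      have : (0 : EuclideanSpace ℝ (Fin n)) ∈ {y : EuclideanSpace ℝ (Fin n) | ‖x‖ * Real.exp (-r) ≤ ‖y‖} := by
        have hclosed : IsClosed {y : EuclideanSpace ℝ (Fin n) | ‖x‖ * Real.exp (-r) ≤ ‖y‖} :=
          isClosed_le continuous_const continuous_norm
        exact (closure_minimal hsub hclosed) hcl
      simp only [Set.mem_setOf_eq, norm_zero] at this
      nlinarith [Real.exp_pos (-r), this]
    · -- boundedness of the component of 0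
      set C := (closure (kBall x r))ᶜ with hC
      set u := Metric.ball (0 : EuclideanSpace ℝ (Fin n)) ‖x‖ with hu
      set v := {y : EuclideanSpace ℝ (Fin n) | ‖x‖ < ‖y‖} with hv
      have hCuv : C ⊆ u ∪ v := by
        intro p hp
        rcases lt_trichotomy ‖p‖ ‖x‖ with h | h | h
        · left; simpa [hu, Metric.mem_ball, dist_zero_right] using h
        · exfalso
          exact hp (subset_closure (mem_kBall_of_norm_eq hx hr h))
        · right; exact h
      have huv : Disjoint u v := by
        rw [Set.disjoint_left]
        intro p hpu hpv
        rw [hu, Metric.mem_ball, dist_zero_right] at hpu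
        exact absurd hpv (not_lt.mpr hpu.le)
      have h0C : (0 : EuclideanSpace ℝ (Fin n)) ∈ C := by
        -- 0 ∈ C : same as above
        intro hcl
        have hsub : kBall x r ⊆ {y : EuclideanSpace ℝ (Fin n) | ‖x‖ * Real.exp (-r) ≤ ‖y‖} := by
          rintro y ⟨hy0, hyd⟩
          have hy0' : 0 < ‖y‖ := norm_pos_iff.mpr hy0
          have hlog : Real.log (‖x‖ / ‖y‖) < r := by
            have h1 : |Real.log (‖x‖ / ‖y‖)| ≤ qhDist x y := by
              rw [qhDist, ← Real.sqrt_sq_eq_abs]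
              exact Real.sqrt_le_sqrt (by nlinarith [sq_nonneg (InnerProductGeometry.angle x y)])
            calc Real.log (‖x‖ / ‖y‖) ≤ |Real.log (‖x‖ / ‖y‖)| := le_abs_self _
              _ ≤ qhDist x y := h1
              _ < r := hyd
          have hdiv : ‖x‖ / ‖y‖ < Real.exp r := by
            have := Real.exp_log (div_pos hx0 hy0')
            calc ‖x‖ / ‖y‖ = Real.exp (Real.log (‖x‖ / ‖y‖)) := this.symm
              _ < Real.exp r := Real.exp_lt_exp.mpr hlog
          have : ‖x‖ < Real.exp r * ‖y‖ := by
            rw [div_lt_iff₀ hy0'] at hdiv; linarith [hdiv]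
          have hepos := Real.exp_pos r
          rw [Set.mem_setOf_eq, Real.exp_neg, mul_inv_le_iff₀ hepos]
          nlinarith
        have hclosed : IsClosed {y : EuclideanSpace ℝ (Fin n) | ‖x‖ * Real.exp (-r) ≤ ‖y‖} :=
          isClosed_le continuous_const continuous_norm
        have := (closure_minimal hsub hclosed) hcl
        simp only [Set.mem_setOf_eq, norm_zero] at this
        nlinarith [Real.exp_pos (-r), this]
      have h0u : (0 : EuclideanSpace ℝ (Fin n)) ∈ u := by
        simpa [hu, Metric.mem_ball, dist_zero_right] using hx0
      have hK : connectedComponentIn C 0 ⊆ u :=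
        IsPreconnected.subset_left_of_subset_union Metric.isOpen_ball
          (isOpen_lt continuous_const continuous_norm) huv
          ((connectedComponentIn_subset C 0).trans hCuv)
          ⟨0, mem_connectedComponentIn h0C, h0u⟩
          isPreconnected_connectedComponentIn
      exact Metric.isBounded_ball.subset hK
end
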